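/- arXiv:1812.11472 — 2 statements merged into one kernel-verified Lean document; each statement's English description precedes it below -/
import Mathlib

section
/- Let M be a matroid of rank k on a finite set S and suppose the matroid polytope Δ_M has dimension |S| − q, so that (by the decomposition theorem) there are a partition (J_1,…,J_q) of S and matroids M_i of rank k_i on J_i with k_1+…+k_q = k, Δ_M = Δ_{M_1} × … × Δ_{M_q} inside ℝ^{J_1} × … × ℝ^{J_q} = ℝ^S, and dim Δ_{M_i} = |J_i| − 1 for each i. If Δ_M is a simple polytope, then for each i = 1,…,q one has Δ_{M_i} = Δ_{J_i,k_i} (the full hypersimplex, i.e. the convex hull of all δ_B with B ⊆ J_i, |B| = k_i) and k_i ∈ {0, 1, |J_i|−1, |J_i|}. In particular, a simple matroid polytope is a product of simplices. -/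
open Finset Module

/-- The 0-1 indicator vector `δ_B ∈ ℝ^S` of a finite subset `B` of `S`. -/
def delta {S : Type} [DecidableEq S] (B : Finset S) : S → ℝ := fun i => if i ∈ B then 1 else 0

/-- A matroid of rank `k` on `S`, given by its collection of bases: a nonempty collection of
`k`-element subsets satisfying the exchange property. -/
def IsMatroid {S : Type} [DecidableEq S] (k : ℕ) (M : Finset (Finset S)) : Prop :=
  M.Nonempty ∧ (∀ I ∈ M, I.card = k) ∧
    ∀ I ∈ M, ∀ J ∈ M, I ≠ J → ∀ i ∈ I \ J, ∃ j ∈ J \ I, insert j (I.erase i) ∈ M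

/-- The matroid polytope: the convex hull of the indicator vectors of the members of `M`. -/
def matroidPolytope {S : Type} [DecidableEq S] (M : Finset (Finset S)) : Set (S → ℝ) :=
  convexHull ℝ (delta '' (M : Set (Finset S)))

/-- The hypersimplex `Δ_{S,k}`: the convex hull of all `δ_B` with `|B| = k`. -/
def hypersimplex (S : Type) [DecidableEq S] (k : ℕ) : Set (S → ℝ) :=
  convexHull ℝ (delta '' {B : Finset S | B.card = k})

/-- `E` is an edge (a one-dimensional face) of the polytope `P`. -/
def IsEdgeOf {S : Type} (P E : Set (S → ℝ)) : Prop :=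
  IsExposed ℝ P E ∧ Module.finrank ℝ (affineSpan ℝ E).direction = 1

/-- The dimension of a polytope: the dimension of its affine span. -/
noncomputable def polyDim {S : Type} (P : Set (S → ℝ)) : ℕ :=
  Module.finrank ℝ (affineSpan ℝ P).direction

/-- A polytope `P` of dimension `d` is simple at a vertex `v` if `v` lies on exactly `d` edges. -/
def IsSimpleAt {S : Type} (P : Set (S → ℝ)) (v : S → ℝ) : Prop :=
  {E : Set (S → ℝ) | IsEdgeOf P E ∧ v ∈ E}.ncard = polyDim P

/-- A polytope is simple if it is simple at every vertex. -/
def IsSimplePolytope {S : Type} (P : Set (S → ℝ)) : Prop :=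
  ∀ v ∈ Set.extremePoints ℝ P, IsSimpleAt P v

/-- The hypersimplex `Δ_{J,k}` on the subset `J` of `S`, viewed inside `ℝ^S`:
the convex hull of all `δ_B` with `B ⊆ J`, `|B| = k`. -/
def hypersimplexOn {S : Type} [DecidableEq S] (J : Finset S) (k : ℕ) : Set (S → ℝ) :=
  convexHull ℝ (delta '' {B : Finset S | B ⊆ J ∧ B.card = k})

namespace SimpleAux

set_option linter.unusedSectionVars false

variable {S : Type} [Fintype S] [DecidableEq S]

noncomputable def wsum (c : S → ℝ) : (S → ℝ) →ₗ[ℝ] ℝ where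
  toFun y := ∑ s, c s * y s
  map_add' x y := by simp [mul_add, Finset.sum_add_distrib]
  map_smul' r x := by simp [Finset.mul_sum, mul_left_comm]

theorem wsum_apply (c y : S → ℝ) : wsum c y = ∑ s, c s * y s := rfl

theorem wsum_delta (c : S → ℝ) (B : Finset S) : wsum c (delta B) = ∑ s ∈ B, c s := by
  rw [wsum_apply]
  rw [Finset.sum_congr rfl (g := fun s => if s ∈ B then c s else 0)
    (fun s _ => by by_cases h : s ∈ B <;> simp [delta, h])]
  simp [Finset.sum_ite_mem]

theorem delta_zero_or_one (B : Finset S) (s : S) : delta B s = 0 ∨ delta B s = 1 := by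
  by_cases h : s ∈ B <;> simp [delta, h]

theorem delta_inj {B C : Finset S} (h : delta B = delta C) : B = C := by
  ext s
  have := congrFun h s
  by_cases hB : s ∈ B <;> by_cases hC : s ∈ C <;> simp_all [delta]

theorem mem_of_zeroOne {V : Set (S → ℝ)} (hV : ∀ v ∈ V, ∀ s, v s = 0 ∨ v s = 1)
    {x : S → ℝ} (hx01 : ∀ s, x s = 0 ∨ x s = 1) (hx : x ∈ convexHull ℝ V) : x ∈ V := by
  set l := wsum (fun s => 2 * x s - 1) with hl
  have key : ∀ v : S → ℝ, (∀ s, v s = 0 ∨ v s = 1) → l v ≤ l x ∧ (l v = l x → v = x) := by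
    intro v hv
    have hterm : ∀ s : S, (2 * x s - 1) * v s ≤ (2 * x s - 1) * x s := by
      intro s
      rcases hx01 s with h1 | h1 <;> rcases hv s with h2 | h2 <;> rw [h1, h2] <;> norm_num
    constructor
    · exact Finset.sum_le_sum (fun s _ => hterm s)
    · intro hEq
      have := (Finset.sum_eq_sum_iff_of_le (fun s _ => hterm s)).1 hEq
      funext s
      have hs := this s (Finset.mem_univ s)
      rcases hx01 s with h1 | h1 <;> rcases hv s with h2 | h2 <;>
        rw [h1, h2] at hs ⊢ <;> norm_num at hs
  rw [_root_.convexHull_eq] at hx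
  obtain ⟨ι, t, w, z, hw0, hw1, hz, hxx⟩ := hx
  by_contra hxV
  have hlt : ∀ i ∈ t, 0 < w i → w i * l (z i) < w i * l x := by
    intro i hi hwi
    have h1 := (key (z i) (hV _ (hz i hi))).1
    have h2 : l (z i) ≠ l x := fun hEq => hxV (((key (z i) (hV _ (hz i hi))).2 hEq) ▸ hz i hi)
    exact mul_lt_mul_of_pos_left (lt_of_le_of_ne h1 h2) hwi
  have hle : ∀ i ∈ t, w i * l (z i) ≤ w i * l x := by
    intro i hi
    exact mul_le_mul_of_nonneg_left (key (z i) (hV _ (hz i hi))).1 (hw0 i hi)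
  obtain ⟨i0, hi0, hwi0⟩ : ∃ i ∈ t, 0 < w i := by
    by_contra h
    push_neg at h
    have : ∑ i ∈ t, w i ≤ 0 := Finset.sum_nonpos (fun i hi => h i hi)
    rw [hw1] at this; linarith
  have hsum : ∑ i ∈ t, w i * l (z i) < ∑ i ∈ t, w i * l x :=
    Finset.sum_lt_sum hle ⟨i0, hi0, hlt i0 hi0 hwi0⟩
  have hx1 : l x = ∑ i ∈ t, w i * l (z i) := by
    conv_lhs => rw [← hxx, Finset.centerMass_eq_of_sum_1 t z hw1]
    rw [map_sum]
    exact Finset.sum_congr rfl (fun i _ => by rw [map_smul, smul_eq_mul])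
  have hx2 : ∑ i ∈ t, w i * l x = l x := by
    rw [← Finset.sum_mul, hw1, one_mul]
  rw [← hx1, hx2] at hsum
  exact lt_irrefl _ hsum

theorem face_convexHull (V : Finset (S → ℝ)) (l : (S → ℝ) →ₗ[ℝ] ℝ) (m : ℝ)
    (hm : ∀ v ∈ V, l v ≤ m) :
    {x ∈ convexHull ℝ (V : Set (S → ℝ)) | m ≤ l x}
      = convexHull ℝ ((V.filter (fun v => l v = m) : Finset (S → ℝ)) : Set (S → ℝ)) := by
  have hhull_le : ∀ x ∈ convexHull ℝ (V : Set (S → ℝ)), l x ≤ m := by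
    intro x hx
    exact convexHull_min (fun v hv => hm v hv) (convex_halfSpace_le l.isLinear m) hx
  apply Set.Subset.antisymm
  · rintro x ⟨hx, hmx⟩
    rw [Finset.convexHull_eq] at hx
    obtain ⟨w, hw0, hw1, hxx⟩ := hx
    have hlx : l x = m := le_antisymm (hhull_le x (by
      rw [Finset.convexHull_eq]; exact ⟨w, hw0, hw1, hxx⟩)) hmx
    have hsupp : ∀ v ∈ V, w v ≠ 0 → l v = m := by
      intro v hv hwv
      by_contra hne
      have hvm : l v < m := lt_of_le_of_ne (hm v hv) hne
      have hwvpos : 0 < w v := lt_of_le_of_ne (hw0 v hv) (Ne.symm hwv)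
      have hlt : ∑ y ∈ V, w y * l y < ∑ y ∈ V, w y * m :=
        Finset.sum_lt_sum (fun y hy => mul_le_mul_of_nonneg_left (hm y hy) (hw0 y hy))
          ⟨v, hv, mul_lt_mul_of_pos_left hvm hwvpos⟩
      have h1 : l x = ∑ y ∈ V, w y * l y := by
        conv_lhs => rw [← hxx, Finset.centerMass_eq_of_sum_1 V id hw1]
        rw [map_sum]
        exact Finset.sum_congr rfl (fun y _ => by rw [map_smul, smul_eq_mul]; rfl)
      have h2 : ∑ y ∈ V, w y * m = m := by rw [← Finset.sum_mul, hw1, one_mul]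
      rw [h1] at hlx; rw [hlx, h2] at hlt; exact lt_irrefl _ hlt
    -- x is the centerMass over the filtered finset
    have hsub : V.filter (fun v => w v ≠ 0) ⊆ V.filter (fun v => l v = m) := by
      intro v hv
      rw [Finset.mem_filter] at hv ⊢
      exact ⟨hv.1, hsupp v hv.1 hv.2⟩
    have hxmem : x ∈ convexHull ℝ ((V.filter (fun v => l v = m) : Finset (S → ℝ)) : Set (S → ℝ)) := by
      rw [← hxx, ← Finset.centerMass_filter_ne_zero (id : (S → ℝ) → (S → ℝ))]
      apply Finset.centerMass_mem_convexHull
      · intro v hv; exact hw0 v (Finset.mem_filter.1 hv).1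
      · rw [Finset.sum_filter_ne_zero, hw1]; norm_num
      · intro v hv
        exact Finset.mem_coe.2 (hsub hv)
    exact hxmem
  · intro x hx
    constructor
    · exact convexHull_mono (by exact_mod_cast Finset.coe_subset.2 (Finset.filter_subset _ _)) hx
    · have : l x = m := by
        have hconv : Convex ℝ {y : S → ℝ | l y = m} := by
          have : {y : S → ℝ | l y = m} = {y | l y ≤ m} ∩ {y | m ≤ l y} := by
            ext y; simp [le_antisymm_iff, and_comm]
          rw [this]
          exact (convex_halfSpace_le l.isLinear m).inter (convex_halfSpace_ge l.isLinear m)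
        exact convexHull_min (fun v hv => (Finset.mem_filter.1 (Finset.mem_coe.1 hv)).2) hconv hx
      linarith

theorem exposed_eq_filter (V : Finset (S → ℝ)) (l : (S → ℝ) →ₗ[ℝ] ℝ) (m : ℝ)
    (hm : ∀ v ∈ V, l v ≤ m) {v0 : S → ℝ} (hv0 : v0 ∈ V) (hv0m : l v0 = m) :
    {x ∈ convexHull ℝ (V : Set (S → ℝ)) | ∀ y ∈ convexHull ℝ (V : Set (S → ℝ)), l y ≤ l x}
      = convexHull ℝ ((V.filter (fun v => l v = m) : Finset (S → ℝ)) : Set (S → ℝ)) := by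
  rw [← face_convexHull V l m hm]
  ext x
  constructor
  · rintro ⟨hx, hmax⟩
    refine ⟨hx, ?_⟩
    have := hmax v0 (subset_convexHull ℝ _ (Finset.mem_coe.2 hv0))
    linarith [hv0m ▸ this]
  · rintro ⟨hx, hmx⟩
    refine ⟨hx, fun y hy => ?_⟩
    have : l y ≤ m := convexHull_min (fun v hv => hm v hv) (convex_halfSpace_le l.isLinear m) hy
    linarith



-- combinatorial bound
theorem comb_bound {D C : Finset S} {a b : S} (haD : a ∉ D) (hbD : b ∉ D) (hab : a ≠ b)
    (hC : C.card = D.card + 1) :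
    2 * (C ∩ D).card + (C ∩ {a, b}).card ≤ 2 * D.card + 1 ∧
      (2 * (C ∩ D).card + (C ∩ {a, b}).card = 2 * D.card + 1 ↔
        (C = insert a D ∨ C = insert b D)) := by
  have hdisj : Disjoint D ({a, b} : Finset S) := by
    simp [Finset.disjoint_left]
    intro x hx
    constructor <;> rintro rfl <;> [exact haD hx; exact hbD hx]
  have m1le : (C ∩ D).card ≤ D.card := Finset.card_le_card (Finset.inter_subset_right)
  have hdisj2 : Disjoint (C ∩ D) (C ∩ {a, b}) :=
    hdisj.mono (Finset.inter_subset_right) (Finset.inter_subset_right)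
  have hunion : (C ∩ D) ∪ (C ∩ {a, b}) ⊆ C := by
    intro x hx; rcases Finset.mem_union.1 hx with h | h <;>
      exact (Finset.mem_inter.1 h).1
  have m12le : (C ∩ D).card + (C ∩ {a, b}).card ≤ D.card + 1 := by
    have := Finset.card_le_card hunion
    rwa [Finset.card_union_of_disjoint hdisj2, hC] at this
  constructor
  · omega
  constructor
  · intro heq
    have hm1 : (C ∩ D).card = D.card := by omega
    have hm2 : (C ∩ {a, b}).card = 1 := by omega
    have hDC : D ⊆ C := by
      have h : C ∩ D = D := Finset.eq_of_subset_of_card_le Finset.inter_subset_right (by omega)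
      rw [← h]; exact Finset.inter_subset_left
    obtain ⟨x, hx⟩ := Finset.card_eq_one.1 hm2
    have hxab : x ∈ ({a, b} : Finset S) := by
      have : x ∈ C ∩ {a, b} := hx ▸ Finset.mem_singleton_self x
      exact (Finset.mem_inter.1 this).2
    have hxC : x ∈ C := by
      have : x ∈ C ∩ {a, b} := hx ▸ Finset.mem_singleton_self x
      exact (Finset.mem_inter.1 this).1
    have hCeq : C = insert x D := by
      apply Finset.eq_of_subset_of_card_le
      · intro y hy
        by_cases hyD : y ∈ D
        · exact Finset.mem_insert_of_mem hyD
        · -- y ∈ C, y ∉ D : show y = x ; suppose not, then card C ≥ D.card + 2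
          by_contra hyx
          have hyne : y ≠ x := fun h => hyx (h ▸ Finset.mem_insert_self x D)
          have hsub : insert y (insert x D) ⊆ C := by
            intro z hz
            rcases Finset.mem_insert.1 hz with rfl | hz
            · exact hy
            rcases Finset.mem_insert.1 hz with rfl | hz
            · exact hxC
            · exact hDC hz
          have hxD : x ∉ D := by
            rcases Finset.mem_insert.1 hxab with rfl | h
            · exact haD
            · exact (Finset.mem_singleton.1 h) ▸ hbD
          have : (insert y (insert x D)).card ≤ C.card := Finset.card_le_card hsub
          rw [Finset.card_insert_of_notMem (by
              simp only [Finset.mem_insert]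
              rintro (rfl | h); exact hyne rfl; exact hyD h),
            Finset.card_insert_of_notMem hxD] at this
          omega
      · rw [Finset.card_insert_of_notMem (by
          rcases Finset.mem_insert.1 hxab with rfl | h
          · exact haD
          · exact (Finset.mem_singleton.1 h) ▸ hbD), hC]
    rcases Finset.mem_insert.1 hxab with rfl | h
    · left; exact hCeq
    · right; rw [Finset.mem_singleton.1 h] at hCeq; exact hCeq
  · rintro (rfl | rfl)
    · have h1 : insert a D ∩ D = D := by
        ext x; simp only [Finset.mem_inter, Finset.mem_insert]
        constructor
        · rintro ⟨_, h⟩; exact h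
        · intro h; exact ⟨Or.inr h, h⟩
      have h2 : insert a D ∩ {a, b} = {a} := by
        ext x
        simp only [Finset.mem_inter, Finset.mem_insert, Finset.mem_singleton]
        constructor
        · rintro ⟨h1', h2'⟩
          rcases h2' with rfl | rfl
          · rfl
          · rcases h1' with rfl | h
            · exact absurd rfl hab.symm
            · exact absurd h hbD
        · rintro rfl; exact ⟨Or.inl rfl, Or.inl rfl⟩
      rw [h1, h2, Finset.card_singleton]
    · have h1 : insert b D ∩ D = D := by
        ext x; simp only [Finset.mem_inter, Finset.mem_insert]
        constructor
        · rintro ⟨_, h⟩; exact h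
        · intro h; exact ⟨Or.inr h, h⟩
      have h2 : insert b D ∩ {a, b} = {b} := by
        ext x
        simp only [Finset.mem_inter, Finset.mem_insert, Finset.mem_singleton]
        constructor
        · rintro ⟨h1', h2'⟩
          rcases h2' with rfl | rfl
          · rcases h1' with rfl | h
            · exact absurd rfl hab
            · exact absurd h haD
          · rfl
        · rintro rfl; exact ⟨Or.inl rfl, Or.inr rfl⟩
      rw [h1, h2, Finset.card_singleton]


theorem polytope_eq_hull_image (M : Finset (Finset S)) :
    matroidPolytope M = convexHull ℝ ((M.image delta : Finset (S → ℝ)) : Set (S → ℝ)) := by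
  rw [matroidPolytope, Finset.coe_image]

theorem delta_mem_polytope {M : Finset (Finset S)} {I : Finset S} (hI : I ∈ M) :
    delta I ∈ matroidPolytope M :=
  subset_convexHull ℝ _ ⟨I, hI, rfl⟩

theorem exchange_isEdge {M : Finset (Finset S)} {k : ℕ} (hcard : ∀ C ∈ M, C.card = k)
    {I : Finset S} {a b : S} (hI : I ∈ M) (ha : a ∈ I) (hb : b ∉ I)
    (hI' : insert b (I.erase a) ∈ M) :
    IsEdgeOf (matroidPolytope M)
      (convexHull ℝ {delta I, delta (insert b (I.erase a))}) := by
  classical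
  set D := I.erase a with hD
  have haD : a ∉ D := Finset.notMem_erase a I
  have hbD : b ∉ D := fun h => hb (Finset.mem_of_mem_erase h)
  have hab : a ≠ b := fun h => hb (h ▸ ha)
  have hID : I = insert a D := (Finset.insert_erase ha).symm
  have hcardID : I.card = D.card + 1 := by
    rw [hID, Finset.card_insert_of_notMem haD]
  set c : S → ℝ := fun s =>
    (if s ∈ D then (2:ℝ) else 0) + (if s ∈ ({a, b} : Finset S) then (1:ℝ) else 0) with hc
  set l := wsum c with hl
  set m : ℝ := ((2 * D.card + 1 : ℕ) : ℝ) with hm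
  have hval : ∀ C : Finset S,
      l (delta C) = ((2 * (C ∩ D).card + (C ∩ {a, b}).card : ℕ) : ℝ) := by
    intro C
    rw [hl, wsum_delta, hc]
    rw [Finset.sum_add_distrib]
    have h1 : ∑ s ∈ C, (if s ∈ D then (2:ℝ) else 0) = 2 * (C ∩ D).card := by
      rw [Finset.sum_ite_mem, Finset.sum_const, nsmul_eq_mul]; ring
    have h2 : ∑ s ∈ C, (if s ∈ ({a,b} : Finset S) then (1:ℝ) else 0)
        = (C ∩ {a, b}).card := by
      rw [Finset.sum_ite_mem, Finset.sum_const, nsmul_eq_mul]; ring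
    rw [h1, h2]; push_cast; ring
  have hCcard : ∀ C ∈ M, C.card = D.card + 1 := by
    intro C hC; rw [hcard C hC, ← hcard I hI, hcardID]
  have hVmax : ∀ v ∈ M.image delta, l v ≤ m := by
    intro v hv
    obtain ⟨C, hC, rfl⟩ := Finset.mem_image.1 hv
    rw [hval C, hm]
    exact_mod_cast (comb_bound haD hbD hab (hCcard C hC)).1
  have hiff : ∀ C ∈ M, (l (delta C) = m ↔ (C = I ∨ C = insert b D)) := by
    intro C hC
    rw [hval C, hm, hID]
    constructor
    · intro h
      exact (comb_bound haD hbD hab (hCcard C hC)).2.1 (by exact_mod_cast h)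
    · intro h
      exact_mod_cast (comb_bound haD hbD hab (hCcard C hC)).2.2 h
  have hfilter : (M.image delta).filter (fun v => l v = m)
      = ({delta I, delta (insert b D)} : Finset (S → ℝ)) := by
    ext v
    simp only [Finset.mem_filter, Finset.mem_image, Finset.mem_insert, Finset.mem_singleton]
    constructor
    · rintro ⟨⟨C, hC, rfl⟩, hvm⟩
      rcases (hiff C hC).1 hvm with rfl | rfl
      · exact Or.inl rfl
      · exact Or.inr rfl
    · rintro (rfl | rfl)
      · exact ⟨⟨I, hI, rfl⟩, (hiff I hI).2 (Or.inl rfl)⟩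
      · exact ⟨⟨insert b D, hI', rfl⟩, (hiff _ hI').2 (Or.inr rfl)⟩
  have hpairset : (({delta I, delta (insert b D)} : Finset (S → ℝ)) : Set (S → ℝ))
      = ({delta I, delta (insert b D)} : Set (S → ℝ)) := by
    simp
  have hexposed : {x ∈ convexHull ℝ ((M.image delta : Finset (S → ℝ)) : Set (S → ℝ)) |
        ∀ y ∈ convexHull ℝ ((M.image delta : Finset (S → ℝ)) : Set (S → ℝ)), l y ≤ l x}
      = convexHull ℝ ({delta I, delta (insert b D)} : Set (S → ℝ)) := by
    rw [exposed_eq_filter (M.image delta) l m hVmax (Finset.mem_image_of_mem delta hI)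
      ((hiff I hI).2 (Or.inl rfl)), hfilter, hpairset]
  constructor
  · intro _
    refine ⟨LinearMap.toContinuousLinearMap l, ?_⟩
    rw [polytope_eq_hull_image]
    rw [← hexposed]
    congr 1
  · rw [affineSpan_convexHull, direction_affineSpan, vectorSpan_pair]
    apply finrank_span_singleton
    rw [vsub_eq_sub]
    intro h0
    have h1 := congrFun h0 a
    have hanb : a ∉ insert b D := by
      simp only [Finset.mem_insert]
      rintro (rfl | h); exact hab rfl; exact haD h
    simp only [Pi.sub_apply, Pi.zero_apply, delta, if_pos ha, if_neg hanb] at h1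
    norm_num at h1

theorem polytope_coord_bounds {M : Finset (Finset S)} {x : S → ℝ} (hx : x ∈ matroidPolytope M) :
    ∀ s, 0 ≤ x s ∧ x s ≤ 1 := by
  have hconv : Convex ℝ {y : S → ℝ | ∀ s, 0 ≤ y s ∧ y s ≤ 1} := by
    intro y hy z hz p q hp hq hpq
    intro s
    have h1 := (hy s).1; have h2 := (hy s).2; have h3 := (hz s).1; have h4 := (hz s).2
    have : (p • y + q • z) s = p * y s + q * z s := rfl
    rw [this]
    constructor
    · nlinarith
    · nlinarith
  have hgen : delta '' (M : Set (Finset S)) ⊆ {y : S → ℝ | ∀ s, 0 ≤ y s ∧ y s ≤ 1} := by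
    rintro v ⟨B, _, rfl⟩ s
    rcases delta_zero_or_one B s with h | h <;> rw [h] <;> norm_num
  exact convexHull_min hgen hconv hx

theorem delta_extreme {M : Finset (Finset S)} {I : Finset S} (hI : I ∈ M) :
    delta I ∈ Set.extremePoints ℝ (matroidPolytope M) := by
  refine ⟨delta_mem_polytope hI, ?_⟩
  intro x1 h1 x2 h2 hseg
  obtain ⟨p, q, hp, hq, hpq, hx⟩ := hseg
  have hb1 := polytope_coord_bounds h1
  have hb2 := polytope_coord_bounds h2
  have key : ∀ s, x1 s = delta I s ∧ x2 s = delta I s := by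
    intro s
    have hxs : p * x1 s + q * x2 s = delta I s := by
      have := congrFun hx s; simpa using this
    obtain ⟨h11, h12⟩ := hb1 s
    obtain ⟨h21, h22⟩ := hb2 s
    rcases delta_zero_or_one I s with h | h <;> rw [h] at hxs ⊢ <;> constructor <;> nlinarith
  exact funext fun s => (key s).1

theorem mem_polytope_zeroOne {M : Finset (Finset S)} {x : S → ℝ}
    (hx : x ∈ matroidPolytope M) (h01 : ∀ s, x s = 0 ∨ x s = 1) : ∃ B ∈ M, x = delta B := by
  have := mem_of_zeroOne (V := delta '' (M : Set (Finset S)))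
    (by rintro v ⟨B, _, rfl⟩; exact delta_zero_or_one B) h01 hx
  obtain ⟨B, hB, he⟩ := this
  exact ⟨B, hB, he.symm⟩

theorem exposed_face_repr {M : Finset (Finset S)} {E : Set (S → ℝ)}
    (hE : IsExposed ℝ (matroidPolytope M) E) (hne : E.Nonempty) :
    ∃ A : Finset (Finset S), E = convexHull ℝ ((A.image delta : Finset (S → ℝ)) : Set (S → ℝ)) := by
  classical
  obtain ⟨l, hl⟩ := hE hne
  have hMne : (M.image delta).Nonempty := by
    obtain ⟨x, hx⟩ := hne
    rw [hl] at hx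
    have hxP := hx.1
    rw [polytope_eq_hull_image] at hxP
    rcases (M.image delta).eq_empty_or_nonempty with h | h
    · rw [h] at hxP; simp at hxP
    · exact h
  set V := M.image delta with hV
  have hVim : (V.image (fun v => l.toLinearMap v)).Nonempty := hMne.image _
  set m := (V.image (fun v => l.toLinearMap v)).max' hVim with hm
  obtain ⟨v0, hv0, hv0m⟩ : ∃ v0 ∈ V, l.toLinearMap v0 = m := by
    have := (V.image (fun v => l.toLinearMap v)).max'_mem hVim
    rw [Finset.mem_image] at this
    obtain ⟨v0, hv0, hv0m⟩ := this
    exact ⟨v0, hv0, hv0m⟩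
  have hmax : ∀ v ∈ V, l.toLinearMap v ≤ m := fun v hv =>
    Finset.le_max' _ _ (Finset.mem_image_of_mem _ hv)
  refine ⟨M.filter (fun B => l.toLinearMap (delta B) = m), ?_⟩
  have himfil : (M.filter (fun B => l.toLinearMap (delta B) = m)).image delta
      = V.filter (fun v => l.toLinearMap v = m) := by
    rw [hV, Finset.filter_image]
  rw [himfil, ← exposed_eq_filter V l.toLinearMap m hmax hv0 hv0m, hl,
    polytope_eq_hull_image]
  rfl

theorem edgeSet_finite (M : Finset (Finset S)) (v : S → ℝ) :
    {E : Set (S → ℝ) | IsEdgeOf (matroidPolytope M) E ∧ v ∈ E}.Finite := by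
  classical
  apply Set.Finite.subset (Set.finite_range (fun A : Finset (Finset S) =>
    convexHull ℝ ((A.image delta : Finset (S → ℝ)) : Set (S → ℝ))))
  rintro E ⟨⟨hexp, _⟩, hv⟩
  obtain ⟨A, rfl⟩ := exposed_face_repr hexp ⟨v, hv⟩
  exact ⟨A, rfl⟩

theorem exchange_eq_param {I : Finset S} {a b a' b' : S} (ha : a ∈ I) (hb : b ∉ I)
    (ha' : a' ∈ I) (hb' : b' ∉ I)
    (h : insert b' (I.erase a') = insert b (I.erase a)) : a = a' ∧ b = b' := by
  have hbb : b' = b := by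
    have hb'm : b' ∈ insert b (I.erase a) := h ▸ Finset.mem_insert_self b' (I.erase a')
    rcases Finset.mem_insert.1 hb'm with h1 | h1
    · exact h1
    · exact absurd (Finset.mem_of_mem_erase h1) hb'
  refine ⟨?_, hbb.symm⟩
  by_contra hne
  have h1 : a' ∈ insert b (I.erase a) :=
    Finset.mem_insert_of_mem (Finset.mem_erase.2 ⟨fun hc => hne hc.symm, ha'⟩)
  rw [← h] at h1
  rcases Finset.mem_insert.1 h1 with h2 | h2
  · exact hb' (h2 ▸ ha')
  · exact (Finset.notMem_erase a' I) h2

def nbrs (M : Finset (Finset S)) (I : Finset S) : Finset (S × S) :=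
  (I ×ˢ (Finset.univ \ I)).filter fun p => insert p.2 (I.erase p.1) ∈ M

theorem mem_nbrs {M : Finset (Finset S)} {I : Finset S} {p : S × S} :
    p ∈ nbrs M I ↔ p.1 ∈ I ∧ p.2 ∉ I ∧ insert p.2 (I.erase p.1) ∈ M := by
  simp only [nbrs, Finset.mem_filter, Finset.mem_product, Finset.mem_sdiff, Finset.mem_univ,
    true_and]
  tauto

theorem nbrs_card_le {M : Finset (Finset S)} {k : ℕ} (hcard : ∀ C ∈ M, C.card = k)
    {I : Finset S} (hI : I ∈ M)
    (hsimp : IsSimpleAt (matroidPolytope M) (delta I)) :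
    (nbrs M I).card ≤ polyDim (matroidPolytope M) := by
  classical
  set ES := {E : Set (S → ℝ) | IsEdgeOf (matroidPolytope M) E ∧ delta I ∈ E} with hES
  set g : S × S → Set (S → ℝ) :=
    fun p => convexHull ℝ {delta I, delta (insert p.2 (I.erase p.1))} with hg
  have hmaps : ∀ p ∈ nbrs M I, g p ∈ ES := by
    rintro ⟨a, b⟩ hp
    obtain ⟨haI, hbI, hins⟩ := mem_nbrs.1 hp
    exact ⟨exchange_isEdge hcard hI haI hbI hins, subset_convexHull ℝ _ (Or.inl rfl)⟩
  have hinj : Set.InjOn g ↑(nbrs M I) := by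
    rintro ⟨a, b⟩ hp ⟨a', b'⟩ hp' hgg
    obtain ⟨haI, hbI, hins⟩ := mem_nbrs.1 (Finset.mem_coe.1 hp)
    obtain ⟨haI', hbI', hins'⟩ := mem_nbrs.1 (Finset.mem_coe.1 hp')
    have hmem' : delta (insert b' (I.erase a')) ∈ g (a, b) := by
      rw [hgg]; exact subset_convexHull ℝ _ (Or.inr rfl)
    have h01 : delta (insert b' (I.erase a'))
        ∈ ({delta I, delta (insert b (I.erase a))} : Set (S → ℝ)) := by
      apply mem_of_zeroOne (V := {delta I, delta (insert b (I.erase a))})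
      · rintro v (rfl | rfl) <;> intro s
        · exact delta_zero_or_one I s
        · exact delta_zero_or_one _ s
      · exact fun s => delta_zero_or_one _ s
      · exact hmem'
    rcases h01 with h | h
    · exfalso
      have := delta_inj h
      have hb'm : b' ∈ I := by
        rw [← this]; exact Finset.mem_insert_self b' _
      exact hbI' hb'm
    · have heq := delta_inj h
      obtain ⟨h1, h2⟩ := exchange_eq_param haI hbI haI' hbI' heq
      exact Prod.ext h1 h2
  calc (nbrs M I).card = (g '' ↑(nbrs M I)).ncard := by
        rw [Set.ncard_image_of_injOn hinj, Set.ncard_coe_finset]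
    _ ≤ ES.ncard := Set.ncard_le_ncard
        (by rintro E ⟨p, hp, rfl⟩; exact hmaps p (Finset.mem_coe.1 hp))
        (edgeSet_finite M (delta I))
    _ = polyDim (matroidPolytope M) := hsimp

theorem brualdi_exchange {k : ℕ} {M : Finset (Finset S)} (hM : IsMatroid k M)
    {A B : Finset S} (hA : A ∈ M) (hB : B ∈ M) {a : S} (haA : a ∈ A) (haB : a ∉ B) :
    ∃ b ∈ B, b ∉ A ∧ insert b (A.erase a) ∈ M ∧ insert a (B.erase b) ∈ M := by
  classical
  obtain ⟨hMne, hcard, hex⟩ := hM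
  set Bse : Set S → Prop := fun X => ∃ C ∈ M, (C : Set S) = X with hBse
  have hexch : Matroid.ExchangeProperty Bse := by
    rintro X Y ⟨C, hC, rfl⟩ ⟨D, hD, rfl⟩ x hx
    have hxC : x ∈ C := Finset.mem_coe.1 hx.1
    have hxD : x ∉ D := fun h => hx.2 (Finset.mem_coe.2 h)
    have hne' : C ≠ D := fun h => hxD (h ▸ hxC)
    obtain ⟨j, hj, hjins⟩ := hex C hC D hD hne' x (Finset.mem_sdiff.2 ⟨hxC, hxD⟩)
    obtain ⟨hjD, hjC⟩ := Finset.mem_sdiff.1 hj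
    refine ⟨j, ⟨Finset.mem_coe.2 hjD, fun h => hjC (Finset.mem_coe.1 h)⟩,
      insert j (C.erase x), hjins, ?_⟩
    rw [Finset.coe_insert, Finset.coe_erase]
  set Mat := Matroid.ofIsBaseOfFinite (Set.finite_univ (α := S)) Bse
      ⟨(A : Set S), A, hA, rfl⟩ hexch (fun _ _ => Set.subset_univ _) with hMat
  have hBase : ∀ X, Mat.IsBase X ↔ Bse X := by
    intro X; rw [hMat, Matroid.ofIsBaseOfFinite_isBase]
  have hE : Mat.E = Set.univ := by rw [hMat, Matroid.ofIsBaseOfFinite_E]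
  have hAb : Mat.IsBase (A : Set S) := (hBase _).2 ⟨A, hA, rfl⟩
  have hBb : Mat.IsBase (B : Set S) := (hBase _).2 ⟨B, hB, rfl⟩
  have haAs : a ∈ (A : Set S) := Finset.mem_coe.2 haA
  have haBs : a ∉ (B : Set S) := fun h => haB (Finset.mem_coe.1 h)
  set K := Mat.closure ((A : Set S) \ {a}) with hK
  have haK : a ∉ K := hAb.indep.notMem_closure_diff_of_mem haAs
  -- find minimal Y ⊆ B with a ∈ closure Y
  have haclB : a ∈ Mat.closure (B : Set S) := by
    rw [hBb.closure_eq, hE]; trivial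
  set P : Finset (Finset S) := B.powerset.filter (fun Y => a ∈ Mat.closure (Y : Set S)) with hP
  have hPne : P.Nonempty := ⟨B, Finset.mem_filter.2 ⟨Finset.mem_powerset_self B, haclB⟩⟩
  obtain ⟨Y, hYP, hYmin⟩ : ∃ Y ∈ P, ∀ x ∈ P, ¬ x < Y := by
    obtain ⟨Y, hY⟩ := Finset.exists_minimal hPne
    exact ⟨Y, hY.1, fun x hx hlt => lt_irrefl _ (lt_of_lt_of_le hlt (hY.2 hx hlt.le))⟩
  obtain ⟨hYB', haY⟩ := Finset.mem_filter.1 hYP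
  have hYB : Y ⊆ B := Finset.mem_powerset.1 hYB'
  have hminY : ∀ y ∈ Y, a ∉ Mat.closure ((Y : Set S) \ {y}) := by
    intro y hy hacl
    have herase : Y.erase y ∈ P := Finset.mem_filter.2
      ⟨Finset.mem_powerset.2 ((Finset.erase_subset y Y).trans hYB), by
        rwa [Finset.coe_erase] ⟩
    exact hYmin _ herase (Finset.erase_ssubset hy)
  by_cases hYK : (Y : Set S) ⊆ K
  · exfalso
    have : Mat.closure (Y : Set S) ⊆ K := by
      rw [hK]
      calc Mat.closure (Y : Set S) ⊆ Mat.closure K :=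
            Mat.closure_subset_closure hYK
        _ = K := Mat.closure_closure _
    exact haK (this haY)
  · obtain ⟨b, hbY, hbK⟩ := Set.not_subset.1 hYK
    have hbYf : b ∈ Y := Finset.mem_coe.1 hbY
    have hbB : b ∈ B := hYB hbYf
    have hba : b ≠ a := fun h => haB (h ▸ hbB)
    have hbA : b ∉ A := by
      intro hbA
      exact hbK (Mat.subset_closure ((A : Set S) \ {a}) (by rw [hE]; exact Set.subset_univ _)
        ⟨Finset.mem_coe.2 hbA, hba⟩)
    have hkey : a ∉ Mat.closure ((B : Set S) \ {b}) := by
      intro hacl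
      have hYeq : insert b ((Y : Set S) \ {b}) = (Y : Set S) := by
        rw [Set.insert_diff_singleton, Set.insert_eq_self.2 hbY]
      have h1 : a ∈ Mat.closure (insert b ((Y : Set S) \ {b}))
          \ Mat.closure ((Y : Set S) \ {b}) := by
        constructor
        · rw [hYeq]; exact haY
        · exact hminY b hbYf
      have h2 := Matroid.closure_exchange h1
      have h3 : Mat.closure (insert a ((Y : Set S) \ {b}))
          ⊆ Mat.closure (insert a ((B : Set S) \ {b})) :=
        Mat.closure_subset_closure (Set.insert_subset_insert
          (Set.diff_subset_diff_left (Finset.coe_subset.2 hYB)))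
      have h4 : Mat.closure (insert a ((B : Set S) \ {b})) = Mat.closure ((B : Set S) \ {b}) :=
        Matroid.closure_insert_eq_of_mem_closure hacl
      have hbnot : b ∉ Mat.closure ((B : Set S) \ {b}) :=
        hBb.indep.notMem_closure_diff_of_mem (Finset.mem_coe.2 hbB)
      exact hbnot (h4 ▸ h3 h2.1)
    -- base insert a (B \ {b})
    have hindep1 : Mat.Indep (insert a ((B : Set S) \ {b})) := by
      have hsub : Mat.Indep ((B : Set S) \ {b}) := hBb.indep.subset Set.diff_subset
      rw [hsub.insert_indep_iff_of_notMem (fun h => haBs h.1)]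
      exact ⟨by rw [hE]; trivial, hkey⟩
    have hbase1 : Mat.IsBase (insert a (B : Set S) \ {b}) := by
      apply hBb.exchange_isBase_of_indep' (Finset.mem_coe.2 hbB) haBs
      rwa [← Set.insert_diff_singleton_comm (fun h => hba h.symm : a ≠ b)]
    -- base insert b (A \ {a})
    have hindep2 : Mat.Indep (insert b ((A : Set S) \ {a})) := by
      have hsub : Mat.Indep ((A : Set S) \ {a}) := hAb.indep.subset Set.diff_subset
      rw [hsub.insert_indep_iff_of_notMem (fun h => hbA (Finset.mem_coe.1 h.1))]
      exact ⟨by rw [hE]; trivial, hbK⟩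
    have hbase2 : Mat.IsBase (insert b (A : Set S) \ {a}) := by
      apply hAb.exchange_isBase_of_indep' haAs (fun h => hbA (Finset.mem_coe.1 h))
      rwa [← Set.insert_diff_singleton_comm hba]
    -- convert back to Finset statements
    obtain ⟨C1, hC1, hC1e⟩ := (hBase _).1 hbase1
    obtain ⟨C2, hC2, hC2e⟩ := (hBase _).1 hbase2
    have he1 : C1 = insert a (B.erase b) := by
      apply Finset.coe_injective
      rw [hC1e, Finset.coe_insert, Finset.coe_erase,
        Set.insert_diff_singleton_comm (fun h => hba h.symm : a ≠ b)]
    have he2 : C2 = insert b (A.erase a) := by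
      apply Finset.coe_injective
      rw [hC2e, Finset.coe_insert, Finset.coe_erase, Set.insert_diff_singleton_comm hba]
    exact ⟨b, hbB, hbA, he2 ▸ hC2, he1 ▸ hC1⟩

noncomputable def evec (p : S × S) : S → ℝ := delta {p.2} - delta {p.1}

theorem polyDim_eq (M : Finset (Finset S)) :
    polyDim (matroidPolytope M) = finrank ℝ (vectorSpan ℝ (delta '' (M : Set (Finset S)))) := by
  rw [polyDim, matroidPolytope, affineSpan_convexHull, direction_affineSpan]

theorem delta_exchange_sub {C : Finset S} {x b : S} (hx : x ∈ C) (hb : b ∉ C) :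
    delta C - delta (insert b (C.erase x)) = evec (b, x) := by
  have hxb : x ≠ b := fun h => hb (h ▸ hx)
  funext s
  have : evec (b, x) s = delta {x} s - delta {b} s := rfl
  rw [Pi.sub_apply, this]
  by_cases hsx : s = x
  · subst hsx
    have h1 : s ∉ insert b (C.erase s) := by
      simp only [Finset.mem_insert, Finset.mem_erase]
      rintro (rfl | ⟨h, _⟩); exact hb hx; exact h rfl
    simp [delta, hx, h1, hxb]
  · by_cases hsb : s = b
    · subst hsb
      have h1 : s ∈ insert s (C.erase x) := Finset.mem_insert_self _ _
      simp [delta, hb, h1, hsx]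
    · have h1 : (s ∈ insert b (C.erase x)) = (s ∈ C) := by
        simp only [Finset.mem_insert, Finset.mem_erase, eq_iff_iff]
        constructor
        · rintro (rfl | ⟨_, h⟩); exact absurd rfl hsb; exact h
        · intro h; exact Or.inr ⟨hsx, h⟩
      by_cases hsC : s ∈ C <;> simp [delta, hsC, h1, hsx, hsb]

theorem vectorSpan_le_span_evec {k : ℕ} {M : Finset (Finset S)} (hM : IsMatroid k M)
    {B : Finset S} (hB : B ∈ M) :
    vectorSpan ℝ (delta '' (M : Set (Finset S)))
      ≤ Submodule.span ℝ (evec '' ((nbrs M B : Finset (S × S)) : Set (S × S))) := by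
  classical
  set W := Submodule.span ℝ (evec '' ((nbrs M B : Finset (S × S)) : Set (S × S))) with hW
  have key : ∀ n (C : Finset S), C ∈ M → (C \ B).card = n → delta C - delta B ∈ W := by
    intro n
    induction n with
    | zero =>
      intro C hC hn
      have hCB : C = B := by
        have hsub : C ⊆ B := by
          intro x hx
          by_contra hxB
          have : x ∈ C \ B := Finset.mem_sdiff.2 ⟨hx, hxB⟩
          rw [Finset.card_eq_zero.1 hn] at this
          exact absurd this (Finset.notMem_empty x)
        exact Finset.eq_of_subset_of_card_le hsub
          (by rw [hM.2.1 C hC, hM.2.1 B hB])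
      rw [hCB, sub_self]
      exact Submodule.zero_mem W
    | succ n ih =>
      intro C hC hn
      obtain ⟨x, hx⟩ : (C \ B).Nonempty := Finset.card_pos.1 (by omega)
      obtain ⟨hxC, hxB⟩ := Finset.mem_sdiff.1 hx
      obtain ⟨b, hbB, hbC, hCex, hBex⟩ := brualdi_exchange hM hC hB hxC hxB
      set C' := insert b (C.erase x) with hC'
      have hvec : delta C - delta C' = evec (b, x) := delta_exchange_sub hxC hbC
      have hmem : (b, x) ∈ nbrs M B := mem_nbrs.2 ⟨hbB, hxB, hBex⟩
      have hstep : delta C - delta C' ∈ W := by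
        rw [hvec]
        exact Submodule.subset_span ⟨(b, x), Finset.mem_coe.2 hmem, rfl⟩
      have hcard' : (C' \ B).card = n := by
        have : C' \ B = (C \ B).erase x := by
          ext y
          simp only [Finset.mem_sdiff, Finset.mem_erase, hC', Finset.mem_insert,
            Finset.mem_erase]
          constructor
          · rintro ⟨rfl | ⟨hyx, hyC⟩, hyB⟩
            · exact absurd hbB hyB
            · exact ⟨hyx, hyC, hyB⟩
          · rintro ⟨hyx, hyC, hyB⟩
            exact ⟨Or.inr ⟨hyx, hyC⟩, hyB⟩
        rw [this, Finset.card_erase_of_mem hx, hn]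
        omega
      have hrec := ih C' hCex hcard'
      have : delta C - delta B = (delta C - delta C') + (delta C' - delta B) := by ring
      rw [this]
      exact Submodule.add_mem W hstep hrec
  have hBmem : delta B ∈ delta '' (M : Set (Finset S)) := ⟨B, Finset.mem_coe.2 hB, rfl⟩
  rw [vectorSpan_eq_span_vsub_set_right ℝ hBmem, Submodule.span_le]
  rintro v ⟨u, ⟨C, hC, rfl⟩, rfl⟩
  exact key _ C (Finset.mem_coe.1 hC) rfl

theorem polyDim_le_nbrs {k : ℕ} {M : Finset (Finset S)} (hM : IsMatroid k M)
    {B : Finset S} (hB : B ∈ M) :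
    polyDim (matroidPolytope M) ≤ (nbrs M B).card := by
  classical
  rw [polyDim_eq]
  have h1 : finrank ℝ (vectorSpan ℝ (delta '' (M : Set (Finset S))))
      ≤ finrank ℝ (Submodule.span ℝ (evec '' ((nbrs M B : Finset (S × S)) : Set (S × S)))) :=
    Submodule.finrank_mono (vectorSpan_le_span_evec hM hB)
  have h2 : evec '' ((nbrs M B : Finset (S × S)) : Set (S × S))
      = (((nbrs M B).image evec : Finset (S → ℝ)) : Set (S → ℝ)) := by
    rw [Finset.coe_image]
  have h3 := finrank_span_finset_le_card ((nbrs M B).image evec) (R := ℝ)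
  rw [Set.finrank] at h3
  calc finrank ℝ (vectorSpan ℝ (delta '' (M : Set (Finset S))))
      ≤ finrank ℝ (Submodule.span ℝ (evec '' ((nbrs M B : Finset (S × S)) : Set (S × S)))) := h1
    _ = finrank ℝ (Submodule.span ℝ (((nbrs M B).image evec : Finset (S → ℝ)) : Set (S → ℝ))) := by
        rw [h2]
    _ ≤ ((nbrs M B).image evec).card := h3
    _ ≤ (nbrs M B).card := Finset.card_image_le

section Product

variable {q : ℕ} {J : Fin q → Finset S} {ks : Fin q → ℕ} {Ms : Fin q → Finset (Finset S)}
  {k : ℕ} {M : Finset (Finset S)}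

theorem supp_subset {i : Fin q} (hsub : ∀ I ∈ Ms i, I ⊆ J i) {x : S → ℝ}
    (hx : x ∈ matroidPolytope (Ms i)) : ∀ s, s ∉ J i → x s = 0 := by
  have hconv : Convex ℝ {y : S → ℝ | ∀ s ∉ J i, y s = 0} := by
    intro y hy z hz p p' hp hp' hpp
    intro s hs
    have : (p • y + p' • z) s = p * y s + p' * z s := rfl
    rw [this, hy s hs, hz s hs]; ring
  have hgen : delta '' ((Ms i : Set (Finset S))) ⊆ {y : S → ℝ | ∀ s ∉ J i, y s = 0} := by
    rintro v ⟨B, hB, rfl⟩ s hs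
    have : s ∉ B := fun h => hs (hsub B (Finset.mem_coe.1 hB) h)
    simp [delta, this]
  exact convexHull_min hgen hconv hx

theorem mem_M_iff (hM : IsMatroid k M) (hMs : ∀ i, IsMatroid (ks i) (Ms i))
    (hsub : ∀ i, ∀ I ∈ Ms i, I ⊆ J i)
    (hpart : ∀ x : S, ∃! i, x ∈ J i)
    (hprod : matroidPolytope M =
      {x | ∃ y : Fin q → (S → ℝ), (∀ i, y i ∈ matroidPolytope (Ms i)) ∧ x = ∑ i, y i})
    (I : Finset S) : I ∈ M ↔ ∀ i, I ∩ J i ∈ Ms i := by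
  constructor
  · intro hI i
    have hx : delta I ∈ matroidPolytope M := delta_mem_polytope hI
    rw [hprod] at hx
    obtain ⟨y, hy, hsum⟩ := hx
    have hyi : y i = delta (I ∩ J i) := by
      funext s
      by_cases hs : s ∈ J i
      · have h1 : delta I s = ∑ j, y j s := by
          rw [hsum]; exact Finset.sum_apply _ _ _
        have h2 : ∑ j, y j s = y i s := by
          apply Finset.sum_eq_single_of_mem i (Finset.mem_univ i)
          intro j _ hj
          exact supp_subset (hsub j) (hy j) s
            (fun hsj => hj ((hpart s).unique hsj hs))
        have h3 : delta (I ∩ J i) s = delta I s := by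
          by_cases hsI : s ∈ I <;> simp [delta, hsI, hs]
        rw [h3, h1, h2]
      · rw [supp_subset (hsub i) (hy i) s hs]
        have : s ∉ I ∩ J i := fun h => hs (Finset.mem_inter.1 h).2
        simp [delta, this]
    have := mem_polytope_zeroOne (hy i) (by rw [hyi]; exact fun s => delta_zero_or_one _ s)
    obtain ⟨B, hB, hBe⟩ := this
    rwa [← delta_inj (hyi ▸ hBe.symm : delta B = delta (I ∩ J i))]
  · intro hIi
    have hIsub : delta I = ∑ i, delta (I ∩ J i) := by
      funext s
      obtain ⟨i0, hi0, hiu⟩ := hpart s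
      rw [Finset.sum_apply]
      have h3 : ∑ i, delta (I ∩ J i) s = delta (I ∩ J i0) s := by
        apply Finset.sum_eq_single_of_mem i0 (Finset.mem_univ i0)
        intro j _ hj
        have : s ∉ I ∩ J j := fun h => hj (hiu j (Finset.mem_inter.1 h).2)
        simp [delta, this]
      rw [h3]
      by_cases hsI : s ∈ I <;> simp [delta, hsI, hi0]
    have hx : delta I ∈ matroidPolytope M := by
      rw [hprod]
      exact ⟨fun i => delta (I ∩ J i), fun i => delta_mem_polytope (hIi i), hIsub⟩
    obtain ⟨B, hB, hBe⟩ := mem_polytope_zeroOne hx (fun s => delta_zero_or_one _ s)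
    rwa [delta_inj hBe]

theorem nbrs_decomp (hM : IsMatroid k M) (hMs : ∀ i, IsMatroid (ks i) (Ms i))
    (hsub : ∀ i, ∀ I ∈ Ms i, I ⊆ J i)
    (hpart : ∀ x : S, ∃! i, x ∈ J i)
    (hprod : matroidPolytope M =
      {x | ∃ y : Fin q → (S → ℝ), (∀ i, y i ∈ matroidPolytope (Ms i)) ∧ x = ∑ i, y i})
    {I : Finset S} (hI : I ∈ M) :
    (nbrs M I).card = ∑ i, (nbrs (Ms i) (I ∩ J i)).card := by
  classical
  have hmmi := mem_M_iff hM hMs hsub hpart hprod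
  -- second coordinates of factor-neighbours lie in J i, first too
  have hfac : ∀ (i : Fin q) (a b : S), (a, b) ∈ nbrs (Ms i) (I ∩ J i) →
      a ∈ J i ∧ b ∈ J i ∧ a ∈ I ∧ b ∉ I := by
    intro i a b hab
    obtain ⟨ha, hb, hins⟩ := mem_nbrs.1 hab
    have haJ : a ∈ J i := (Finset.mem_inter.1 ha).2
    have hbJ : b ∈ J i := hsub i _ hins (Finset.mem_insert_self b _)
    exact ⟨haJ, hbJ, (Finset.mem_inter.1 ha).1, fun hbI => hb (Finset.mem_inter.2 ⟨hbI, hbJ⟩)⟩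
  have hset : nbrs M I = Finset.univ.biUnion (fun i => nbrs (Ms i) (I ∩ J i)) := by
    ext ⟨a, b⟩
    simp only [Finset.mem_biUnion, Finset.mem_univ, true_and]
    constructor
    · intro hab
      obtain ⟨haI, hbI, hins⟩ := mem_nbrs.1 hab
      obtain ⟨i, hai, haiu⟩ := hpart a
      obtain ⟨t, hbt, hbtu⟩ := hpart b
      set I' := insert b (I.erase a) with hI'
      have hI'm : ∀ j, I' ∩ J j ∈ Ms j := (hmmi I').1 hins
      have hIm : ∀ j, I ∩ J j ∈ Ms j := (hmmi I).1 hI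
      have hcards : ∀ j, (I' ∩ J j).card = (I ∩ J j).card := by
        intro j
        rw [(hMs j).2.1 _ (hI'm j), (hMs j).2.1 _ (hIm j)]
      have hit : i = t := by
        by_contra hne
        have hbJi : b ∉ J i := fun h => hne (hbtu i h)
        have h1 : I' ∩ J i = (I ∩ J i).erase a := by
          ext y
          simp only [hI', Finset.mem_inter, Finset.mem_insert, Finset.mem_erase]
          constructor
          · rintro ⟨rfl | ⟨hy1, hy2⟩, hyJ⟩
            · exact absurd hyJ hbJi
            · exact ⟨hy1, hy2, hyJ⟩
          · rintro ⟨hy1, hy2, hyJ⟩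
            exact ⟨Or.inr ⟨hy1, hy2⟩, hyJ⟩
        have h2 := hcards i
        rw [h1, Finset.card_erase_of_mem (Finset.mem_inter.2 ⟨haI, hai⟩)] at h2
        have : 0 < (I ∩ J i).card := Finset.card_pos.2 ⟨a, Finset.mem_inter.2 ⟨haI, hai⟩⟩
        omega
      subst hit
      refine ⟨i, mem_nbrs.2 ⟨Finset.mem_inter.2 ⟨haI, hai⟩,
        fun h => hbI (Finset.mem_inter.1 h).1, ?_⟩⟩
      have : insert b ((I ∩ J i).erase a) = I' ∩ J i := by
        ext y
        simp only [hI', Finset.mem_inter, Finset.mem_insert, Finset.mem_erase]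
        constructor
        · rintro (rfl | ⟨hy1, hy2, hy3⟩)
          · exact ⟨Or.inl rfl, hbt⟩
          · exact ⟨Or.inr ⟨hy1, hy2⟩, hy3⟩
        · rintro ⟨rfl | ⟨hy1, hy2⟩, hyJ⟩
          · exact Or.inl rfl
          · exact Or.inr ⟨hy1, hy2, hyJ⟩
      rw [this]
      exact hI'm i
    · rintro ⟨i, hab⟩
      obtain ⟨haJ, hbJ, haI, hbI⟩ := hfac i a b hab
      obtain ⟨ha, hb, hins⟩ := mem_nbrs.1 hab
      refine mem_nbrs.2 ⟨haI, hbI, ?_⟩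
      apply (hmmi _).2
      intro j
      by_cases hji : j = i
      · subst hji
        have : insert b (I.erase a) ∩ J j = insert b ((I ∩ J j).erase a) := by
          ext y
          simp only [Finset.mem_inter, Finset.mem_insert, Finset.mem_erase]
          constructor
          · rintro ⟨rfl | ⟨hy1, hy2⟩, hyJ⟩
            · exact Or.inl rfl
            · exact Or.inr ⟨hy1, hy2, hyJ⟩
          · rintro (rfl | ⟨hy1, hy2, hy3⟩)
            · exact ⟨Or.inl rfl, hbJ⟩
            · exact ⟨Or.inr ⟨hy1, hy2⟩, hy3⟩
        rw [this]
        exact hins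
      · have haJj : a ∉ J j := fun h => hji ((hpart a).unique h haJ)
        have hbJj : b ∉ J j := fun h => hji ((hpart b).unique h hbJ)
        have : insert b (I.erase a) ∩ J j = I ∩ J j := by
          ext y
          simp only [Finset.mem_inter, Finset.mem_insert, Finset.mem_erase]
          constructor
          · rintro ⟨rfl | ⟨hy1, hy2⟩, hyJ⟩
            · exact absurd hyJ hbJj
            · exact ⟨hy2, hyJ⟩
          · rintro ⟨hy1, hyJ⟩
            exact ⟨Or.inr ⟨fun h => haJj (h ▸ hyJ), hy1⟩, hyJ⟩
        rw [this]
        exact (hmmi I).1 hI j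
  rw [hset]
  apply Finset.card_biUnion
  intro i _ j _ hij
  rw [Function.onFun, Finset.disjoint_left]
  rintro ⟨a, b⟩ hai haj
  exact hij ((hpart a).unique ((hfac i a b hai).1) ((hfac j a b haj).1))

end Product

section Factor

variable {kk : ℕ} {Ms : Finset (Finset S)} {JJ : Finset S}

theorem finrank_span_image_finset_le {α : Type} [DecidableEq α] (f : α → (S → ℝ))
    (F : Finset α) :
    finrank ℝ (Submodule.span ℝ (f '' (F : Set α))) ≤ F.card := by
  classical
  have h2 : f '' (F : Set α) = ((F.image f : Finset (S → ℝ)) : Set (S → ℝ)) := by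
    rw [Finset.coe_image]
  have h3 := finrank_span_finset_le_card (F.image f) (R := ℝ)
  rw [Set.finrank] at h3
  rw [h2]
  exact h3.trans Finset.card_image_le

theorem polyDim_le_finrank_span (hIsM : IsMatroid kk Ms) {B : Finset S} (hB : B ∈ Ms) :
    polyDim (matroidPolytope Ms)
      ≤ finrank ℝ (Submodule.span ℝ (evec '' ((nbrs Ms B : Finset (S × S)) : Set (S × S)))) := by
  rw [polyDim_eq]
  exact Submodule.finrank_mono (vectorSpan_le_span_evec hIsM hB)

theorem nbrs_mem_J (hsubJ : ∀ I ∈ Ms, I ⊆ JJ) {B : Finset S} (hB : B ∈ Ms)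
    {p : S × S} (hp : p ∈ nbrs Ms B) : p.1 ∈ JJ ∧ p.2 ∈ JJ := by
  obtain ⟨h1, _, h3⟩ := mem_nbrs.1 hp
  exact ⟨hsubJ B hB h1, hsubJ _ h3 (Finset.mem_insert_self _ _)⟩

theorem no4cycle (hIsM : IsMatroid kk Ms) {B : Finset S} (hB : B ∈ Ms)
    (hcnt : (nbrs Ms B).card = polyDim (matroidPolytope Ms))
    {a c b d : S} (hac : a ≠ c) (hbd : b ≠ d)
    (h1 : (a, b) ∈ nbrs Ms B) (h2 : (a, d) ∈ nbrs Ms B)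
    (h3 : (c, b) ∈ nbrs Ms B) (h4 : (c, d) ∈ nbrs Ms B) : False := by
  classical
  have hcomb : evec (c, d) = evec (c, b) + evec (a, d) - evec (a, b) := by
    funext s
    simp only [evec, Pi.add_apply, Pi.sub_apply]
    ring
  have hrest : evec (c, d) ∈ Submodule.span ℝ
      (evec '' (((nbrs Ms B).erase (c, d) : Finset (S × S)) : Set (S × S))) := by
    have hm1 : (c, b) ∈ (nbrs Ms B).erase (c, d) :=
      Finset.mem_erase.2 ⟨by simp [hbd], h3⟩
    have hm2 : (a, d) ∈ (nbrs Ms B).erase (c, d) :=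
      Finset.mem_erase.2 ⟨by simp [hac], h2⟩
    have hm3 : (a, b) ∈ (nbrs Ms B).erase (c, d) :=
      Finset.mem_erase.2 ⟨by simp [hac], h1⟩
    rw [hcomb]
    exact Submodule.sub_mem _ (Submodule.add_mem _
      (Submodule.subset_span ⟨_, hm1, rfl⟩) (Submodule.subset_span ⟨_, hm2, rfl⟩))
      (Submodule.subset_span ⟨_, hm3, rfl⟩)
  have hspan : Submodule.span ℝ (evec '' ((nbrs Ms B : Finset (S × S)) : Set (S × S)))
      = Submodule.span ℝ (evec '' (((nbrs Ms B).erase (c, d) : Finset (S × S)) : Set (S × S))) := by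
    conv_lhs => rw [← Finset.insert_erase h4]
    rw [Finset.coe_insert, Set.image_insert_eq]
    exact Submodule.span_insert_eq_span hrest
  have hub := finrank_span_image_finset_le evec ((nbrs Ms B).erase (c, d))
  have hlb := polyDim_le_finrank_span hIsM hB
  rw [hspan] at hlb
  have hcard : ((nbrs Ms B).erase (c, d)).card = (nbrs Ms B).card - 1 :=
    Finset.card_erase_of_mem h4
  have hpos : 1 ≤ (nbrs Ms B).card := Finset.card_pos.2 ⟨_, h4⟩
  omega

theorem vertex_touched (hIsM : IsMatroid kk Ms) (hsubJ : ∀ I ∈ Ms, I ⊆ JJ)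
    {B : Finset S} (hB : B ∈ Ms)
    (hdim : polyDim (matroidPolytope Ms) = JJ.card - 1) (hn2 : 2 ≤ JJ.card)
    {x : S} (hx : x ∈ JJ) : ∃ p ∈ nbrs Ms B, p.1 = x ∨ p.2 = x := by
  classical
  by_contra hno
  push_neg at hno
  obtain ⟨s1, hs1⟩ : (JJ.erase x).Nonempty := by
    rw [← Finset.card_pos, Finset.card_erase_of_mem hx]; omega
  set g : S → (S → ℝ) := fun s => delta {s} - delta {s1} with hg
  set U := Submodule.span ℝ (g '' (((JJ.erase x).erase s1 : Finset S) : Set S)) with hU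
  have hgmem : ∀ s ∈ JJ.erase x, g s ∈ U := by
    intro s hs
    by_cases hss : s = s1
    · subst hss
      have : g s = 0 := by rw [hg]; simp
      rw [this]; exact Submodule.zero_mem U
    · exact Submodule.subset_span ⟨s, Finset.mem_coe.2 (Finset.mem_erase.2 ⟨hss, hs⟩), rfl⟩
  have hWU : Submodule.span ℝ (evec '' ((nbrs Ms B : Finset (S × S)) : Set (S × S))) ≤ U := by
    rw [Submodule.span_le]
    rintro v ⟨p, hp, rfl⟩
    have hpmem := Finset.mem_coe.1 hp
    obtain ⟨hp1, hp2⟩ := nbrs_mem_J hsubJ hB hpmem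
    have hp1x : p.1 ≠ x := (hno p hpmem).1
    have hp2x : p.2 ≠ x := (hno p hpmem).2
    have : evec p = g p.2 - g p.1 := by rw [hg]; funext s; simp [evec]
    rw [this]
    exact Submodule.sub_mem _ (hgmem _ (Finset.mem_erase.2 ⟨hp2x, hp2⟩))
      (hgmem _ (Finset.mem_erase.2 ⟨hp1x, hp1⟩))
  have hlb := polyDim_le_finrank_span hIsM hB
  have h1 : polyDim (matroidPolytope Ms) ≤ finrank ℝ U :=
    hlb.trans (Submodule.finrank_mono hWU)
  have hub := finrank_span_image_finset_le g ((JJ.erase x).erase s1)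
  rw [← hU] at hub
  have hc1 : ((JJ.erase x).erase s1).card = JJ.card - 2 := by
    rw [Finset.card_erase_of_mem hs1, Finset.card_erase_of_mem hx]
    omega
  omega

theorem disjointD (hIsM : IsMatroid kk Ms) {B : Finset S} (hB : B ∈ Ms)
    (hcnt : (nbrs Ms B).card = polyDim (matroidPolytope Ms))
    {a b c d : S} (h1 : (a, b) ∈ nbrs Ms B) (h2 : (c, d) ∈ nbrs Ms B)
    (hac : a ≠ c) (hbd : b ≠ d) :
    insert d (insert b ((B.erase a).erase c)) ∈ Ms := by
  classical
  obtain ⟨haB, hbB, hX⟩ := mem_nbrs.1 h1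
  obtain ⟨hcB, hdB, hY⟩ := mem_nbrs.1 h2
  have hab : a ≠ b := fun h => hbB (h ▸ haB)
  have had : a ≠ d := fun h => hdB (h ▸ haB)
  have hcb : c ≠ b := fun h => hbB (h ▸ hcB)
  have hcd : c ≠ d := fun h => hdB (h ▸ hcB)
  set X := insert b (B.erase a) with hXdef
  set Y := insert d (B.erase c) with hYdef
  have hbY : b ∉ Y := by
    rw [hYdef]
    simp only [Finset.mem_insert, Finset.mem_erase]
    rintro (rfl | ⟨_, h⟩); exact hbd rfl; exact hbB h
  have hXY : X ≠ Y := fun h => hbY (h ▸ Finset.mem_insert_self b _)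
  have hcX : c ∈ X := by
    rw [hXdef]
    exact Finset.mem_insert_of_mem (Finset.mem_erase.2 ⟨fun h => hac h.symm, hcB⟩)
  have hcY : c ∉ Y := by
    rw [hYdef]
    simp only [Finset.mem_insert, Finset.mem_erase]
    rintro (rfl | ⟨h, _⟩); exact hcd rfl; exact h rfl
  obtain ⟨j, hj, hjins⟩ := hIsM.2.2 X hX Y hY hXY c (Finset.mem_sdiff.2 ⟨hcX, hcY⟩)
  obtain ⟨hjY, hjX⟩ := Finset.mem_sdiff.1 hj
  have hXec : X.erase c = insert b ((B.erase a).erase c) := by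
    rw [hXdef, Finset.erase_insert_of_ne hcb.symm]
  rcases Finset.mem_insert.1 (hYdef ▸ hjY) with rfl | hjBc
  · -- j = d, done
    rwa [hXec] at hjins
  · -- j ∈ B.erase c, j ∉ X forces j = a
    have hjB : j ∈ B := Finset.mem_of_mem_erase hjBc
    have hja : j = a := by
      by_contra hne
      exact hjX (hXdef ▸ Finset.mem_insert_of_mem (Finset.mem_erase.2 ⟨hne, hjB⟩))
    rw [hja] at hjins
    -- we get edge (c, b)
    have hcbedge : (c, b) ∈ nbrs Ms B := by
      refine mem_nbrs.2 ⟨hcB, hbB, ?_⟩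
      have heqq : insert a (X.erase c) = insert b (B.erase c) := by
        rw [hXec]
        ext y
        simp only [Finset.mem_insert, Finset.mem_erase]
        constructor
        · rintro (rfl | rfl | ⟨h1', h2', h3'⟩)
          · exact Or.inr ⟨hac, haB⟩
          · exact Or.inl rfl
          · exact Or.inr ⟨h1', h3'⟩
        · rintro (rfl | ⟨h1', h2'⟩)
          · exact Or.inr (Or.inl rfl)
          · by_cases hya : y = a
            · exact Or.inl hya
            · exact Or.inr (Or.inr ⟨h1', hya, h2'⟩)
      rwa [heqq] at hjins
    -- symmetric exchange from Y
    have haY : a ∈ Y := by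
      rw [hYdef]
      exact Finset.mem_insert_of_mem (Finset.mem_erase.2 ⟨hac, haB⟩)
    have haX : a ∉ X := by
      rw [hXdef]
      simp only [Finset.mem_insert, Finset.mem_erase]
      rintro (rfl | ⟨h, _⟩); exact hab rfl; exact h rfl
    obtain ⟨j', hj', hjins'⟩ := hIsM.2.2 Y hY X hX hXY.symm a (Finset.mem_sdiff.2 ⟨haY, haX⟩)
    obtain ⟨hj'X, hj'Y⟩ := Finset.mem_sdiff.1 hj'
    have hYea : Y.erase a = insert d ((B.erase c).erase a) := by
      rw [hYdef, Finset.erase_insert_of_ne had.symm]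
    rcases Finset.mem_insert.1 (hXdef ▸ hj'X) with rfl | hj'Ba
    · -- j' = b : D ∈ Ms
      have heq : insert j' (Y.erase a) = insert d (insert j' ((B.erase a).erase c)) := by
        rw [hYea]
        ext y
        simp only [Finset.mem_insert, Finset.mem_erase]
        tauto
      rwa [heq] at hjins'
    · -- j' ∈ B.erase a and j' ∉ Y forces j' = c : edge (a,d), contradiction via no4cycle
      have hj'B : j' ∈ B := Finset.mem_of_mem_erase hj'Ba
      have hj'c : j' = c := by
        by_contra hne
        exact hj'Y (hYdef ▸ Finset.mem_insert_of_mem (Finset.mem_erase.2 ⟨hne, hj'B⟩))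
      rw [hj'c] at hjins'
      have hadedge : (a, d) ∈ nbrs Ms B := by
        refine mem_nbrs.2 ⟨haB, hdB, ?_⟩
        have heqq : insert c (Y.erase a) = insert d (B.erase a) := by
          rw [hYea]
          ext y
          simp only [Finset.mem_insert, Finset.mem_erase]
          constructor
          · rintro (rfl | rfl | ⟨h1', h2', h3'⟩)
            · exact Or.inr ⟨fun h => hac h.symm, hcB⟩
            · exact Or.inl rfl
            · exact Or.inr ⟨h1', h3'⟩
          · rintro (rfl | ⟨h1', h2'⟩)
            · exact Or.inr (Or.inl rfl)
            · by_cases hyc : y = c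
              · exact Or.inl hyc
              · exact Or.inr (Or.inr ⟨h1', hyc, h2'⟩)
        rwa [heqq] at hjins'
      exact absurd (no4cycle hIsM hB hcnt hac hbd h1 hadedge hcbedge h2) id

end Factor

section Factor2

variable {kk : ℕ} {Ms : Finset (Finset S)} {JJ : Finset S}

theorem no_double_edge (hIsM : IsMatroid kk Ms) {B : Finset S} (hB : B ∈ Ms)
    (hcnt : ∀ B' ∈ Ms, (nbrs Ms B').card = polyDim (matroidPolytope Ms))
    {a b b' c : S} (h1 : (a, b) ∈ nbrs Ms B) (h2 : (a, b') ∈ nbrs Ms B)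
    (h3 : (c, b) ∈ nbrs Ms B) (hbb : b ≠ b') (hac : a ≠ c) : False := by
  classical
  have haB : a ∈ B := (mem_nbrs.1 h1).1
  have hbB : b ∉ B := (mem_nbrs.1 h1).2.1
  have hb'B : b' ∉ B := (mem_nbrs.1 h2).2.1
  have hcB : c ∈ B := (mem_nbrs.1 h3).1
  have hXab : insert b (B.erase a) ∈ Ms := (mem_nbrs.1 h1).2.2
  have hab : a ≠ b := fun h => hbB (h ▸ haB)
  have hcb : c ≠ b := fun h => hbB (h ▸ hcB)
  have hstep1 : (c, b') ∉ nbrs Ms B := fun h4 =>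
    no4cycle hIsM hB (hcnt B hB) hac hbb h1 h2 h3 h4
  have hD : insert b (insert b' ((B.erase a).erase c)) ∈ Ms :=
    disjointD hIsM hB (hcnt B hB) h2 h3 hac (Ne.symm hbb)
  set B1 := insert b (B.erase a) with hB1
  have hB1M : B1 ∈ Ms := hXab
  have hcB1 : c ∈ B1 := Finset.mem_insert_of_mem (Finset.mem_erase.2 ⟨fun h => hac h.symm, hcB⟩)
  have haB1 : a ∉ B1 := by
    rw [hB1]; simp only [Finset.mem_insert, Finset.mem_erase]
    rintro (rfl | ⟨h, _⟩); exact hab rfl; exact h rfl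
  have hbB1 : b ∈ B1 := Finset.mem_insert_self b _
  have hb'B1 : b' ∉ B1 := by
    rw [hB1]; simp only [Finset.mem_insert, Finset.mem_erase]
    rintro (rfl | ⟨_, h⟩); exact hbb rfl; exact hb'B h
  have hbnotmem : b ∉ B.erase a := fun h => hbB (Finset.mem_of_mem_erase h)
  have hnew : (c, b') ∈ nbrs Ms B1 := by
    refine mem_nbrs.2 ⟨hcB1, hb'B1, ?_⟩
    have heqq : insert b' (B1.erase c) = insert b (insert b' ((B.erase a).erase c)) := by
      rw [hB1, Finset.erase_insert_of_ne hcb.symm]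
      ext y
      simp only [Finset.mem_insert, Finset.mem_erase]
      tauto
    rw [heqq]; exact hD
  set φ : S × S → S × S := fun p =>
    if p.1 = a then (b, if p.2 = b then a else p.2)
    else if p.2 = b then (p.1, a) else p with hφ
  set ψ : S × S → S × S := fun p =>
    if p.1 = b then (a, if p.2 = a then b else p.2)
    else if p.2 = a then (p.1, b) else p with hψ
  have hφval : ∀ x y : S, φ (x, y) =
      if x = a then (b, if y = b then a else y) else if y = b then (x, a) else (x, y) := by
    intro x y; rfl
  have hψval : ∀ x y : S, ψ (x, y) =
      if x = b then (a, if y = a then b else y) else if y = a then (x, b) else (x, y) := by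
    intro x y; rfl
  have hinv : ∀ p ∈ nbrs Ms B, ψ (φ p) = p := by
    rintro ⟨x, y⟩ hp
    have hxB : x ∈ B := (mem_nbrs.1 hp).1
    have hyB : y ∉ B := (mem_nbrs.1 hp).2.1
    have hxb : x ≠ b := fun h => hbB (h ▸ hxB)
    have hya : y ≠ a := fun h => (h ▸ hyB) haB
    by_cases hxa : x = a <;> by_cases hyb : y = b
    · rw [hφval, if_pos hxa, if_pos hyb, hψval, if_pos rfl, if_pos rfl, hxa, hyb]
    · rw [hφval, if_pos hxa, if_neg hyb, hψval, if_pos rfl, if_neg hya, hxa]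
    · rw [hφval, if_neg hxa, if_pos hyb, hψval, if_neg hxb, if_pos rfl, hyb]
    · rw [hφval, if_neg hxa, if_neg hyb, hψval, if_neg hxb, if_neg hya]
  have hmapsto : ∀ p ∈ nbrs Ms B, φ p ∈ (nbrs Ms B1).erase (c, b') := by
    rintro ⟨x, y⟩ hp
    have hxB : x ∈ B := (mem_nbrs.1 hp).1
    have hyB : y ∉ B := (mem_nbrs.1 hp).2.1
    have hXxy : insert y (B.erase x) ∈ Ms := (mem_nbrs.1 hp).2.2
    have hxb : x ≠ b := fun h => hbB (h ▸ hxB)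
    have hya : y ≠ a := fun h => (h ▸ hyB) haB
    by_cases hxa : x = a <;> by_cases hyb : y = b
    · -- p = (a, b) ↦ (b, a)
      rw [hφval, if_pos hxa, if_pos hyb]
      refine Finset.mem_erase.2 ⟨?_, ?_⟩
      · intro h
        exact hbB (((Prod.mk.injEq _ _ _ _ ▸ h : b = c ∧ a = b').1) ▸ hcB)
      · refine mem_nbrs.2 ⟨hbB1, haB1, ?_⟩
        have heqq : insert a (B1.erase b) = B := by
          rw [hB1, Finset.erase_insert hbnotmem]
          ext z
          simp only [Finset.mem_insert, Finset.mem_erase]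
          constructor
          · rintro (rfl | ⟨_, h⟩); exact haB; exact h
          · intro hz
            by_cases hza : z = a
            · exact Or.inl hza
            · exact Or.inr ⟨hza, hz⟩
        rw [heqq]; exact hB
    · -- p = (a, y), y ≠ b ↦ (b, y)
      rw [hφval, if_pos hxa, if_neg hyb]
      refine Finset.mem_erase.2 ⟨?_, ?_⟩
      · intro h
        exact hbB (((Prod.mk.injEq _ _ _ _ ▸ h : b = c ∧ y = b').1) ▸ hcB)
      · refine mem_nbrs.2 ⟨hbB1, (by
          rw [hB1]; simp only [Finset.mem_insert, Finset.mem_erase]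
          rintro (rfl | ⟨_, h⟩); exact hyb rfl; exact hyB h), ?_⟩
        have heqq : insert y (B1.erase b) = insert y (B.erase x) := by
          rw [hB1, Finset.erase_insert hbnotmem, hxa]
        rw [heqq]; exact hXxy
    · -- p = (x, b), x ≠ a ↦ (x, a)
      rw [hφval, if_neg hxa, if_pos hyb]
      refine Finset.mem_erase.2 ⟨?_, ?_⟩
      · intro h
        exact hb'B (((Prod.mk.injEq _ _ _ _ ▸ h : x = c ∧ a = b').2) ▸ haB)
      · refine mem_nbrs.2 ⟨Finset.mem_insert_of_mem (Finset.mem_erase.2 ⟨hxa, hxB⟩),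
          haB1, ?_⟩
        have heqq : insert a (B1.erase x) = insert y (B.erase x) := by
          rw [hB1, Finset.erase_insert_of_ne (fun h : b = x => hbB (h ▸ hxB))]
          subst hyb
          ext z
          simp only [Finset.mem_insert, Finset.mem_erase]
          constructor
          · rintro (rfl | rfl | ⟨h1', h2', h3'⟩)
            · exact Or.inr ⟨fun h => hxa h.symm, haB⟩
            · exact Or.inl rfl
            · exact Or.inr ⟨h1', h3'⟩
          · rintro (rfl | ⟨h1', h2'⟩)
            · exact Or.inr (Or.inl rfl)
            · by_cases hza : z = a
              · exact Or.inl hza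
              · exact Or.inr (Or.inr ⟨h1', hza, h2'⟩)
        rw [heqq]; exact hXxy
    · -- p = (x, y) untouched
      rw [hφval, if_neg hxa, if_neg hyb]
      refine Finset.mem_erase.2 ⟨?_, ?_⟩
      · intro h
        rw [h] at hp
        exact hstep1 hp
      · refine mem_nbrs.2 ⟨Finset.mem_insert_of_mem (Finset.mem_erase.2 ⟨hxa, hxB⟩), (by
          rw [hB1]; simp only [Finset.mem_insert, Finset.mem_erase]
          rintro (rfl | ⟨_, h⟩); exact hyb rfl; exact hyB h), ?_⟩
        have hDxy : insert y (insert b ((B.erase a).erase x)) ∈ Ms :=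
          disjointD hIsM hB (hcnt B hB) h1 hp (fun h => hxa h.symm) (fun h => hyb h.symm)
        have heqq : insert y (B1.erase x) = insert y (insert b ((B.erase a).erase x)) := by
          rw [hB1, Finset.erase_insert_of_ne (fun h : b = x => hbB (h ▸ hxB))]
        rw [heqq]; exact hDxy
  have hinj : Set.InjOn φ ↑(nbrs Ms B) := by
    intro p hp p' hp' h
    rw [← hinv p (Finset.mem_coe.1 hp), ← hinv p' (Finset.mem_coe.1 hp'), h]
  have hle := Finset.card_le_card_of_injOn φ hmapsto hinj
  rw [Finset.card_erase_of_mem hnew, hcnt B hB, hcnt B1 hB1M] at hle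
  have hpos : 1 ≤ (nbrs Ms B).card := Finset.card_pos.2 ⟨_, h1⟩
  rw [hcnt B hB] at hpos
  omega

end Factor2



section Factor3

variable {kk : ℕ} {Ms : Finset (Finset S)} {JJ : Finset S}

theorem factor_classify (hIsM : IsMatroid kk Ms) (hsubJ : ∀ I ∈ Ms, I ⊆ JJ)
    (hdim : polyDim (matroidPolytope Ms) = JJ.card - 1)
    (hcnt : ∀ B ∈ Ms, (nbrs Ms B).card = JJ.card - 1) :
    (∀ C : Finset S, C ⊆ JJ → C.card = kk → C ∈ Ms) ∧
      (kk = 0 ∨ kk = 1 ∨ kk = JJ.card - 1 ∨ kk = JJ.card) := by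
  classical
  obtain ⟨B0, hB0⟩ := hIsM.1
  have hB0k : B0.card = kk := hIsM.2.1 B0 hB0
  have hB0J : B0 ⊆ JJ := hsubJ B0 hB0
  have hkn : kk ≤ JJ.card := hB0k ▸ Finset.card_le_card hB0J
  by_cases hn1 : JJ.card ≤ 1
  · constructor
    · intro C hCJ hCk
      have hCB0 : C = B0 := by
        rcases Nat.eq_zero_or_pos kk with hk0 | hkpos
        · have hC0 : C = ∅ := Finset.card_eq_zero.1 (hCk.trans hk0)
          have hB00 : B0 = ∅ := Finset.card_eq_zero.1 (hB0k.trans hk0)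
          rw [hC0, hB00]
        · have hkk1 : kk = 1 := by omega
          have hJ1 : JJ.card = 1 := by omega
          have h1 : C = JJ := Finset.eq_of_subset_of_card_le hCJ (by omega)
          have h2 : B0 = JJ := Finset.eq_of_subset_of_card_le hB0J (by omega)
          rw [h1, h2]
      rw [hCB0]; exact hB0
    · have : kk ≤ 1 := le_trans hkn hn1
      interval_cases kk
      · exact Or.inl rfl
      · exact Or.inr (Or.inl rfl)
  · have hn2 : 2 ≤ JJ.card := by omega
    have hcntP : ∀ B ∈ Ms, (nbrs Ms B).card = polyDim (matroidPolytope Ms) := by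
      intro B hB; rw [hcnt B hB, hdim]
    have htouch : ∀ x ∈ JJ, ∃ p ∈ nbrs Ms B0, p.1 = x ∨ p.2 = x := fun x hx =>
      vertex_touched hIsM hsubJ hB0 hdim hn2 hx
    set G := nbrs Ms B0 with hG
    set deg : S → ℕ := fun s => (G.filter (fun p => p.1 = s ∨ p.2 = s)).card with hdeg
    have hdeg1 : ∀ x ∈ JJ, 1 ≤ deg x := by
      intro x hx
      obtain ⟨p, hp, hpx⟩ := htouch x hx
      exact Finset.card_pos.2 ⟨p, Finset.mem_filter.2 ⟨hp, hpx⟩⟩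
    have hGJ : ∀ p ∈ G, p.1 ∈ JJ ∧ p.2 ∈ JJ := fun p hp => nbrs_mem_J hsubJ hB0 hp
    have hG12 : ∀ p ∈ G, p.1 ∈ B0 ∧ p.2 ∉ B0 := fun p hp =>
      ⟨(mem_nbrs.1 hp).1, (mem_nbrs.1 hp).2.1⟩
    have hdegsum : ∑ s ∈ JJ, deg s = 2 * G.card := by
      have h1 : ∀ p ∈ G, JJ.filter (fun s => p.1 = s ∨ p.2 = s) = {p.1, p.2} := by
        intro p hp
        ext s
        simp only [Finset.mem_filter, Finset.mem_insert, Finset.mem_singleton]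
        constructor
        · rintro ⟨_, rfl | rfl⟩
          · exact Or.inl rfl
          · exact Or.inr rfl
        · rintro (rfl | rfl)
          · exact ⟨(hGJ p hp).1, Or.inl rfl⟩
          · exact ⟨(hGJ p hp).2, Or.inr rfl⟩
      calc ∑ s ∈ JJ, deg s = ∑ s ∈ JJ, ∑ p ∈ G, (if p.1 = s ∨ p.2 = s then 1 else 0) := by
            refine Finset.sum_congr rfl (fun s _ => ?_)
            rw [hdeg]
            exact Finset.card_filter _ _
        _ = ∑ p ∈ G, ∑ s ∈ JJ, (if p.1 = s ∨ p.2 = s then 1 else 0) := Finset.sum_comm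
        _ = ∑ p ∈ G, (JJ.filter (fun s => p.1 = s ∨ p.2 = s)).card := by
            refine Finset.sum_congr rfl (fun p _ => ?_)
            rw [Finset.card_filter]
        _ = ∑ _p ∈ G, 2 := by
            refine Finset.sum_congr rfl (fun p hp => ?_)
            rw [h1 p hp, Finset.card_insert_of_notMem (by
              simp only [Finset.mem_singleton]
              exact fun h => (hG12 p hp).2 (h ▸ (hG12 p hp).1)), Finset.card_singleton]
        _ = 2 * G.card := by rw [Finset.sum_const, smul_eq_mul, mul_comm]
    have hend : ∀ p ∈ G, deg p.1 = 1 ∨ deg p.2 = 1 := by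
      intro p hp
      by_contra hcon
      push_neg at hcon
      have hd1 : 1 ≤ deg p.1 := Finset.card_pos.2 ⟨p, Finset.mem_filter.2 ⟨hp, Or.inl rfl⟩⟩
      have hd2 : 1 ≤ deg p.2 := Finset.card_pos.2 ⟨p, Finset.mem_filter.2 ⟨hp, Or.inr rfl⟩⟩
      have hd1' : 1 < deg p.1 := lt_of_le_of_ne hd1 (Ne.symm hcon.1)
      have hd2' : 1 < deg p.2 := lt_of_le_of_ne hd2 (Ne.symm hcon.2)
      obtain ⟨q, hq, hqp⟩ := Finset.exists_mem_ne hd1' p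
      obtain ⟨r, hr, hrp⟩ := Finset.exists_mem_ne hd2' p
      obtain ⟨hqG, hq1⟩ := Finset.mem_filter.1 hq
      obtain ⟨hrG, hr1⟩ := Finset.mem_filter.1 hr
      have hq11 : q.1 = p.1 := by
        rcases hq1 with h | h
        · exact h
        · exact absurd ((hG12 p hp).1) (h ▸ (hG12 q hqG).2)
      have hr22 : r.2 = p.2 := by
        rcases hr1 with h | h
        · exact absurd (h ▸ (hG12 r hrG).1) (hG12 p hp).2
        · exact h
      have hq2 : q.2 ≠ p.2 := by
        intro h
        exact hqp (Prod.ext hq11 h)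
      have hr1' : r.1 ≠ p.1 := by
        intro h
        exact hrp (Prod.ext h hr22)
      have hpeq : (p.1, p.2) ∈ G := by rwa [Prod.mk.eta]
      have hqeq : (p.1, q.2) ∈ G := by rwa [← hq11, Prod.mk.eta]
      have hreq : (r.1, p.2) ∈ G := by rwa [← hr22, Prod.mk.eta]
      exact no_double_edge hIsM hB0 hcntP hpeq hqeq hreq (Ne.symm hq2) (Ne.symm hr1')
    have hGcard : G.card = JJ.card - 1 := hcnt B0 hB0
    have hGne : G.Nonempty := Finset.card_pos.1 (by omega)
    obtain ⟨p0, hp0⟩ := hGne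
    have hk1 : 1 ≤ kk := hB0k ▸ Finset.card_pos.2 ⟨p0.1, (hG12 p0 hp0).1⟩
    have hkn1 : kk + 1 ≤ JJ.card := by
      have : B0 ⊂ JJ := Finset.ssubset_iff_of_subset hB0J |>.2
        ⟨p0.2, (hGJ p0 hp0).2, (hG12 p0 hp0).2⟩
      have := Finset.card_lt_card this
      omega
    -- the dichotomy kk = 1 ∨ kk = n - 1
    have hk1n : kk = 1 ∨ kk = JJ.card - 1 := by
      by_contra hcon
      push_neg at hcon
      have h2k : 2 ≤ kk := by omega
      have hk2 : kk + 2 ≤ JJ.card := by omega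
      set L := JJ.filter (fun s => deg s = 1) with hL
      have hLJ : L ⊆ JJ := Finset.filter_subset _ _
      have hGL : G.card ≤ L.card := by
        apply Finset.card_le_card_of_injOn (fun p => if deg p.1 = 1 then p.1 else p.2)
        · intro p hp
          by_cases h : deg p.1 = 1
          · simp only [if_pos h]
            exact Finset.mem_filter.2 ⟨(hGJ p hp).1, h⟩
          · simp only [if_neg h]
            rcases hend p hp with h' | h'
            · exact absurd h' h
            · exact Finset.mem_filter.2 ⟨(hGJ p hp).2, h'⟩
        · intro p hp p' hp' heq
          have hmem : ∀ r ∈ G, ∀ s : S, (if deg r.1 = 1 then r.1 else r.2) = s →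
              r ∈ G.filter (fun t => t.1 = s ∨ t.2 = s) := by
            intro r hrG s hs
            refine Finset.mem_filter.2 ⟨hrG, ?_⟩
            by_cases h : deg r.1 = 1
            · rw [if_pos h] at hs; exact Or.inl hs
            · rw [if_neg h] at hs; exact Or.inr hs
          set s := if deg p.1 = 1 then p.1 else p.2 with hs
          have hdegs : deg s = 1 := by
            by_cases h : deg p.1 = 1
            · rw [hs, if_pos h]; exact h
            · rw [hs, if_neg h]
              rcases hend p (Finset.mem_coe.1 hp) with h' | h'
              · exact absurd h' h
              · exact h'
          have h1 := hmem p (Finset.mem_coe.1 hp) s rfl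
          have h2 := hmem p' (Finset.mem_coe.1 hp') s heq.symm
          have : (G.filter (fun t => t.1 = s ∨ t.2 = s)).card ≤ 1 := le_of_eq hdegs
          exact Finset.card_le_one_iff.1 this h1 h2
      rcases Finset.eq_empty_or_nonempty (JJ \ L) with hT | ⟨h, hh⟩
      · -- all degrees 1
        have hJL : JJ ⊆ L := by
          intro x hx
          by_contra hxL
          exact absurd (Finset.mem_sdiff.2 ⟨hx, hxL⟩) (hT ▸ Finset.notMem_empty x)
        have : ∑ s ∈ JJ, deg s = JJ.card := by
          rw [Finset.card_eq_sum_ones JJ]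
          exact Finset.sum_congr rfl (fun s hsJ => (Finset.mem_filter.1 (hJL hsJ)).2)
        omega
      · have hhJ : h ∈ JJ := (Finset.mem_sdiff.1 hh).1
        have hhL : h ∉ L := (Finset.mem_sdiff.1 hh).2
        have hLcard : L.card = JJ.card - 1 := by
          have h1 : L.card ≤ JJ.card - 1 := by
            have := Finset.card_lt_card (Finset.ssubset_iff_of_subset hLJ |>.2 ⟨h, hhJ, hhL⟩)
            omega
          omega
        have hsingle : JJ \ L = {h} := by
          apply Finset.eq_singleton_iff_unique_mem.2
          refine ⟨hh, fun x hx => ?_⟩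
          by_contra hne
          have h2x : ({h, x} : Finset S) ⊆ JJ \ L := by
            intro z hz
            rcases Finset.mem_insert.1 hz with rfl | hz
            · exact hh
            · rw [Finset.mem_singleton.1 hz]; exact hx
          have : ({h, x} : Finset S).card ≤ (JJ \ L).card := Finset.card_le_card h2x
          rw [Finset.card_insert_of_notMem (by simp [Ne.symm hne]),
            Finset.card_singleton, Finset.card_sdiff_of_subset hLJ, hLcard] at this
          omega
        have hdegh : deg h = JJ.card - 1 := by
          have hsplit : ∑ s ∈ JJ \ L, deg s + ∑ s ∈ L, deg s = ∑ s ∈ JJ, deg s :=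
            Finset.sum_sdiff hLJ
          have hLsum : ∑ s ∈ L, deg s = L.card := by
            rw [Finset.card_eq_sum_ones L]
            exact Finset.sum_congr rfl (fun s hsL => (Finset.mem_filter.1 hsL).2)
          rw [hsingle, Finset.sum_singleton, hLsum, hdegsum, hGcard, hLcard] at hsplit
          omega
        -- contradiction via degree bound
        by_cases hhB : h ∈ B0
        · have hbound : deg h ≤ (JJ \ B0).card := by
            apply Finset.card_le_card_of_injOn (fun p => p.2)
            · intro p hp
              obtain ⟨hpG, hp1⟩ := Finset.mem_filter.1 hp
              exact Finset.mem_sdiff.2 ⟨(hGJ p hpG).2, (hG12 p hpG).2⟩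
            · intro p hp p' hp' heq
              obtain ⟨hpG, hp1⟩ := Finset.mem_filter.1 (Finset.mem_coe.1 hp)
              obtain ⟨hpG', hp1'⟩ := Finset.mem_filter.1 (Finset.mem_coe.1 hp')
              have e1 : p.1 = h := by
                rcases hp1 with h' | h'
                · exact h'
                · exact absurd hhB (h' ▸ (hG12 p hpG).2)
              have e2 : p'.1 = h := by
                rcases hp1' with h' | h'
                · exact h'
                · exact absurd hhB (h' ▸ (hG12 p' hpG').2)
              exact Prod.ext (e1.trans e2.symm) heq
          rw [Finset.card_sdiff_of_subset hB0J, hB0k] at hbound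
          omega
        · have hbound : deg h ≤ B0.card := by
            apply Finset.card_le_card_of_injOn (fun p => p.1)
            · intro p hp
              obtain ⟨hpG, _⟩ := Finset.mem_filter.1 hp
              exact (hG12 p hpG).1
            · intro p hp p' hp' heq
              obtain ⟨hpG, hp1⟩ := Finset.mem_filter.1 (Finset.mem_coe.1 hp)
              obtain ⟨hpG', hp1'⟩ := Finset.mem_filter.1 (Finset.mem_coe.1 hp')
              have e1 : p.2 = h := by
                rcases hp1 with h' | h'
                · exact absurd (h' ▸ (hG12 p hpG).1) hhB
                · exact h'
              have e2 : p'.2 = h := by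
                rcases hp1' with h' | h'
                · exact absurd (h' ▸ (hG12 p' hpG').1) hhB
                · exact h'
              exact Prod.ext heq (e1.trans e2.symm)
          rw [hB0k] at hbound
          omega
    -- uniformity
    constructor
    · intro C hCJ hCk
      rcases hk1n with hk | hk
      · -- kk = 1
        obtain ⟨x, rfl⟩ := Finset.card_eq_one.1 (hk ▸ hCk)
        have hxJ : x ∈ JJ := hCJ (Finset.mem_singleton_self x)
        obtain ⟨z, hz⟩ := Finset.card_eq_one.1 (hk ▸ hB0k)
        obtain ⟨p, hp, hpx⟩ := htouch x hxJ
        have hp1z : p.1 = z := by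
          have := (hG12 p hp).1
          rw [hz] at this
          exact Finset.mem_singleton.1 this
        rcases hpx with h | h
        · rw [← h, hp1z, ← hz]; exact hB0
        · have := (mem_nbrs.1 hp).2.2
          have heq : insert p.2 (B0.erase p.1) = {x} := by
            rw [hz, hp1z, Finset.erase_singleton, h]
            rfl
          rwa [heq] at this
      · -- kk = JJ.card - 1
        have hCkn : C.card = JJ.card - 1 := hk ▸ hCk
        obtain ⟨x, hxJ, hxC⟩ : ∃ x ∈ JJ, x ∉ C := by
          by_contra hcon
          push_neg at hcon
          have : JJ ⊆ C := hcon
          have := Finset.card_le_card this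
          omega
        have hCx : C = JJ.erase x := by
          apply Finset.eq_of_subset_of_card_le
          · intro y hy
            exact Finset.mem_erase.2 ⟨fun h => hxC (h ▸ hy), hCJ hy⟩
          · rw [Finset.card_erase_of_mem hxJ]
            omega
        obtain ⟨x0, hx0J, hx0B⟩ : ∃ x0 ∈ JJ, x0 ∉ B0 := by
          by_contra hcon
          push_neg at hcon
          have := Finset.card_le_card (hcon : JJ ⊆ B0)
          omega
        have hB0x : B0 = JJ.erase x0 := by
          apply Finset.eq_of_subset_of_card_le
          · intro y hy
            exact Finset.mem_erase.2 ⟨fun h => hx0B (h ▸ hy), hB0J hy⟩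
          · rw [Finset.card_erase_of_mem hx0J, hB0k]
            omega
        by_cases hxx0 : x = x0
        · rw [hCx, hxx0, ← hB0x]; exact hB0
        · have hxB0 : x ∈ B0 := by
            rw [hB0x]; exact Finset.mem_erase.2 ⟨hxx0, hxJ⟩
          obtain ⟨p, hp, hpx⟩ := htouch x hxJ
          have hp1 : p.1 = x := by
            rcases hpx with h | h
            · exact h
            · exact absurd (h ▸ hxB0) (hG12 p hp).2
          have hp2 : p.2 = x0 := by
            have h1 := (hGJ p hp).2
            have h2 := (hG12 p hp).2
            rw [hB0x] at h2
            by_contra hne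
            exact h2 (Finset.mem_erase.2 ⟨hne, h1⟩)
          have hins := (mem_nbrs.1 hp).2.2
          have heq : insert p.2 (B0.erase p.1) = JJ.erase x := by
            rw [hp1, hp2]
            ext y
            simp only [Finset.mem_insert, Finset.mem_erase]
            constructor
            · rintro (rfl | ⟨h1', h2'⟩)
              · exact ⟨fun h => hx0B (h ▸ hxB0), hx0J⟩
              · exact ⟨h1', hB0J h2'⟩
            · rintro ⟨h1', h2'⟩
              by_cases hy0 : y = x0
              · exact Or.inl hy0
              · exact Or.inr ⟨h1', by rw [hB0x]; exact Finset.mem_erase.2 ⟨hy0, h2'⟩⟩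
          rw [heq] at hins
          rwa [hCx]
    · rcases hk1n with hk | hk
      · exact Or.inr (Or.inl hk)
      · exact Or.inr (Or.inr (Or.inl hk))

end Factor3

end SimpleAux

/-- **Theorem B / Theorem 1.3.** If a matroid polytope, decomposed into a product
`Δ_M = Δ_{M_1} × ⋯ × Δ_{M_q}` along a partition `(J_1, …, J_q)` of `S` as in the decomposition
theorem (the product of polytopes supported on the disjoint coordinate subspaces `ℝ^{J_i}` being
the set of sums), is simple, then each factor `Δ_{M_i}` is the full hypersimplex `Δ_{J_i,k_i}`
and `k_i ∈ {0, 1, |J_i| − 1, |J_i|}`. -/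
theorem simple_matroid_polytope_is_product_of_simplices
    (S : Type) [Fintype S] [DecidableEq S] (k q : ℕ)
    (M : Finset (Finset S)) (hM : IsMatroid k M)
    (hdim : polyDim (matroidPolytope M) + q = Fintype.card S)
    (J : Fin q → Finset S) (ks : Fin q → ℕ) (Ms : Fin q → Finset (Finset S))
    (hpart : ∀ x : S, ∃! i, x ∈ J i)
    (hMs : ∀ i, IsMatroid (ks i) (Ms i))
    (hsub : ∀ i, ∀ I ∈ Ms i, I ⊆ J i)
    (hks : ∑ i, ks i = k)
    (hprod : matroidPolytope M =
      {x | ∃ y : Fin q → (S → ℝ), (∀ i, y i ∈ matroidPolytope (Ms i)) ∧ x = ∑ i, y i})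
    (hdims : ∀ i, polyDim (matroidPolytope (Ms i)) = (J i).card - 1)
    (hsimple : IsSimplePolytope (matroidPolytope M)) :
    ∀ i, matroidPolytope (Ms i) = hypersimplexOn (J i) (ks i) ∧
      (ks i = 0 ∨ ks i = 1 ∨ ks i = (J i).card - 1 ∨ ks i = (J i).card) := by
  classical
  intro i
  have hmmi := SimpleAux.mem_M_iff hM hMs hsub hpart hprod
  have hchoose : ∀ j, ∃ B, B ∈ Ms j := fun j => (hMs j).1
  have hcardS : ∑ j, (J j).card = Fintype.card S := by
    have hdisj : ∀ j ∈ (Finset.univ : Finset (Fin q)), ∀ j' ∈ (Finset.univ : Finset (Fin q)),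
        j ≠ j' → Disjoint (J j) (J j') := by
      intro j _ j' _ hjj
      rw [Finset.disjoint_left]
      intro x hx hx'
      exact hjj ((hpart x).unique hx hx')
    have huniv : Finset.univ.biUnion J = Finset.univ := by
      ext x
      simp only [Finset.mem_biUnion, Finset.mem_univ, true_and, iff_true]
      obtain ⟨j, hj, _⟩ := hpart x
      exact ⟨j, hj⟩
    rw [← Finset.card_biUnion hdisj, huniv, Finset.card_univ]
  have key : ∀ B ∈ Ms i, (SimpleAux.nbrs (Ms i) B).card = (J i).card - 1 := by
    intro B hBi
    set g : Fin q → Finset S := fun j => if j = i then B else (hchoose j).choose with hg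
    have hgval : ∀ j, g j = if j = i then B else (hchoose j).choose := fun j => rfl
    have hgmem : ∀ j, g j ∈ Ms j := by
      intro j
      rw [hgval j]
      by_cases h : j = i
      · rw [if_pos h, h]; exact hBi
      · rw [if_neg h]; exact (hchoose j).choose_spec
    have hgsub : ∀ j, g j ⊆ J j := fun j => hsub j _ (hgmem j)
    set I : Finset S := Finset.univ.biUnion g with hI
    have hIJ : ∀ j, I ∩ J j = g j := by
      intro j
      ext x
      simp only [hI, Finset.mem_inter, Finset.mem_biUnion, Finset.mem_univ, true_and]
      constructor
      · rintro ⟨⟨j', hj'⟩, hxJ⟩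
        have hjj : j' = j := (hpart x).unique (hgsub j' hj') hxJ
        rwa [← hjj]
      · intro hx
        exact ⟨⟨j, hx⟩, hgsub j hx⟩
    have hIM : I ∈ M := (hmmi I).2 (fun j => (hIJ j).symm ▸ hgmem j)
    have hsimpI := hsimple (delta I) (SimpleAux.delta_extreme hIM)
    have hub := SimpleAux.nbrs_card_le hM.2.1 hIM hsimpI
    have hdecomp := SimpleAux.nbrs_decomp hM hMs hsub hpart hprod hIM
    have hdecomp' : (SimpleAux.nbrs M I).card = ∑ j, (SimpleAux.nbrs (Ms j) (g j)).card := by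
      rw [hdecomp]
      exact Finset.sum_congr rfl (fun j _ => by rw [hIJ j])
    have hlb : ∀ j, (J j).card - 1 ≤ (SimpleAux.nbrs (Ms j) (g j)).card := by
      intro j
      have h := SimpleAux.polyDim_le_nbrs (hMs j) (hgmem j)
      rwa [hdims j] at h
    have hchain : ∑ j, (SimpleAux.nbrs (Ms j) (g j)).card ≤ Fintype.card S - q := by
      rw [← hdecomp']
      omega
    have hqS : q ≤ Fintype.card S := by omega
    have hpos : ∀ j, 1 ≤ (J j).card := by
      by_contra hcon
      push_neg at hcon
      obtain ⟨j0, hj0⟩ := hcon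
      have hstrict : ∑ j, (J j).card < ∑ j, (((J j).card - 1) + 1) := by
        apply Finset.sum_lt_sum
        · intro j _; omega
        · exact ⟨j0, Finset.mem_univ j0, by omega⟩
      have h2 : ∑ j, (((J j).card - 1) + 1) = (∑ j, ((J j).card - 1)) + q := by
        rw [Finset.sum_add_distrib, Finset.sum_const, Finset.card_univ, Fintype.card_fin,
          smul_eq_mul, mul_one]
      have h3 : ∑ j, ((J j).card - 1) ≤ ∑ j, (SimpleAux.nbrs (Ms j) (g j)).card :=
        Finset.sum_le_sum (fun j _ => hlb j)
      omega
    have hsum1 : (∑ j, ((J j).card - 1)) + q = Fintype.card S := by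
      have h4 : ∑ j, (((J j).card - 1) + 1) = ∑ j, (J j).card :=
        Finset.sum_congr rfl (fun j _ => by have := hpos j; omega)
      have h2 : ∑ j, (((J j).card - 1) + 1) = (∑ j, ((J j).card - 1)) + q := by
        rw [Finset.sum_add_distrib, Finset.sum_const, Finset.card_univ, Fintype.card_fin,
          smul_eq_mul, mul_one]
      omega
    have hsums : ∑ j, ((J j).card - 1) = ∑ j, (SimpleAux.nbrs (Ms j) (g j)).card := by
      have h3 : ∑ j, ((J j).card - 1) ≤ ∑ j, (SimpleAux.nbrs (Ms j) (g j)).card :=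
        Finset.sum_le_sum (fun j _ => hlb j)
      omega
    have heq := (Finset.sum_eq_sum_iff_of_le (fun j _ => hlb j)).1 hsums i (Finset.mem_univ i)
    have hgi : g i = B := by rw [hgval i, if_pos rfl]
    rw [hgi] at heq
    exact heq.symm
  have hclass := SimpleAux.factor_classify (hMs i) (hsub i) (hdims i) key
  constructor
  · have hset : ((Ms i : Finset (Finset S)) : Set (Finset S))
        = {B : Finset S | B ⊆ J i ∧ B.card = ks i} := by
      ext B
      constructor
      · intro hB
        exact ⟨hsub i B (Finset.mem_coe.1 hB), (hMs i).2.1 B (Finset.mem_coe.1 hB)⟩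
      · rintro ⟨h1, h2⟩
        exact Finset.mem_coe.2 (hclass.1 B h1 h2)
    rw [matroidPolytope, hypersimplexOn, hset]
  · exact hclass.2
end

section
/- Let k ≥ 2 and n − k ≥ 2, and let Δ be the matroid polytope of a matroid of rank k on [n] with dim Δ = n − 1. If v is a simple vertex of Δ, then there exists a vertex of Δ joined to v by an edge of Δ that is not a simple vertex of Δ. -/
open Finset Module

section Found
variable {n : ℕ}

lemma delta_apply {B : Finset (Fin n)} {i : Fin n} : delta B i = if i ∈ B then 1 else 0 := rfl

lemma delta_inj : Function.Injective (delta (S := Fin n)) := by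
  intro A B h
  ext i
  have := congrFun h i
  simp only [delta] at this
  by_cases hA : i ∈ A <;> by_cases hB : i ∈ B <;> simp_all

lemma delta_eq_sum (B : Finset (Fin n)) : delta B = ∑ i ∈ B, Pi.single i (1:ℝ) := by
  funext j
  rw [Finset.sum_apply]
  simp only [delta, Pi.single_apply]
  rw [Finset.sum_ite_eq B j (fun _ => (1:ℝ))]

lemma single_eq_smul (i : Fin n) (t : ℝ) :
    Pi.single i t = t • (Pi.single i (1:ℝ) : Fin n → ℝ) := by
  funext j
  by_cases h : j = i <;> simp [Pi.single_apply, h]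

lemma lin_delta (l : (Fin n → ℝ) →L[ℝ] ℝ) (B : Finset (Fin n)) :
    l (delta B) = ∑ i ∈ B, l (Pi.single i 1) := by
  rw [delta_eq_sum, map_sum]

lemma lin_apply_eq_sum (l : (Fin n → ℝ) →L[ℝ] ℝ) (x : Fin n → ℝ) :
    l x = ∑ i, x i * l (Pi.single i 1) := by
  conv_lhs => rw [show x = ∑ i, Pi.single i (x i) from (Finset.univ_sum_single x).symm]
  rw [map_sum]
  congr 1; funext i
  rw [single_eq_smul i (x i), map_smul, smul_eq_mul]

noncomputable def lin (c : Fin n → ℝ) : (Fin n → ℝ) →L[ℝ] ℝ :=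
  LinearMap.toContinuousLinearMap (∑ i, c i • LinearMap.proj (R := ℝ) (φ := fun _ : Fin n => ℝ) i)

lemma lin_apply (c : Fin n → ℝ) (x : Fin n → ℝ) : lin c x = ∑ i, c i * x i := by
  simp [lin, LinearMap.sum_apply, LinearMap.smul_apply, LinearMap.proj_apply, smul_eq_mul]

lemma lin_delta' (c : Fin n → ℝ) (B : Finset (Fin n)) : lin c (delta B) = ∑ i ∈ B, c i := by
  rw [lin_apply]
  rw [show ∑ i, c i * delta B i = ∑ i, if i ∈ B then c i else 0 by
    congr 1; funext i; simp only [delta]; split <;> simp]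
  simp [Finset.sum_ite_mem, Finset.univ_inter]

end Found


section Face
variable {n : ℕ}

lemma hull_le {F : Finset (Fin n → ℝ)} {l : (Fin n → ℝ) →L[ℝ] ℝ} {m : ℝ}
    (hub : ∀ p ∈ F, l p ≤ m) {x : Fin n → ℝ} (hx : x ∈ convexHull ℝ (F : Set (Fin n → ℝ))) :
    l x ≤ m := by
  have : convexHull ℝ (F : Set (Fin n → ℝ)) ⊆ {z | l z ≤ m} :=
    convexHull_min (fun p hp => hub p hp) (convex_halfSpace_le (l.toLinearMap.isLinear) m)
  exact this hx

lemma face_eq (F : Finset (Fin n → ℝ)) (l : (Fin n → ℝ) →L[ℝ] ℝ) (m : ℝ)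
    (hub : ∀ p ∈ F, l p ≤ m) (hex : ∃ p ∈ F, l p = m) :
    {x ∈ convexHull ℝ (F : Set (Fin n → ℝ)) |
        ∀ y ∈ convexHull ℝ (F : Set (Fin n → ℝ)), l y ≤ l x}
      = convexHull ℝ ((F.filter (fun p => l p = m)) : Set (Fin n → ℝ)) := by
  set P := convexHull ℝ (F : Set (Fin n → ℝ)) with hP
  set F' := F.filter (fun p => l p = m) with hF'
  apply Set.Subset.antisymm
  · rintro x ⟨hxP, hmax⟩
    obtain ⟨p0, hp0F, hp0⟩ := hex
    have hp0P : p0 ∈ P := subset_convexHull ℝ _ (by exact_mod_cast hp0F)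
    have hxm : l x = m := le_antisymm (hull_le hub hxP) (hp0 ▸ hmax p0 hp0P)
    rw [hP, Finset.convexHull_eq] at hxP
    obtain ⟨w, hw0, hw1, hwx⟩ := hxP
    have hxsum : x = ∑ y ∈ F, w y • y := by
      rw [← hwx, Finset.centerMass_eq_of_sum_1 _ _ hw1]; rfl
    have hlx : ∑ y ∈ F, w y * (m - l y) = 0 := by
      have : l x = ∑ y ∈ F, w y * l y := by
        rw [hxsum, map_sum]; congr 1; funext y; rw [map_smul]; rfl
      have h2 : ∑ y ∈ F, w y * (m - l y) = (∑ y ∈ F, w y) * m - ∑ y ∈ F, w y * l y := by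
        rw [Finset.sum_mul, ← Finset.sum_sub_distrib]; congr 1; funext y; ring
      rw [h2, hw1, ← this, hxm]; ring
    have hzero : ∀ y ∈ F, w y * (m - l y) = 0 := by
      intro y hy
      have := (Finset.sum_eq_zero_iff_of_nonneg (fun y hy => by
        have := hub y hy; have := hw0 y hy; nlinarith)).1 hlx
      exact this y hy
    have hkey : ∀ y ∈ F, y ∉ F' → w y = 0 := by
      intro y hy hy'
      have hne : l y ≠ m := by
        intro h; exact hy' (Finset.mem_filter.2 ⟨hy, h⟩)
      have := hzero y hy
      rcases mul_eq_zero.1 this with h | h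
      · exact h
      · exact absurd (by linarith [sub_eq_zero.1 h]) hne
    have hsum' : ∑ y ∈ F', w y = 1 := by
      rw [← hw1]; exact (Finset.sum_subset (Finset.filter_subset _ _)
        (fun y hy hy' => hkey y hy hy')).symm ▸ rfl
    have hx' : x = ∑ y ∈ F', w y • y := by
      rw [hxsum]
      exact (Finset.sum_subset (Finset.filter_subset _ _)
        (fun y hy hy' => by rw [hkey y hy hy', zero_smul])).symm
    rw [hx']
    have := Finset.centerMass_mem_convexHull (t := F') (w := w)
      (fun y hy => hw0 y (Finset.filter_subset _ _ hy)) (by rw [hsum']; norm_num)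
      (z := id) (fun y hy => by exact Finset.mem_coe.2 hy)
    rwa [Finset.centerMass_eq_of_sum_1 _ _ hsum'] at this
  · intro x hx
    have hxP : x ∈ P := convexHull_mono (by exact_mod_cast Finset.filter_subset _ _) hx
    have hxm : l x = m := by
      have : convexHull ℝ (F' : Set (Fin n → ℝ)) ⊆ {z | l z = m} := by
        apply convexHull_min
        · intro p hp; exact (Finset.mem_filter.1 (Finset.mem_coe.1 hp)).2
        · exact convex_hyperplane (l.toLinearMap.isLinear) m
      exact this hx
    exact ⟨hxP, fun y hy => by rw [hxm]; exact hull_le hub hy⟩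

lemma extreme_of_strictmax {F : Finset (Fin n → ℝ)} {l : (Fin n → ℝ) →L[ℝ] ℝ}
    {p : Fin n → ℝ} (hp : p ∈ F) (hstrict : ∀ q ∈ F, q ≠ p → l q < l p) :
    p ∈ Set.extremePoints ℝ (convexHull ℝ (F : Set (Fin n → ℝ))) := by
  have hub : ∀ q ∈ F, l q ≤ l p := fun q hq => by
    by_cases h : q = p
    · rw [h]
    · exact le_of_lt (hstrict q hq h)
  have hfil : F.filter (fun q => l q = l p) = {p} := by
    apply Finset.eq_singleton_iff_unique_mem.2
    constructor
    · exact Finset.mem_filter.2 ⟨hp, rfl⟩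
    · intro q hq
      obtain ⟨hqF, hql⟩ := Finset.mem_filter.1 hq
      by_contra h
      exact absurd hql (ne_of_lt (hstrict q hqF h))
  have hface := face_eq F l (l p) hub ⟨p, hp, rfl⟩
  rw [hfil] at hface
  simp only [Finset.coe_singleton, convexHull_singleton] at hface
  have hexp : IsExposed ℝ (convexHull ℝ (F : Set (Fin n → ℝ))) {p} := by
    intro _; exact ⟨l, hface.symm⟩
  rw [← isExtreme_singleton]
  exact hexp.isExtreme
end Face


section Xch
variable {n : ℕ}

def xch (B : Finset (Fin n)) (b c : Fin n) : Finset (Fin n) := insert c (B.erase b)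

lemma mem_xch {B : Finset (Fin n)} {b c i : Fin n} :
    i ∈ xch B b c ↔ i = c ∨ (i ≠ b ∧ i ∈ B) := by
  simp [xch, Finset.mem_insert, Finset.mem_erase]

lemma xch_card {B : Finset (Fin n)} {b c : Fin n} (hb : b ∈ B) (hc : c ∉ B) :
    (xch B b c).card = B.card := by
  rw [xch, Finset.card_insert_of_notMem (fun h => hc (Finset.mem_of_mem_erase h)),
    Finset.card_erase_of_mem hb]
  have : 1 ≤ B.card := Finset.card_pos.2 ⟨b, hb⟩
  omega

lemma mem_xch_self {B : Finset (Fin n)} {b c : Fin n} : c ∈ xch B b c := by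
  simp [mem_xch]

lemma xch_sdiff {B : Finset (Fin n)} {b c : Fin n} (hb : b ∈ B) (hc : c ∉ B) :
    xch B b c \ B = {c} := by
  ext i
  simp only [Finset.mem_sdiff, mem_xch, Finset.mem_singleton]
  constructor
  · rintro ⟨h1 | h1, h2⟩
    · exact h1
    · exact absurd h1.2 h2
  · rintro rfl; exact ⟨Or.inl rfl, hc⟩

lemma sdiff_xch {B : Finset (Fin n)} {b c : Fin n} (hb : b ∈ B) (hc : c ∉ B) :
    B \ xch B b c = {b} := by
  ext i
  simp only [Finset.mem_sdiff, mem_xch, Finset.mem_singleton]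
  constructor
  · rintro ⟨h1, h2⟩
    push_neg at h2
    by_contra hne
    exact (h2.2 hne) h1
  · rintro rfl
    refine ⟨hb, ?_⟩
    push_neg
    exact ⟨fun h => hc (h ▸ hb), fun h => absurd rfl h⟩

lemma eq_xch_of_sdiffs {A B : Finset (Fin n)} {b c : Fin n} (hcard : A.card = B.card)
    (h1 : B \ A = {b}) (h2 : A \ B = {c}) : A = xch B b c := by
  have hb : b ∈ B ∧ b ∉ A := by
    have : b ∈ B \ A := h1 ▸ Finset.mem_singleton_self b
    exact ⟨(Finset.mem_sdiff.1 this).1, (Finset.mem_sdiff.1 this).2⟩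
  have hc : c ∈ A ∧ c ∉ B := by
    have : c ∈ A \ B := h2 ▸ Finset.mem_singleton_self c
    exact ⟨(Finset.mem_sdiff.1 this).1, (Finset.mem_sdiff.1 this).2⟩
  ext i
  rw [mem_xch]
  constructor
  · intro hiA
    by_cases hiB : i ∈ B
    · right
      refine ⟨fun h => hb.2 (h ▸ hiA), hiB⟩
    · left
      have : i ∈ A \ B := Finset.mem_sdiff.2 ⟨hiA, hiB⟩
      rwa [h2, Finset.mem_singleton] at this
  · rintro (rfl | ⟨hib, hiB⟩)
    · exact hc.1
    · by_contra hiA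
      have : i ∈ B \ A := Finset.mem_sdiff.2 ⟨hiB, hiA⟩
      rw [h1, Finset.mem_singleton] at this
      exact hib this

variable {k : ℕ} {M : Finset (Finset (Fin n))}

lemma exchange (hM : IsMatroid k M) {B D : Finset (Fin n)} (hB : B ∈ M) (hD : D ∈ M)
    (hne : B ≠ D) {b : Fin n} (hb : b ∈ B \ D) : ∃ d ∈ D \ B, xch B b d ∈ M :=
  hM.2.2 B hB D hD hne b hb

lemma sdiff_card_eq (hM : IsMatroid k M) {B D : Finset (Fin n)} (hB : B ∈ M) (hD : D ∈ M) :
    (B \ D).card = (D \ B).card := by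
  have h1 := hM.2.1 B hB
  have h2 := hM.2.1 D hD
  have e1 := Finset.card_sdiff_add_card_inter B D
  have e2 := Finset.card_sdiff_add_card_inter D B
  rw [Finset.inter_comm D B] at e2
  omega

lemma sdiff_nonempty_of_ne (hM : IsMatroid k M) {B D : Finset (Fin n)} (hB : B ∈ M)
    (hD : D ∈ M) (hne : B ≠ D) : (B \ D).Nonempty := by
  rw [Finset.sdiff_nonempty]
  intro hsub
  exact hne (Finset.eq_of_subset_of_card_le hsub
    (le_of_eq ((hM.2.1 D hD).trans (hM.2.1 B hB).symm)))

def nb (M : Finset (Finset (Fin n))) (B : Finset (Fin n)) : Finset (Finset (Fin n)) :=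
  M.filter (fun A => (B \ A).card = 1 ∧ (A \ B).card = 1)

def pairs (M : Finset (Finset (Fin n))) (B : Finset (Fin n)) : Finset (Fin n × Fin n) :=
  (Finset.univ ×ˢ Finset.univ).filter
    (fun p => p.1 ∈ B ∧ p.2 ∉ B ∧ xch B p.1 p.2 ∈ M)

lemma mem_pairs {B : Finset (Fin n)} {p : Fin n × Fin n} :
    p ∈ pairs M B ↔ p.1 ∈ B ∧ p.2 ∉ B ∧ xch B p.1 p.2 ∈ M := by
  simp [pairs]

lemma xch_mem_nb (hM : IsMatroid k M) {B : Finset (Fin n)} (hB : B ∈ M) {b c : Fin n}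
    (hb : b ∈ B) (hc : c ∉ B) (hx : xch B b c ∈ M) : xch B b c ∈ nb M B := by
  refine Finset.mem_filter.2 ⟨hx, ?_, ?_⟩
  · rw [sdiff_xch hb hc]; rfl
  · rw [xch_sdiff hb hc]; rfl

lemma nb_pair (hM : IsMatroid k M) {B A : Finset (Fin n)} (hB : B ∈ M) (hA : A ∈ nb M B) :
    ∃ b c, b ∈ B ∧ c ∉ B ∧ A = xch B b c ∧ xch B b c ∈ M := by
  obtain ⟨hAM, h1, h2⟩ := Finset.mem_filter.1 hA
  obtain ⟨b, hb⟩ := Finset.card_eq_one.1 h1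
  obtain ⟨c, hc⟩ := Finset.card_eq_one.1 h2
  have hcard : A.card = B.card := (hM.2.1 A hAM).trans (hM.2.1 B hB).symm
  have hAx := eq_xch_of_sdiffs hcard hb hc
  have hbB : b ∈ B := (Finset.mem_sdiff.1 (hb ▸ Finset.mem_singleton_self b)).1
  have hcB : c ∉ B := (Finset.mem_sdiff.1 (hc ▸ Finset.mem_singleton_self c)).2
  exact ⟨b, c, hbB, hcB, hAx, hAx ▸ hAM⟩

lemma pairs_card (hM : IsMatroid k M) {B : Finset (Fin n)} (hB : B ∈ M) :
    (pairs M B).card = (nb M B).card := by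
  apply Finset.card_bij (fun p _ => xch B p.1 p.2)
  · intro p hp
    obtain ⟨h1, h2, h3⟩ := mem_pairs.1 hp
    exact xch_mem_nb hM hB h1 h2 h3
  · intro p hp q hq hpq
    obtain ⟨h1, h2, h3⟩ := mem_pairs.1 hp
    obtain ⟨g1, g2, g3⟩ := mem_pairs.1 hq
    have hc : p.2 = q.2 := by
      have e1 := xch_sdiff h1 h2
      have e2 := xch_sdiff g1 g2
      rw [hpq] at e1
      rw [e1] at e2
      exact (Finset.singleton_inj.1 e2.symm).symm
    have hb : p.1 = q.1 := by
      have e1 := sdiff_xch h1 h2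
      have e2 := sdiff_xch g1 g2
      rw [hpq] at e1
      rw [e1] at e2
      exact (Finset.singleton_inj.1 e2.symm).symm
    exact Prod.ext hb hc
  · intro A hA
    obtain ⟨b, c, hb, hc, hAx, hxM⟩ := nb_pair hM hB hA
    exact ⟨(b, c), mem_pairs.2 ⟨hb, hc, hxM⟩, hAx.symm⟩

end Xch

section Mat
variable {n k : ℕ} {M : Finset (Finset (Fin n))}

/-- Finset-level augmentation. -/
lemma finset_aug (hM : IsMatroid k M) (I J : Finset (Fin n))
    (hI : ∃ A ∈ M, I ⊆ A) (hJ : ∃ A ∈ M, J ⊆ A) (hlt : I.card < J.card) :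
    ∃ x ∈ J, x ∉ I ∧ ∃ A ∈ M, insert x I ⊆ A := by
  obtain ⟨B, hBM, hJB⟩ := hJ
  -- candidates containing I
  classical
  set C := M.filter (fun A => I ⊆ A) with hC
  have hCne : C.Nonempty := by
    obtain ⟨A, hAM, hIA⟩ := hI
    exact ⟨A, Finset.mem_filter.2 ⟨hAM, hIA⟩⟩
  obtain ⟨A, hAC, hAmax⟩ := Finset.exists_max_image C (fun A => (A ∩ B).card) hCne
  obtain ⟨hAM, hIA⟩ := Finset.mem_filter.1 hAC
  by_cases hcase : ∃ x ∈ A ∩ J, x ∉ I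
  · obtain ⟨x, hx, hxI⟩ := hcase
    obtain ⟨hxA, hxJ⟩ := Finset.mem_inter.1 hx
    exact ⟨x, hxJ, hxI, A, hAM, Finset.insert_subset hxA hIA⟩
  push_neg at hcase
  -- A ∩ J ⊆ I
  have hAJI : A ∩ J ⊆ I := fun x hx => hcase x hx
  have hABne : A ≠ B := by
    rintro rfl
    obtain ⟨x, hxJ, hxI⟩ : ∃ x ∈ J, x ∉ I := by
      by_contra h
      push_neg at h
      exact absurd (Finset.card_le_card h) (by omega)
    exact hxI (hAJI (Finset.mem_inter.2 ⟨hJB hxJ, hxJ⟩))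
  by_cases hsub : ∃ a ∈ A, a ∉ I ∧ a ∉ B
  · obtain ⟨a, haA, haI, haB⟩ := hsub
    obtain ⟨d, hd, hxchM⟩ := hM.2.2 A hAM B hBM hABne a (Finset.mem_sdiff.2 ⟨haA, haB⟩)
    obtain ⟨hdB, hdA⟩ := Finset.mem_sdiff.1 hd
    have hIx : I ⊆ xch A a d := by
      intro i hi
      exact Finset.mem_insert.2 (Or.inr (Finset.mem_erase.2 ⟨fun h => haI (h ▸ hi), hIA hi⟩))
    have hxC : xch A a d ∈ C := Finset.mem_filter.2 ⟨hxchM, hIx⟩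
    have hgain : (xch A a d ∩ B).card = (A ∩ B).card + 1 := by
      have : xch A a d ∩ B = insert d (A ∩ B) := by
        ext i
        simp only [xch, Finset.mem_inter, Finset.mem_insert, Finset.mem_erase]
        constructor
        · rintro ⟨h1 | ⟨h1, h2⟩, h3⟩
          · exact Or.inl h1
          · exact Or.inr ⟨h2, h3⟩
        · rintro (rfl | ⟨h1, h2⟩)
          · exact ⟨Or.inl rfl, hdB⟩
          · exact ⟨Or.inr ⟨fun h => haB (h ▸ h2), h1⟩, h2⟩
      rw [this, Finset.card_insert_of_notMem (fun h => hdA (Finset.mem_inter.1 h).1)]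
    have := hAmax _ hxC
    omega
  push_neg at hsub
  -- A ⊆ I ∪ B ; counting contradiction
  exfalso
  have hcards : A.card = B.card := (hM.2.1 A hAM).trans (hM.2.1 B hBM).symm
  have hJIsub : J \ I ⊆ B \ A := by
    intro x hx
    obtain ⟨hxJ, hxI⟩ := Finset.mem_sdiff.1 hx
    refine Finset.mem_sdiff.2 ⟨hJB hxJ, fun hxA => hxI (hAJI (Finset.mem_inter.2 ⟨hxA, hxJ⟩))⟩
  have hABsub : A \ B ⊆ I \ B := by
    intro x hx
    obtain ⟨hxA, hxB⟩ := Finset.mem_sdiff.1 hx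
    rcases Decidable.em (x ∈ I) with h | h
    · exact Finset.mem_sdiff.2 ⟨h, hxB⟩
    · exact absurd hxB (by simpa using hsub x hxA h)
  have c1 : (J \ I).card ≤ (B \ A).card := Finset.card_le_card hJIsub
  have c2 : (A \ B).card ≤ (I \ B).card := Finset.card_le_card hABsub
  have e1 := Finset.card_sdiff_add_card_inter B A
  have e2 := Finset.card_sdiff_add_card_inter A B
  have e3 := Finset.card_sdiff_add_card_inter J I
  have e4 := Finset.card_sdiff_add_card_inter I B
  rw [Finset.inter_comm A B] at e2
  have hIJB : I ∩ J ⊆ I ∩ B := fun x hx => by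
    obtain ⟨h1, h2⟩ := Finset.mem_inter.1 hx
    exact Finset.mem_inter.2 ⟨h1, hJB h2⟩
  have c3 : (I ∩ J).card ≤ (I ∩ B).card := Finset.card_le_card hIJB
  have c4 : (J ∩ I).card = (I ∩ J).card := by rw [Finset.inter_comm]
  omega

/-- The mathlib matroid associated to `M`. -/
noncomputable def Mat (k : ℕ) (M : Finset (Finset (Fin n))) (hM : IsMatroid k M) :
    Matroid (Fin n) :=
  (IndepMatroid.ofFinite (Set.finite_univ)
    (fun I => ∃ A ∈ M, I ⊆ ↑A)
    (by obtain ⟨A, hA⟩ := hM.1; exact ⟨A, hA, Set.empty_subset _⟩)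
    (by rintro I J ⟨A, hAM, hJA⟩ hIJ; exact ⟨A, hAM, hIJ.trans hJA⟩)
    (by
      rintro I J ⟨AI, hAI, hIA⟩ ⟨AJ, hAJ, hJA⟩ hlt
      have hIfin : I.Finite := Set.Finite.subset (AI.finite_toSet) hIA
      have hJfin : J.Finite := Set.Finite.subset (AJ.finite_toSet) hJA
      obtain ⟨x, hxJ, hxI, A, hAM, hins⟩ := finset_aug hM hIfin.toFinset hJfin.toFinset
        ⟨AI, hAI, by rwa [Set.Finite.toFinset_subset]⟩
        ⟨AJ, hAJ, by rwa [Set.Finite.toFinset_subset]⟩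
        (by rwa [Set.ncard_eq_toFinset_card I hIfin, Set.ncard_eq_toFinset_card J hJfin] at hlt)
      refine ⟨x, by simpa using hxJ, by simpa using hxI, A, hAM, ?_⟩
      rw [← Set.Finite.coe_toFinset hIfin, ← Finset.coe_insert]
      exact_mod_cast hins
      )
    (fun I _ => Set.subset_univ I)).matroid

lemma mat_indep (hM : IsMatroid k M) {I : Set (Fin n)} :
    (Mat k M hM).Indep I ↔ ∃ A ∈ M, I ⊆ ↑A := by
  simp [Mat]

lemma mat_ground (hM : IsMatroid k M) : (Mat k M hM).E = Set.univ := by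
  simp [Mat]

lemma mem_of_indep_card (hM : IsMatroid k M) {A : Finset (Fin n)} (hcard : A.card = k)
    (h : ∃ A' ∈ M, A ⊆ A') : A ∈ M := by
  obtain ⟨A', hA'M, hsub⟩ := h
  have : A = A' := Finset.eq_of_subset_of_card_le hsub (by rw [hcard, hM.2.1 A' hA'M])
  exact this ▸ hA'M

lemma mat_indep_coe (hM : IsMatroid k M) {A : Finset (Fin n)} (hA : A ∈ M) :
    (Mat k M hM).Indep ↑A := (mat_indep hM).2 ⟨A, hA, subset_rfl⟩

lemma mat_base_coe (hM : IsMatroid k M) {A : Finset (Fin n)} (hA : A ∈ M) :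
    (Mat k M hM).IsBase ↑A := by
  apply Matroid.Indep.isBase_of_maximal (mat_indep_coe hM hA)
  intro J hJ hAJ
  obtain ⟨A', hA'M, hJA'⟩ := (mat_indep hM).1 hJ
  have h1 : (A : Set (Fin n)) ⊆ ↑A' := hAJ.trans hJA'
  have : A = A' := Finset.eq_of_subset_of_card_le (by exact_mod_cast h1)
    (by rw [hM.2.1 A hA, hM.2.1 A' hA'M])
  subst this
  exact hAJ.antisymm hJA'

/-- Symmetric exchange. -/
theorem sym_exch (hM : IsMatroid k M) {B D : Finset (Fin n)} (hB : B ∈ M) (hD : D ∈ M)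
    {b : Fin n} (hb : b ∈ B \ D) :
    ∃ d ∈ D \ B, xch B b d ∈ M ∧ xch D d b ∈ M := by
  classical
  obtain ⟨hbB, hbD⟩ := Finset.mem_sdiff.1 hb
  set MM := Mat k M hM with hMM
  have hBind := mat_indep_coe hM hB
  have hDind := mat_indep_coe hM hD
  have hbnotH : b ∉ MM.closure ↑(B.erase b) := by
    have := hBind.notMem_closure_diff_of_mem (by exact_mod_cast hbB)
    rwa [show (B : Set (Fin n)) \ {b} = ↑(B.erase b) by simp [Finset.coe_erase]] at this
  have hbD' : b ∈ MM.closure ↑D := by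
    rw [(mat_base_coe hM hD).closure_eq, mat_ground]
    trivial
  -- minimal X ⊆ D with b ∈ closure X
  set 𝒳 := D.powerset.filter (fun X : Finset (Fin n) => b ∈ MM.closure (X : Set (Fin n))) with h𝒳
  have h𝒳ne : 𝒳.Nonempty := ⟨D, Finset.mem_filter.2 ⟨Finset.mem_powerset_self D, hbD'⟩⟩
  obtain ⟨X, hX𝒳, hXmin⟩ := Finset.exists_min_image 𝒳 Finset.card h𝒳ne
  obtain ⟨hXD, hbX⟩ := Finset.mem_filter.1 hX𝒳
  have hXD' : X ⊆ D := Finset.mem_powerset.1 hXD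
  have hmin : ∀ d ∈ X, b ∉ MM.closure ↑(X.erase d) := by
    intro d hd hbXd
    have : X.erase d ∈ 𝒳 := Finset.mem_filter.2
      ⟨Finset.mem_powerset.2 ((Finset.erase_subset d X).trans hXD'), hbXd⟩
    have := hXmin _ this
    have := Finset.card_erase_of_mem hd
    have : 1 ≤ X.card := Finset.card_pos.2 ⟨d, hd⟩
    omega
  -- exists d in X not in closure (B.erase b)
  have hnotall : ∃ d ∈ X, d ∉ MM.closure ↑(B.erase b) := by
    by_contra h
    push_neg at h
    have hXsub : (X : Set (Fin n)) ⊆ MM.closure ↑(B.erase b) := fun x hx => h x (by exact_mod_cast hx)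
    have := MM.closure_subset_closure_of_subset_closure hXsub
    exact hbnotH (this hbX)
  obtain ⟨d, hdX, hdH⟩ := hnotall
  have hdD : d ∈ D := hXD' hdX
  have hdB : d ∉ B := by
    intro hdBmem
    have hdb : d ≠ b := fun h => hbD (h ▸ hdD)
    have : d ∈ (B.erase b : Finset (Fin n)) := Finset.mem_erase.2 ⟨hdb, hdBmem⟩
    exact hdH (MM.subset_closure ↑(B.erase b) (by rw [mat_ground]; exact Set.subset_univ _)
      (by exact_mod_cast this))
  -- B - b + d is a base
  have hxchB : xch B b d ∈ M := by
    have hind : MM.Indep (insert d ↑(B.erase b)) := by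
      have herind : MM.Indep ↑(B.erase b) :=
        (mat_indep hM).2 ⟨B, hB, by exact_mod_cast Finset.erase_subset b B⟩
      rw [herind.insert_indep_iff_of_notMem (by
        intro hmem
        have : d ∈ (B.erase b : Finset (Fin n)) := by exact_mod_cast hmem
        exact hdB (Finset.mem_of_mem_erase this))]
      rw [mat_ground]
      exact ⟨trivial, hdH⟩
    apply mem_of_indep_card hM
    · rw [xch_card hbB hdB, hM.2.1 B hB]
    · obtain ⟨A', h1, h2⟩ := (mat_indep hM).1 hind
      refine ⟨A', h1, ?_⟩
      have hcoe : (↑(xch B b d) : Set (Fin n)) = insert d ↑(B.erase b) := by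
        rw [xch]; push_cast; rfl
      intro i hi
      exact_mod_cast h2 (hcoe ▸ (by exact_mod_cast hi : (i:Fin n) ∈ (↑(xch B b d) : Set (Fin n))))
  -- D - d + b is a base
  have hbclD : b ∉ MM.closure ↑(D.erase d) := by
    intro hbclDd
    have h1 : b ∉ MM.closure ↑(X.erase d) := hmin d hdX
    have h2 : b ∈ MM.closure (insert d ↑(X.erase d)) := by
      rwa [show insert d (↑(X.erase d) : Set (Fin n)) = ↑X by
        rw [← Finset.coe_insert, Finset.insert_erase hdX]]
    have h3 := Matroid.mem_closure_insert h1 h2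
    -- d ∈ closure (insert b (X.erase d)) ⊆ closure (insert b (D.erase d)) = closure (D.erase d)
    have h4 : d ∈ MM.closure (insert b ↑(D.erase d)) := by
      apply MM.closure_subset_closure (Set.insert_subset_insert (by
        exact_mod_cast Finset.erase_subset_erase d hXD'))
      exact h3
    have h5 : (insert b ↑(D.erase d) : Set (Fin n)) ⊆ MM.closure ↑(D.erase d) := by
      apply Set.insert_subset hbclDd
      exact MM.subset_closure ↑(D.erase d) (by rw [mat_ground]; exact Set.subset_univ _)
    have h6 := MM.closure_subset_closure_of_subset_closure h5
    have := hDind.notMem_closure_diff_of_mem (by exact_mod_cast hdD)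
    rw [show (D : Set (Fin n)) \ {d} = ↑(D.erase d) by simp [Finset.coe_erase]] at this
    exact this (h6 h4)
  have hxchD : xch D d b ∈ M := by
    have herind : MM.Indep ↑(D.erase d) :=
      (mat_indep hM).2 ⟨D, hD, by exact_mod_cast Finset.erase_subset d D⟩
    have hind : MM.Indep (insert b ↑(D.erase d)) := by
      rw [herind.insert_indep_iff_of_notMem (by
        intro hmem
        have : b ∈ (D.erase d : Finset (Fin n)) := by exact_mod_cast hmem
        exact hbD (Finset.mem_of_mem_erase this))]
      rw [mat_ground]
      exact ⟨trivial, hbclD⟩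
    apply mem_of_indep_card hM
    · rw [xch_card hdD hbD, hM.2.1 D hD]
    · obtain ⟨A', h1, h2⟩ := (mat_indep hM).1 hind
      refine ⟨A', h1, ?_⟩
      have hcoe : (↑(xch D d b) : Set (Fin n)) = insert b ↑(D.erase d) := by
        rw [xch]; push_cast; rfl
      intro i hi
      exact_mod_cast h2 (hcoe ▸ (by exact_mod_cast hi : (i:Fin n) ∈ (↑(xch D d b) : Set (Fin n))))
  exact ⟨d, Finset.mem_sdiff.2 ⟨hdD, hdB⟩, hxchB, hxchD⟩

end Mat

section Span
variable {n k : ℕ} {M : Finset (Finset (Fin n))}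

lemma delta_xch_sub {B : Finset (Fin n)} {b c : Fin n} (hb : b ∈ B) (hc : c ∉ B) :
    delta (xch B b c) - delta B = Pi.single c 1 - Pi.single b 1 := by
  have hbc : b ≠ c := fun h => hc (h ▸ hb)
  funext i
  simp only [Pi.sub_apply, delta, Pi.single_apply]
  by_cases hic : i = c
  · subst hic
    simp [mem_xch_self, hc, hbc.symm]
  · by_cases hib : i = b
    · subst hib
      have hnot : i ∉ xch B i c := by
        rw [mem_xch]
        push_neg
        exact ⟨fun h => hic h, fun h => absurd rfl h⟩
      simp [hnot, hb, hic]
    · have : i ∈ xch B b c ↔ i ∈ B := by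
        rw [mem_xch]
        constructor
        · rintro (h | h)
          · exact absurd h hic
          · exact h.2
        · exact fun h => Or.inr ⟨hib, h⟩
      by_cases hiB : i ∈ B <;> simp [this, hiB, hic, hib]

/-- The span of the edge directions at `B`. -/
def nbSpan (M : Finset (Finset (Fin n))) (B : Finset (Fin n)) : Submodule ℝ (Fin n → ℝ) :=
  Submodule.span ℝ ((fun A => delta A - delta B) '' ↑(nb M B))

theorem diff_mem_nbSpan (hM : IsMatroid k M) {B D : Finset (Fin n)} (hB : B ∈ M)
    (hD : D ∈ M) : delta D - delta B ∈ nbSpan M B := by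
  suffices H : ∀ N : ℕ, ∀ D ∈ M, (D \ B).card ≤ N → delta D - delta B ∈ nbSpan M B by
    exact H (D \ B).card D hD le_rfl
  intro N
  induction N with
  | zero =>
    intro D hD hle
    have hDB : D = B := by
      have h0 : D \ B = ∅ := Finset.card_eq_zero.1 (Nat.le_zero.1 hle)
      have hsub : D ⊆ B := by
        intro x hx
        by_contra hxB
        have : x ∈ D \ B := Finset.mem_sdiff.2 ⟨hx, hxB⟩
        simp [h0] at this
      exact Finset.eq_of_subset_of_card_le hsub
        (le_of_eq ((hM.2.1 B hB).trans (hM.2.1 D hD).symm))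
    rw [hDB, sub_self]
    exact Submodule.zero_mem _
  | succ N ih =>
    intro D hD hle
    by_cases hne : D = B
    · rw [hne, sub_self]; exact Submodule.zero_mem _
    obtain ⟨b, hb⟩ := sdiff_nonempty_of_ne hM hB hD (fun h => hne h.symm)
    obtain ⟨d, hd, hxB, hxD⟩ := sym_exch hM hB hD hb
    obtain ⟨hbB, hbD⟩ := Finset.mem_sdiff.1 hb
    obtain ⟨hdD, hdB⟩ := Finset.mem_sdiff.1 hd
    have e1 := delta_xch_sub hbB hdB
    have e2 := delta_xch_sub hdD hbD
    have key : delta D - delta B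
        = (delta (xch B b d) - delta B) + (delta (xch D d b) - delta B) := by
      have h3 : delta (xch D d b) - delta D = Pi.single b 1 - Pi.single d 1 := e2
      linear_combination (-1 : Fin n → ℝ) * e1 - h3
    rw [key]
    apply Submodule.add_mem
    · exact Submodule.subset_span ⟨xch B b d, by exact_mod_cast xch_mem_nb hM hB hbB hdB hxB, rfl⟩
    · apply ih (xch D d b) hxD
      have hfd : xch D d b \ B = (D \ B).erase d := by
        ext i
        simp only [Finset.mem_sdiff, mem_xch, Finset.mem_erase]
        constructor
        · rintro ⟨h1 | ⟨h1, h2⟩, h3⟩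
          · exact absurd (h1 ▸ hbB) h3
          · exact ⟨h1, h2, h3⟩
        · rintro ⟨h1, h2, h3⟩
          exact ⟨Or.inr ⟨h1, h2⟩, h3⟩
      rw [hfd, Finset.card_erase_of_mem hd]
      omega

lemma nbSpan_le (hM : IsMatroid k M) {B : Finset (Fin n)} (hB : B ∈ M) :
    nbSpan M B ≤ vectorSpan ℝ (delta '' (M : Set (Finset (Fin n)))) := by
  rw [nbSpan, Submodule.span_le]
  rintro x ⟨A, hA, rfl⟩
  have hAM : A ∈ M := Finset.mem_of_mem_filter A (by exact_mod_cast hA)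
  exact vsub_mem_vectorSpan ℝ (Set.mem_image_of_mem _ (by exact_mod_cast hAM))
    (Set.mem_image_of_mem _ (by exact_mod_cast hB))

lemma nbSpan_eq (hM : IsMatroid k M) {B : Finset (Fin n)} (hB : B ∈ M) :
    nbSpan M B = vectorSpan ℝ (delta '' (M : Set (Finset (Fin n)))) := by
  refine le_antisymm (nbSpan_le hM hB) ?_
  rw [vectorSpan_eq_span_vsub_set_right ℝ (Set.mem_image_of_mem _ (by exact_mod_cast hB)),
    Submodule.span_le]
  rintro x ⟨y, ⟨D, hD, rfl⟩, rfl⟩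
  exact diff_mem_nbSpan hM hB (by exact_mod_cast hD)

/-- plain linear functional with coefficients `c` -/
noncomputable def linl (c : Fin n → ℝ) : (Fin n → ℝ) →ₗ[ℝ] ℝ :=
  ∑ i, c i • LinearMap.proj (R := ℝ) (φ := fun _ : Fin n => ℝ) i

lemma linl_apply (c : Fin n → ℝ) (x : Fin n → ℝ) : linl c x = ∑ i, c i * x i := by
  simp [linl, LinearMap.sum_apply, LinearMap.smul_apply, LinearMap.proj_apply, smul_eq_mul]

lemma linl_single (c : Fin n → ℝ) (i : Fin n) : linl c (Pi.single i 1) = c i := by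
  rw [linl_apply]
  rw [Finset.sum_eq_single i (fun j _ hj => by simp [Pi.single_apply, hj.symm]) (by simp)]
  simp

lemma linl_surj (c : Fin n → ℝ) (i : Fin n) (hi : c i = 1) :
    LinearMap.range (linl c) = ⊤ := by
  rw [LinearMap.range_eq_top]
  intro r
  refine ⟨r • (Pi.single i 1 : Fin n → ℝ), ?_⟩
  rw [map_smul, linl_single, hi, smul_eq_mul, mul_one]

lemma finrank_ker_linl (c : Fin n → ℝ) (i : Fin n) (hi : c i = 1) :
    finrank ℝ (LinearMap.ker (linl c)) = n - 1 := by
  have := LinearMap.finrank_range_add_finrank_ker (linl c)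
  rw [linl_surj c i hi] at this
  simp only [finrank_top] at this
  have hr : finrank ℝ (Fin n → ℝ) = n := by
    simp [Module.finrank_pi]
  have hR : finrank ℝ ℝ = 1 := Module.finrank_self ℝ
  omega

/-- crossing edges: if the direction span is full, every proper nonempty cut is crossed. -/
lemma crossing (hM : IsMatroid k M) {B : Finset (Fin n)} (hB : B ∈ M)
    (hrk : finrank ℝ (nbSpan M B) = n - 1) (hn : 2 ≤ n)
    (C : Finset (Fin n)) (hCne : C.Nonempty) (hCproper : C ≠ Finset.univ) :
    ∃ p ∈ pairs M B, ¬(p.1 ∈ C ↔ p.2 ∈ C) := by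
  by_contra hcon
  push_neg at hcon
  set cw : Fin n → ℝ := fun i => if i ∈ C then 1 else 0 with hcw
  set cw' : Fin n → ℝ := fun i => if i ∈ C then 0 else 1 with hcw'
  have hgen : ∀ A ∈ nb M B, delta A - delta B ∈
      LinearMap.ker (linl cw) ⊓ LinearMap.ker (linl cw') := by
    intro A hA
    obtain ⟨b, c, hb, hc, hAx, hxM⟩ := nb_pair hM hB hA
    have hpair : (b, c) ∈ pairs M B := mem_pairs.2 ⟨hb, hc, hxM⟩
    have hiff := hcon (b, c) hpair
    have hsub : delta A - delta B = Pi.single c 1 - Pi.single b 1 := by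
      rw [hAx]; exact delta_xch_sub hb hc
    have hcc : (b ∈ C ∧ c ∈ C) ∨ (b ∉ C ∧ c ∉ C) := by
      by_cases hbC : b ∈ C
      · exact Or.inl ⟨hbC, hiff.1 hbC⟩
      · exact Or.inr ⟨hbC, fun h => hbC (hiff.2 h)⟩
    refine Submodule.mem_inf.2 ⟨?_, ?_⟩ <;>
      rw [LinearMap.mem_ker, hsub, map_sub, linl_single, linl_single] <;>
      rcases hcc with ⟨h1, h2⟩ | ⟨h1, h2⟩ <;> simp [hcw, hcw', h1, h2]
  have hle : nbSpan M B ≤ LinearMap.ker (linl cw) ⊓ LinearMap.ker (linl cw') := by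
    rw [nbSpan, Submodule.span_le]
    rintro x ⟨A, hA, rfl⟩
    exact hgen A (by exact_mod_cast hA)
  obtain ⟨i0, hi0⟩ := hCne
  obtain ⟨j0, hj0⟩ : ∃ j, j ∉ C := by
    by_contra h
    push_neg at h
    exact hCproper (Finset.eq_univ_iff_forall.2 h)
  have hker1 : finrank ℝ (LinearMap.ker (linl cw)) = n - 1 :=
    finrank_ker_linl cw i0 (by simp [hcw, hi0])
  have hlt : LinearMap.ker (linl cw) ⊓ LinearMap.ker (linl cw') < LinearMap.ker (linl cw) := by
    refine lt_of_le_of_ne inf_le_left (fun heq => ?_)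
    have hj : Pi.single j0 1 ∈ LinearMap.ker (linl cw) := by
      simp [LinearMap.mem_ker, linl_single, hcw, hj0]
    rw [← heq] at hj
    have := hj.2
    simp [LinearMap.mem_ker, linl_single, hcw', hj0] at this
  have h1 : finrank ℝ (LinearMap.ker (linl cw) ⊓ LinearMap.ker (linl cw') : Submodule ℝ _)
      < n - 1 := hker1 ▸ Submodule.finrank_lt_finrank_of_lt hlt
  have h2 : finrank ℝ (nbSpan M B)
      ≤ finrank ℝ (LinearMap.ker (linl cw) ⊓ LinearMap.ker (linl cw') : Submodule ℝ _) :=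
    Submodule.finrank_mono hle
  omega

end Span

section Edges
variable {n k : ℕ} {M : Finset (Finset (Fin n))}

lemma mp_eq : matroidPolytope M
    = convexHull ℝ ((M.image delta : Finset (Fin n → ℝ)) : Set (Fin n → ℝ)) := by
  rw [matroidPolytope, Finset.coe_image]

lemma mem_mp {D : Finset (Fin n)} (hD : D ∈ M) : delta D ∈ matroidPolytope M :=
  subset_convexHull ℝ _ (Set.mem_image_of_mem _ (by exact_mod_cast hD))

lemma delta_extreme (hM : IsMatroid k M) {A : Finset (Fin n)} (hA : A ∈ M) :
    delta A ∈ Set.extremePoints ℝ (matroidPolytope M) := by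
  classical
  set l := lin (fun i => if i ∈ A then (1:ℝ) else 0) with hl
  have hval : ∀ D : Finset (Fin n), l (delta D) = ((D ∩ A).card : ℝ) := by
    intro D
    rw [hl, lin_delta']
    rw [Finset.sum_boole, Finset.filter_mem_eq_inter]
  rw [mp_eq]
  apply extreme_of_strictmax (l := l) (Finset.mem_image_of_mem delta hA)
  intro q hq hqA
  obtain ⟨D, hD, rfl⟩ := Finset.mem_image.1 hq
  have hDA : D ≠ A := fun h => hqA (by rw [h])
  rw [hval, hval]
  have h1 : (D ∩ A).card < k := by
    have hle : (D ∩ A).card ≤ D.card := Finset.card_le_card (Finset.inter_subset_left)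
    rcases lt_or_eq_of_le hle with h | h
    · exact (hM.2.1 D hD) ▸ h
    · exfalso
      have : D ∩ A = D := Finset.eq_of_subset_of_card_le Finset.inter_subset_left (le_of_eq h.symm)
      have hsub : D ⊆ A := by rw [← this]; exact Finset.inter_subset_right
      exact hDA (Finset.eq_of_subset_of_card_le hsub
        (le_of_eq ((hM.2.1 A hA).trans (hM.2.1 D hD).symm)))
  have h2 : (A ∩ A).card = k := by rw [Finset.inter_self]; exact hM.2.1 A hA
  rw [h2]
  exact_mod_cast h1

lemma seg_dim {v w : Fin n → ℝ} (hvw : v ≠ w) :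
    finrank ℝ (affineSpan ℝ (segment ℝ v w)).direction = 1 := by
  rw [← convexHull_pair, affineSpan_convexHull, direction_affineSpan, vectorSpan_pair]
  exact finrank_span_singleton (by
    intro h
    exact hvw (by rwa [vsub_eq_sub, sub_eq_zero] at h))

lemma lin_xch_sum (l : (Fin n → ℝ) →L[ℝ] ℝ) {D : Finset (Fin n)} {b c : Fin n}
    (hb : b ∈ D) (hc : c ∉ D) :
    l (delta (xch D b c)) = l (delta D) - l (Pi.single b 1) + l (Pi.single c 1) := by
  rw [lin_delta, lin_delta, xch]
  rw [Finset.sum_insert (fun h => hc (Finset.mem_of_mem_erase h))]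
  rw [Finset.sum_erase_eq_sub hb]
  ring

/-- Each neighbor gives an edge. -/
theorem isEdge_nb (hM : IsMatroid k M) {B A : Finset (Fin n)} (hB : B ∈ M) (hA : A ∈ nb M B) :
    IsEdgeOf (matroidPolytope M) (segment ℝ (delta B) (delta A)) := by
  classical
  obtain ⟨b, c, hb, hc, hAx, hxM⟩ := nb_pair hM hB hA
  have hbc : b ≠ c := fun h => hc (h ▸ hb)
  set S := B.erase b with hS
  have hk : B.card = k := hM.2.1 B hB
  have hk1 : 1 ≤ k := hk ▸ Finset.card_pos.2 ⟨b, hb⟩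
  have hScard : S.card = k - 1 := by rw [hS, Finset.card_erase_of_mem hb, hk]
  set cw : Fin n → ℝ := fun i =>
    (if i ∈ S then 1 else 0) + (if i = b ∨ i = c then 1/2 else 0) with hcw
  set l := lin cw with hl
  have hbS : b ∉ S := fun h => (Finset.mem_erase.1 h).1 rfl
  have hcS : c ∉ S := fun h => hc (Finset.mem_of_mem_erase h)
  -- value of l on delta D
  have hval : ∀ D : Finset (Fin n),
      l (delta D) = ((D ∩ S).card : ℝ) + ((D ∩ {b, c}).card : ℝ) / 2 := by
    intro D
    rw [hl, lin_delta', hcw]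
    rw [Finset.sum_add_distrib]
    congr 1
    · rw [Finset.sum_boole, Finset.filter_mem_eq_inter]
    · rw [show ∑ i ∈ D, (if i = b ∨ i = c then (1:ℝ)/2 else 0)
          = ∑ i ∈ D, (1/2) * (if i ∈ ({b, c} : Finset (Fin n)) then 1 else 0) by
        apply Finset.sum_congr rfl
        intro i _
        by_cases h : i = b ∨ i = c <;> simp [h, Finset.mem_insert, Finset.mem_singleton]]
      rw [← Finset.mul_sum, Finset.sum_boole, Finset.filter_mem_eq_inter]
      ring
  -- the structural key
  have hkey : ∀ D ∈ M, (2 * (D ∩ S).card + (D ∩ {b, c}).card + 1 ≤ 2 * k) ∧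
      (2 * (D ∩ S).card + (D ∩ {b, c}).card + 1 = 2 * k → D = B ∨ D = A) := by
    intro D hD
    have hDcard : D.card = k := hM.2.1 D hD
    have h2 : (D ∩ {b, c}).card ≤ 2 := le_trans
      (Finset.card_le_card Finset.inter_subset_right)
      (le_trans (Finset.card_insert_le _ _) (by simp))
    by_cases hsub : S ⊆ D
    · have ha : (D ∩ S).card = k - 1 := by
        rw [Finset.inter_eq_right.2 hsub, hScard]
      have hd1 : (D \ S).card = 1 := by
        rw [Finset.card_sdiff_of_subset hsub, hDcard, hScard]
        omega
      obtain ⟨x, hx⟩ := Finset.card_eq_one.1 hd1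
      have hDeq : D = insert x S := by
        have h1 : S ∪ D \ S = D := Finset.union_sdiff_of_subset hsub
        rw [hx] at h1
        rw [← h1, Finset.union_comm]
        rfl
      have hxS : x ∉ S := by
        have : x ∈ D \ S := hx ▸ Finset.mem_singleton_self x
        exact (Finset.mem_sdiff.1 this).2
      have hDbc : D ∩ {b, c} = {x} ∩ {b, c} := by
        rw [hDeq]
        ext i
        simp only [Finset.mem_inter, Finset.mem_insert, Finset.mem_singleton]
        constructor
        · rintro ⟨h1 | h1, h3⟩
          · exact ⟨h1, h3⟩
          · exfalso
            rcases h3 with rfl | rfl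
            · exact hbS h1
            · exact hcS h1
        · rintro ⟨rfl, h3⟩
          exact ⟨Or.inl rfl, h3⟩
      have ht1 : (D ∩ {b, c}).card ≤ 1 := by
        rw [hDbc]
        exact le_trans (Finset.card_le_card Finset.inter_subset_left) (by simp)
      constructor
      · omega
      · intro heq
        have ht : (D ∩ {b, c}).card = 1 := by omega
        have hxbc : x = b ∨ x = c := by
          rw [hDbc] at ht
          obtain ⟨y, hy⟩ := Finset.card_eq_one.1 ht
          have := hy ▸ Finset.mem_singleton_self y
          obtain ⟨h1, h2⟩ := Finset.mem_inter.1 this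
          rw [Finset.mem_singleton] at h1
          subst h1
          simpa using h2
        rcases hxbc with rfl | rfl
        · left
          rw [hDeq, hS, Finset.insert_erase hb]
        · right
          rw [hDeq, hAx, xch]
    · have ha : (D ∩ S).card + 1 ≤ k - 1 := by
        have : (D ∩ S).card < S.card := by
          apply Finset.card_lt_card
          rw [Finset.ssubset_iff_subset_ne]
          refine ⟨Finset.inter_subset_right, fun h => hsub ?_⟩
          rw [← h]
          exact Finset.inter_subset_left
        omega
      have hk2 : 2 ≤ k := by
        by_contra h
        push_neg at h
        have hS0 : S = ∅ := Finset.card_eq_zero.1 (by omega)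
        exact hsub (hS0 ▸ Finset.empty_subset D)
      constructor
      · omega
      · intro heq
        omega
  have hub : ∀ p ∈ M.image delta, l p ≤ (k : ℝ) - 1/2 := by
    rintro p hp
    obtain ⟨D, hD, rfl⟩ := Finset.mem_image.1 hp
    rw [hval]
    have := (hkey D hD).1
    have hcast : 2 * ((D ∩ S).card : ℝ) + ((D ∩ {b, c}).card : ℝ) + 1 ≤ 2 * k := by
      exact_mod_cast this
    linarith
  -- values at B and A
  have hBbc : B ∩ {b, c} = {b} := by
    ext i
    simp only [Finset.mem_inter, Finset.mem_insert, Finset.mem_singleton]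
    constructor
    · rintro ⟨h1, rfl | rfl⟩
      · rfl
      · exact absurd h1 hc
    · rintro rfl; exact ⟨hb, Or.inl rfl⟩
  have hBval : l (delta B) = (k : ℝ) - 1/2 := by
    rw [hval]
    have e1 : B ∩ S = S := Finset.inter_eq_right.2 (Finset.erase_subset b B)
    rw [e1, hBbc, hScard, Finset.card_singleton, Nat.cast_sub hk1]
    push_cast
    ring
  have hAval : l (delta A) = (k : ℝ) - 1/2 := by
    rw [hval]
    have e1 : A ∩ S = S := Finset.inter_eq_right.2 (by
      rw [hAx]
      intro i hi
      exact Finset.mem_insert.2 (Or.inr hi))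
    have e2 : A ∩ {b, c} = {c} := by
      ext i
      simp only [Finset.mem_inter, Finset.mem_insert, Finset.mem_singleton]
      constructor
      · rintro ⟨h1, rfl | rfl⟩
        · exfalso
          rw [hAx, mem_xch] at h1
          rcases h1 with h | h
          · simp_all
          · exact h.1 rfl
        · rfl
      · rintro rfl
        exact ⟨hAx ▸ mem_xch_self, Or.inr rfl⟩
    rw [e1, e2, hScard, Finset.card_singleton, Nat.cast_sub hk1]
    push_cast
    ring
  -- characterize the equality set
  have hfil : (M.image delta).filter (fun p => l p = (k:ℝ) - 1/2)
      = {delta B, delta A} := by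
    ext p
    simp only [Finset.mem_filter, Finset.mem_image, Finset.mem_insert, Finset.mem_singleton]
    constructor
    · rintro ⟨⟨D, hD, rfl⟩, hval'⟩
      have heq : 2 * (D ∩ S).card + (D ∩ {b, c}).card + 1 = 2 * k := by
        rw [hval] at hval'
        have hle := (hkey D hD).1
        have : 2 * ((D ∩ S).card : ℝ) + ((D ∩ {b, c}).card : ℝ) + 1 = 2 * k := by
          linarith
        exact_mod_cast this
      rcases (hkey D hD).2 heq with rfl | rfl
      · exact Or.inl rfl
      · exact Or.inr rfl
    · rintro (rfl | rfl)
      · exact ⟨⟨B, hB, rfl⟩, hBval⟩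
      · exact ⟨⟨A, Finset.mem_of_mem_filter A hA, rfl⟩, hAval⟩
  -- conclude
  have hface := face_eq (M.image delta) l ((k:ℝ) - 1/2) hub
    ⟨delta B, Finset.mem_image_of_mem delta hB, hBval⟩
  rw [hfil] at hface
  have hcoe : (({delta B, delta A} : Finset (Fin n → ℝ)) : Set (Fin n → ℝ))
      = {delta B, delta A} := by simp
  rw [hcoe, convexHull_pair] at hface
  have hne : delta B ≠ delta A := by
    intro h
    have h2 := delta_inj h
    have : c ∈ B := by rw [h2, hAx]; exact mem_xch_self
    exact hc this
  constructor
  · intro _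
    refine ⟨l, ?_⟩
    rw [← hface, mp_eq]
  · exact seg_dim hne
end Edges


section EdgesConv
variable {n k : ℕ} {M : Finset (Finset (Fin n))}

/-- Every edge through a vertex comes from a neighbor. -/
theorem edge_through (hM : IsMatroid k M) {B : Finset (Fin n)} (hB : B ∈ M)
    {E : Set (Fin n → ℝ)} (hE : IsEdgeOf (matroidPolytope M) E) (hBE : delta B ∈ E) :
    ∃ A ∈ nb M B, E = segment ℝ (delta B) (delta A) := by
  classical
  obtain ⟨l, hEl⟩ := hE.1 ⟨delta B, hBE⟩
  set m := l (delta B) with hm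
  have hBP : delta B ∈ matroidPolytope M := mem_mp hB
  have hmax : ∀ y ∈ matroidPolytope M, l y ≤ m := by
    rw [hEl] at hBE
    exact hBE.2
  have hub : ∀ p ∈ M.image delta, l p ≤ m := by
    intro p hp
    apply hmax
    rw [mp_eq]
    exact subset_convexHull ℝ _ (by exact_mod_cast hp)
  have hface : E = convexHull ℝ
      (((M.image delta).filter (fun p => l p = m)) : Set (Fin n → ℝ)) := by
    rw [hEl, mp_eq]
    exact face_eq (M.image delta) l m hub ⟨delta B, Finset.mem_image_of_mem delta hB, rfl⟩
  set Mm := M.filter (fun D => l (delta D) = m) with hMm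
  have himg : (M.image delta).filter (fun p => l p = m) = Mm.image delta := by
    ext p
    simp only [Finset.mem_filter, Finset.mem_image, hMm]
    constructor
    · rintro ⟨⟨D, hD, rfl⟩, h⟩
      exact ⟨D, ⟨hD, h⟩, rfl⟩
    · rintro ⟨D, ⟨hD, h⟩, rfl⟩
      exact ⟨⟨D, hD, rfl⟩, h⟩
  have hBMm : B ∈ Mm := Finset.mem_filter.2 ⟨hB, rfl⟩
  -- a second maximizer exists
  have hDex : ∃ D ∈ Mm, D ≠ B := by
    by_contra h
    push_neg at h
    have hMmB : Mm = {B} := by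
      apply Finset.eq_singleton_iff_unique_mem.2
      exact ⟨hBMm, fun D hD => h D hD⟩
    have hEsing : E = {delta B} := by
      rw [hface, himg, hMmB]
      simp
    have h2 := hE.2
    rw [hEsing, direction_affineSpan, vectorSpan_singleton] at h2
    rw [finrank_bot] at h2
    exact absurd h2 (by norm_num)
  obtain ⟨D, hDMm, hDB⟩ := hDex
  have hDM : D ∈ M := Finset.mem_of_mem_filter D hDMm
  have hDeltaMem : ∀ D' ∈ Mm, delta D' ∈ E := by
    intro D' hD'
    rw [hface, himg]
    exact subset_convexHull ℝ _ (by exact_mod_cast Finset.mem_image_of_mem delta hD')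
  have hu0 : delta D - delta B ≠ 0 := by
    intro h
    exact hDB (delta_inj (by rwa [sub_eq_zero] at h))
  have hspan : (affineSpan ℝ E).direction = Submodule.span ℝ {delta D - delta B} := by
    symm
    apply Submodule.eq_of_le_of_finrank_le
    · rw [Submodule.span_le, Set.singleton_subset_iff]
      have h1 := subset_affineSpan ℝ E (hDeltaMem D hDMm)
      have h2 := subset_affineSpan ℝ E hBE
      have := AffineSubspace.vsub_mem_direction h1 h2
      rwa [vsub_eq_sub] at this
    · rw [hE.2, finrank_span_singleton hu0]
  obtain ⟨i0, hi0⟩ := sdiff_nonempty_of_ne hM hDM hB hDB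
  obtain ⟨hi0D, hi0B⟩ := Finset.mem_sdiff.1 hi0
  have hMm2 : ∀ D' ∈ Mm, D' = B ∨ D' = D := by
    intro D' hD'
    have hmem : delta D' - delta B ∈ Submodule.span ℝ {delta D - delta B} := by
      rw [← hspan]
      have h1 := subset_affineSpan ℝ E (hDeltaMem D' hD')
      have h2 := subset_affineSpan ℝ E hBE
      have := AffineSubspace.vsub_mem_direction h1 h2
      rwa [vsub_eq_sub] at this
    obtain ⟨t, ht⟩ := Submodule.mem_span_singleton.1 hmem
    have hteval := congrFun ht i0
    simp only [Pi.smul_apply, Pi.sub_apply, smul_eq_mul] at hteval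
    rw [show delta D i0 = 1 by simp [delta, hi0D], show delta B i0 = 0 by simp [delta, hi0B]]
      at hteval
    -- t = delta D' i0
    have htval : t = delta D' i0 := by linarith [hteval]
    have hD'01 : delta D' i0 = 0 ∨ delta D' i0 = 1 := by
      by_cases h : i0 ∈ D' <;> simp [delta, h]
    rcases hD'01 with h01 | h01
    · left
      apply delta_inj
      have : delta D' - delta B = 0 := by rw [← ht, htval, h01, zero_smul]
      rwa [sub_eq_zero] at this
    · right
      apply delta_inj
      have : delta D' - delta B = delta D - delta B := by rw [← ht, htval, h01, one_smul]
      have := sub_left_injective.eq_iff.1 this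
      exact this
  have hMmeq : Mm = {B, D} := by
    ext D'
    simp only [Finset.mem_insert, Finset.mem_singleton]
    constructor
    · exact hMm2 D'
    · rintro (rfl | rfl)
      · exact hBMm
      · exact hDMm
  have hEseg : E = segment ℝ (delta B) (delta D) := by
    rw [hface, himg, hMmeq]
    rw [Finset.image_insert, Finset.image_singleton]
    rw [show ((({delta B, delta D} : Finset (Fin n → ℝ))) : Set (Fin n → ℝ))
      = {delta B, delta D} by simp]
    exact convexHull_pair _ _
  -- exchange distance 1
  have hcard1 : (D \ B).card = 1 := by
    by_contra hc1
    have hge2 : 2 ≤ (D \ B).card := by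
      have : (D \ B).Nonempty := ⟨i0, hi0⟩
      have := Finset.card_pos.2 this
      omega
    set f : Fin n → ℝ := fun i => l (Pi.single i 1) with hf
    have hlD : l (delta D) = m := (Finset.mem_filter.1 hDMm).2
    have hstep : ∀ d ∈ D \ B, ∃ b' ∈ B \ D, f b' ≤ f d := by
      intro d hd
      obtain ⟨b', hb', hxM⟩ := exchange hM hDM hB hDB hd
      refine ⟨b', hb', ?_⟩
      obtain ⟨hdD, hdB⟩ := Finset.mem_sdiff.1 hd
      obtain ⟨hb'B, hb'D⟩ := Finset.mem_sdiff.1 hb'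
      have := hub _ (Finset.mem_image_of_mem delta hxM)
      rw [lin_xch_sum l hdD hb'D, hlD] at this
      simp only [hf] at this ⊢
      linarith
    have hBDne : (B \ D).Nonempty := sdiff_nonempty_of_ne hM hB hDM (fun h => hDB h.symm)
    obtain ⟨bs, hbs, hbsmin⟩ := Finset.exists_min_image (B \ D) f hBDne
    have hminall : ∀ d ∈ D \ B, f bs ≤ f d := by
      intro d hd
      obtain ⟨b', hb', hb'le⟩ := hstep d hd
      exact le_trans (hbsmin b' hb') hb'le
    obtain ⟨ds, hds, hYM⟩ := exchange hM hB hDM (fun h => hDB h.symm) hbs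
    obtain ⟨hbsB, hbsD⟩ := Finset.mem_sdiff.1 hbs
    obtain ⟨hdsD, hdsB⟩ := Finset.mem_sdiff.1 hds
    have hYval : l (delta (xch B bs ds)) = m - f bs + f ds := by
      rw [lin_xch_sum l hbsB hdsB, hm]
    have hYle := hub _ (Finset.mem_image_of_mem delta hYM)
    have hYge : m ≤ l (delta (xch B bs ds)) := by
      rw [hYval]
      have := hminall ds hds
      linarith
    have hYMm : xch B bs ds ∈ Mm := Finset.mem_filter.2 ⟨hYM, le_antisymm hYle hYge⟩
    rcases hMm2 _ hYMm with hYB | hYD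
    · exact hdsB (hYB ▸ mem_xch_self)
    · have : D \ B = {ds} := hYD ▸ xch_sdiff hbsB hdsB
      rw [this] at hge2
      simp at hge2
  refine ⟨D, Finset.mem_filter.2 ⟨hDM, ?_, hcard1⟩, hEseg⟩
  rw [sdiff_card_eq hM hB hDM]
  exact hcard1

/-- Counting edges through a vertex. -/
theorem edge_count (hM : IsMatroid k M) {B : Finset (Fin n)} (hB : B ∈ M) :
    {E : Set (Fin n → ℝ) | IsEdgeOf (matroidPolytope M) E ∧ delta B ∈ E}.ncard
      = (nb M B).card := by
  classical
  have hset : {E : Set (Fin n → ℝ) | IsEdgeOf (matroidPolytope M) E ∧ delta B ∈ E}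
      = (fun A => segment ℝ (delta B) (delta A)) '' ↑(nb M B) := by
    ext E
    constructor
    · rintro ⟨hE, hBE⟩
      obtain ⟨A, hA, rfl⟩ := edge_through hM hB hE hBE
      exact ⟨A, by exact_mod_cast hA, rfl⟩
    · rintro ⟨A, hA, rfl⟩
      exact ⟨isEdge_nb hM hB (by exact_mod_cast hA), left_mem_segment ℝ _ _⟩
  rw [hset, Set.ncard_image_of_injOn, Set.ncard_coe_finset]
  intro A1 h1 A2 h2 heq
  have hA2nb : A2 ∈ nb M B := by exact_mod_cast h2
  obtain ⟨hA2M, hcard1, hcard2⟩ := Finset.mem_filter.1 hA2nb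
  obtain ⟨c2, hc2⟩ := Finset.card_eq_one.1 hcard2
  have hc2mem : c2 ∈ A2 \ B := hc2 ▸ Finset.mem_singleton_self c2
  obtain ⟨hc2A, hc2B⟩ := Finset.mem_sdiff.1 hc2mem
  have hmem : delta A2 ∈ segment ℝ (delta B) (delta A1) := by
    have := right_mem_segment ℝ (delta B) (delta A2)
    rwa [show segment ℝ (delta B) (delta A2) = segment ℝ (delta B) (delta A1) from heq.symm]
      at this
  obtain ⟨a, b, ha, hb, hab, habx⟩ := hmem
  have heval := congrFun habx c2
  simp only [Pi.add_apply, Pi.smul_apply, smul_eq_mul] at heval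
  rw [show delta B c2 = 0 by simp [delta, hc2B], show delta A2 c2 = 1 by simp [delta, hc2A]]
    at heval
  have h01 : delta A1 c2 = 0 ∨ delta A1 c2 = 1 := by
    by_cases h : c2 ∈ A1 <;> simp [delta, h]
  rcases h01 with h | h
  · exfalso
    rw [h] at heval
    simp at heval
  · rw [h] at heval
    have hb1 : b = 1 := by linarith
    have ha0 : a = 0 := by linarith
    apply delta_inj
    rw [← habx, ha0, hb1, zero_smul, one_smul, zero_add]

end EdgesConv


section Comb
variable {n k : ℕ} {M : Finset (Finset (Fin n))}

lemma indep_dirs (hrk : finrank ℝ (nbSpan M B) = n - 1)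
    (hcard : (nb M B).card = n - 1) :
    LinearIndependent ℝ (fun A : {x // x ∈ nb M B} => delta (A : Finset (Fin n)) - delta B) := by
  rw [linearIndependent_iff_card_eq_finrank_span]
  rw [Fintype.card_coe, hcard]
  have hre : Set.range (fun A : {x // x ∈ nb M B} => delta (A : Finset (Fin n)) - delta B)
      = (fun A => delta A - delta B) '' ↑(nb M B) := by
    ext v
    constructor
    · rintro ⟨A, rfl⟩
      exact ⟨↑A, by exact_mod_cast A.2, rfl⟩
    · rintro ⟨A, hA, rfl⟩
      exact ⟨⟨A, by exact_mod_cast hA⟩, rfl⟩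
  rw [Set.finrank, hre]
  exact hrk.symm

lemma no4cycle (hM : IsMatroid k M) {B : Finset (Fin n)} (hB : B ∈ M)
    (hrk : finrank ℝ (nbSpan M B) = n - 1) (hcard : (nb M B).card = n - 1)
    {b c b' c' : Fin n} (h1 : (b, c) ∈ pairs M B) (h2 : (b', c) ∈ pairs M B)
    (h3 : (b, c') ∈ pairs M B) (h4 : (b', c') ∈ pairs M B)
    (hbb' : b ≠ b') (hcc' : c ≠ c') : False := by
  classical
  have hind := indep_dirs (B := B) (M := M) hrk hcard
  obtain ⟨hb, hc, hm1⟩ := mem_pairs.1 h1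
  obtain ⟨hb', -, hm2⟩ := mem_pairs.1 h2
  obtain ⟨-, hc', hm3⟩ := mem_pairs.1 h3
  obtain ⟨-, -, hm4⟩ := mem_pairs.1 h4
  set A1 := xch B b c with hA1
  set A2 := xch B b' c with hA2
  set A3 := xch B b c' with hA3
  set A4 := xch B b' c' with hA4
  have hA1nb : A1 ∈ nb M B := xch_mem_nb hM hB hb hc hm1
  have hA2nb : A2 ∈ nb M B := xch_mem_nb hM hB hb' hc hm2
  have hA3nb : A3 ∈ nb M B := xch_mem_nb hM hB hb hc' hm3
  have hA4nb : A4 ∈ nb M B := xch_mem_nb hM hB hb' hc' hm4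
  have hfst : ∀ {x y : Fin n} (hx : x ∈ B) (hy : y ∉ B) {x' y'} (hx' : x' ∈ B) (hy' : y' ∉ B),
      xch B x y = xch B x' y' → x = x' ∧ y = y' := by
    intro x y hx hy x' y' hx' hy' heq
    constructor
    · have e1 := sdiff_xch hx hy
      have e2 := sdiff_xch hx' hy'
      rw [heq, e2] at e1
      exact (Finset.singleton_inj.1 e1).symm
    · have e1 := xch_sdiff hx hy
      have e2 := xch_sdiff hx' hy'
      rw [heq, e2] at e1
      exact (Finset.singleton_inj.1 e1).symm
  have h12 : A1 ≠ A2 := fun h => hbb' (hfst hb hc hb' hc h).1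
  have h13 : A1 ≠ A3 := fun h => hcc' (hfst hb hc hb hc' h).2
  have h14 : A1 ≠ A4 := fun h => hbb' (hfst hb hc hb' hc' h).1
  have h23 : A2 ≠ A3 := fun h => hbb' ((hfst hb' hc hb hc' h).1).symm
  have h24 : A2 ≠ A4 := fun h => hcc' (hfst hb' hc hb' hc' h).2
  have h34 : A3 ≠ A4 := fun h => hbb' (hfst hb hc' hb' hc' h).1
  -- coefficient function
  set cf : Finset (Fin n) → ℝ := fun A =>
    if A = A1 then 1 else if A = A2 then -1 else if A = A3 then -1 else if A = A4 then 1 else 0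
    with hcf
  have hsum : ∑ A : {x // x ∈ nb M B}, cf (A : Finset (Fin n)) •
      (delta (A : Finset (Fin n)) - delta B) = 0 := by
    rw [Finset.univ_eq_attach]
    rw [Finset.sum_attach (nb M B) (fun A => cf A • (delta A - delta B))]
    have hssub : ({A1, A2, A3, A4} : Finset (Finset (Fin n))) ⊆ nb M B := by
      intro x hx
      simp only [Finset.mem_insert, Finset.mem_singleton] at hx
      rcases hx with rfl | rfl | rfl | rfl
      exacts [hA1nb, hA2nb, hA3nb, hA4nb]
    rw [← Finset.sum_subset hssub (fun x _ hx => by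
      have hx1 : x ≠ A1 := fun h => hx (by simp [h])
      have hx2 : x ≠ A2 := fun h => hx (by simp [h])
      have hx3 : x ≠ A3 := fun h => hx (by simp [h])
      have hx4 : x ≠ A4 := fun h => hx (by simp [h])
      simp [hcf, hx1, hx2, hx3, hx4])]
    rw [show ({A1, A2, A3, A4} : Finset (Finset (Fin n)))
        = insert A1 (insert A2 (insert A3 ({A4} : Finset (Finset (Fin n))))) from rfl]
    rw [Finset.sum_insert (by simp [h12, h13, h14]),
      Finset.sum_insert (by simp [h23, h24]),
      Finset.sum_insert (by simp [h34]),
      Finset.sum_singleton]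
    simp only [hcf, if_pos rfl, if_neg h12.symm, if_neg h13.symm, if_neg h14.symm,
      if_neg h23.symm, if_neg h24.symm, if_neg h34.symm, reduceIte]
    have e1 : delta A1 - delta B = Pi.single c 1 - Pi.single b 1 := delta_xch_sub hb hc
    have e2 : delta A2 - delta B = Pi.single c 1 - Pi.single b' 1 := delta_xch_sub hb' hc
    have e3 : delta A3 - delta B = Pi.single c' 1 - Pi.single b 1 := delta_xch_sub hb hc'
    have e4 : delta A4 - delta B = Pi.single c' 1 - Pi.single b' 1 := delta_xch_sub hb' hc'
    rw [e1, e2, e3, e4]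
    module
  have := Fintype.linearIndependent_iff.1 hind (fun A => cf (A : Finset (Fin n))) hsum
    ⟨A1, hA1nb⟩
  simp only [hcf, if_pos rfl] at this
  exact one_ne_zero this

end Comb


section GoodEdge
variable {n k : ℕ} {M : Finset (Finset (Fin n))}

/-- degree of a left vertex -/
def degL (M : Finset (Finset (Fin n))) (B : Finset (Fin n)) (b : Fin n) : ℕ :=
  ((pairs M B).filter (fun q => q.1 = b)).card

def degR (M : Finset (Finset (Fin n))) (B : Finset (Fin n)) (c : Fin n) : ℕ :=
  ((pairs M B).filter (fun q => q.2 = c)).card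

lemma sum_degL {B : Finset (Fin n)} : ∑ b ∈ B, degL M B b = (pairs M B).card := by
  rw [Finset.card_eq_sum_card_fiberwise (f := Prod.fst) (fun p hp => (mem_pairs.1 hp).1)]
  rfl

lemma sum_degR {B : Finset (Fin n)} :
    ∑ c ∈ Finset.univ \ B, degR M B c = (pairs M B).card := by
  rw [Finset.card_eq_sum_card_fiberwise (f := Prod.snd)
    (fun p hp => Finset.mem_sdiff.2 ⟨Finset.mem_univ _, (mem_pairs.1 hp).2.1⟩)]
  rfl

theorem good_edge (hM : IsMatroid k M) {B : Finset (Fin n)} (hB : B ∈ M)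
    (hcard : (pairs M B).card = n - 1)
    (hcross : ∀ C : Finset (Fin n), C.Nonempty → C ≠ Finset.univ →
      ∃ p ∈ pairs M B, ¬(p.1 ∈ C ↔ p.2 ∈ C))
    (hk : 2 ≤ k) (hnk : k + 2 ≤ n) :
    ∃ p ∈ pairs M B, 2 ≤ degL M B p.1 ∧ 2 ≤ degR M B p.2 := by
  classical
  have hkB : B.card = k := hM.2.1 B hB
  have hkn : k ≤ n := by
    have := Finset.card_le_univ B
    rwa [hkB, Fintype.card_fin] at this
  -- a left vertex of degree ≥ 2
  have hexL : ∃ b ∈ B, 2 ≤ degL M B b := by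
    by_contra h
    push_neg at h
    have : (pairs M B).card ≤ k := by
      rw [← sum_degL, ← hkB]
      calc ∑ b ∈ B, degL M B b ≤ ∑ b ∈ B, 1 :=
        Finset.sum_le_sum (fun b hb => by have := h b hb; omega)
      _ = B.card := by simp
    omega
  have hexR : ∃ c ∈ Finset.univ \ B, 2 ≤ degR M B c := by
    by_contra h
    push_neg at h
    have hcompl : (Finset.univ \ B).card = n - k := by
      rw [Finset.card_sdiff_of_subset (Finset.subset_univ B), Finset.card_univ, Fintype.card_fin, hkB]
    have : (pairs M B).card ≤ n - k := by
      rw [← sum_degR, ← hcompl]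
      calc ∑ c ∈ Finset.univ \ B, degR M B c ≤ ∑ c ∈ Finset.univ \ B, 1 :=
        Finset.sum_le_sum (fun c hc => by have := h c hc; omega)
      _ = (Finset.univ \ B).card := by simp
    omega
  obtain ⟨bs, hbsB, hbsdeg⟩ := hexL
  obtain ⟨cs, hcsB', hcsdeg⟩ := hexR
  have hcsB : cs ∉ B := (Finset.mem_sdiff.1 hcsB').2
  by_contra hno
  push_neg at hno
  -- every edge at bs has a right endpoint of degree 1
  set Fb := (pairs M B).filter (fun q => q.1 = bs) with hFb
  have hFbdeg : ∀ p ∈ Fb, degR M B p.2 = 1 := by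
    intro p hp
    obtain ⟨hpp, hp1⟩ := Finset.mem_filter.1 hp
    have h1 := hno p hpp
    rw [hp1] at h1
    have h2 := h1 hbsdeg
    have h3 : 1 ≤ degR M B p.2 := by
      rw [degR]
      exact Finset.card_pos.2 ⟨p, Finset.mem_filter.2 ⟨hpp, rfl⟩⟩
    omega
  have hFbfib : ∀ p ∈ Fb, ∀ q ∈ pairs M B, q.2 = p.2 → q = p := by
    intro p hp q hq hq2
    have h1 := hFbdeg p hp
    rw [degR] at h1
    obtain ⟨x, hx⟩ := Finset.card_eq_one.1 h1
    have hpx : p ∈ ((pairs M B).filter (fun q => q.2 = p.2)) :=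
      Finset.mem_filter.2 ⟨Finset.mem_of_mem_filter p hp, rfl⟩
    have hqx : q ∈ ((pairs M B).filter (fun q => q.2 = p.2)) :=
      Finset.mem_filter.2 ⟨hq, hq2⟩
    rw [hx, Finset.mem_singleton] at hpx hqx
    rw [hqx, hpx]
  -- the cut
  set C := insert bs (Fb.image Prod.snd) with hC
  have hCne : C.Nonempty := ⟨bs, Finset.mem_insert_self _ _⟩
  have himgB : ∀ x ∈ Fb.image Prod.snd, x ∉ B := by
    intro x hx
    obtain ⟨p, hp, rfl⟩ := Finset.mem_image.1 hx
    exact (mem_pairs.1 (Finset.mem_of_mem_filter p hp)).2.1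
  have hcsC : cs ∉ C := by
    rw [hC]
    simp only [Finset.mem_insert]
    push_neg
    constructor
    · intro h; exact hcsB (h ▸ hbsB)
    · intro h
      obtain ⟨p, hp, hps⟩ := Finset.mem_image.1 h
      have := hFbdeg p hp
      rw [hps] at this
      omega
  have hCuniv : C ≠ Finset.univ := fun h => hcsC (h ▸ Finset.mem_univ cs)
  obtain ⟨q, hq, hqcross⟩ := hcross C hCne hCuniv
  obtain ⟨hq1B, hq2B, hqM⟩ := mem_pairs.1 hq
  -- analyze the crossing
  have hq2C : q.2 ∈ C → False := by
    intro h2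
    have hq2bs : q.2 ≠ bs := fun h => hq2B (h ▸ hbsB)
    have : q.2 ∈ Fb.image Prod.snd := by
      rcases Finset.mem_insert.1 h2 with h | h
      · exact absurd h hq2bs
      · exact h
    obtain ⟨p, hp, hps⟩ := Finset.mem_image.1 this
    have hqp := hFbfib p hp q hq hps.symm
    have hq1 : q.1 = bs := by
      rw [hqp]
      exact (Finset.mem_filter.1 hp).2
    have : q.1 ∈ C := hq1 ▸ Finset.mem_insert_self _ _
    exact hqcross ⟨fun _ => h2, fun _ => this⟩
  have hq1C : q.1 ∈ C → False := by
    intro h1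
    have hq1bs : q.1 = bs := by
      rcases Finset.mem_insert.1 h1 with h | h
      · exact h
      · exact absurd hq1B (himgB _ h)
    have hqFb : q ∈ Fb := Finset.mem_filter.2 ⟨hq, hq1bs⟩
    have : q.2 ∈ C := Finset.mem_insert.2 (Or.inr (Finset.mem_image_of_mem Prod.snd hqFb))
    exact hqcross ⟨fun _ => this, fun _ => h1⟩
  rcases Decidable.em (q.1 ∈ C) with h | h
  · exact hq1C h
  · rcases Decidable.em (q.2 ∈ C) with h2 | h2
    · exact hq2C h2
    · exact hqcross ⟨fun hh => absurd hh h, fun hh => absurd hh h2⟩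

end GoodEdge


section Target
variable {n k : ℕ} {M : Finset (Finset (Fin n))}

lemma xch_inv {B : Finset (Fin n)} {b c : Fin n} (hb : b ∈ B) (hc : c ∉ B) :
    xch (xch B b c) c b = B := by
  ext i
  simp only [mem_xch]
  by_cases h1 : i = b <;> by_cases h2 : i = c <;> by_cases h3 : i ∈ B <;> simp_all

lemma xch_L2 {B : Finset (Fin n)} {b c b₂ : Fin n} (hb : b ∈ B) (hc : c ∉ B)
    (hb2 : b₂ ∈ B) (hne : b₂ ≠ b) : xch (xch B b c) b₂ b = xch B b₂ c := by
  ext i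
  simp only [mem_xch]
  by_cases h1 : i = b <;> by_cases h2 : i = c <;> by_cases h4 : i = b₂ <;>
    by_cases h3 : i ∈ B <;> simp_all

lemma xch_L3 {B : Finset (Fin n)} {b c c₂ : Fin n} (hb : b ∈ B) (hc : c ∉ B)
    (hc2 : c₂ ∉ B) (hne : c₂ ≠ c) : xch (xch B b c) c c₂ = xch B b c₂ := by
  ext i
  simp only [mem_xch]
  by_cases h1 : i = b <;> by_cases h2 : i = c <;> by_cases h4 : i = c₂ <;>
    by_cases h3 : i ∈ B <;> simp_all

lemma xch_L4 {B : Finset (Fin n)} {b c b₁ c₁ : Fin n} (hb : b ∈ B) (hc : c ∉ B)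
    (hb1 : b₁ ∈ B) (hc1 : c₁ ∉ B) (hbb : b₁ ≠ b) (hcc : c₁ ≠ c) :
    xch (xch B b₁ c₁) b c = xch (xch B b c) b₁ c₁ := by
  ext i
  simp only [mem_xch]
  by_cases h1 : i = b <;> by_cases h2 : i = c <;> by_cases h4 : i = b₁ <;>
    by_cases h5 : i = c₁ <;> by_cases h3 : i ∈ B <;> simp_all

lemma xch_L5 {B : Finset (Fin n)} {b b' c' : Fin n} (hb : b ∈ B)
    (hb' : b' ∈ B) (hne : b' ≠ b) (hc' : c' ∉ B) :
    xch (xch B b c') b' b = xch B b' c' := by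
  ext i
  simp only [mem_xch]
  by_cases h1 : i = b <;> by_cases h2 : i = c' <;> by_cases h4 : i = b' <;>
    by_cases h3 : i ∈ B <;> simp_all

lemma xch_L6 {B : Finset (Fin n)} {b c b' c' : Fin n} (hb : b ∈ B) (hc : c ∉ B)
    (hb' : b' ∈ B) (hc' : c' ∉ B) (hbb : b' ≠ b) (hcc : c' ≠ c) :
    xch (xch B b c') b' c = xch (xch B b c) b' c' := by
  ext i
  simp only [mem_xch]
  by_cases h1 : i = b <;> by_cases h2 : i = c <;> by_cases h4 : i = b' <;>
    by_cases h5 : i = c' <;> by_cases h3 : i ∈ B <;> simp_all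

lemma sdiff_xch_xch {B : Finset (Fin n)} {b₁ c₁ b₂ c₂ : Fin n} (hb1 : b₁ ∈ B) (hc1 : c₁ ∉ B)
    (hb2 : b₂ ∈ B) (hc2 : c₂ ∉ B) (hbb : b₁ ≠ b₂) (hcc : c₁ ≠ c₂) :
    xch B b₁ c₁ \ xch B b₂ c₂ = {c₁, b₂} := by
  ext i
  simp only [mem_xch, Finset.mem_sdiff, Finset.mem_insert, Finset.mem_singleton]
  by_cases h1 : i = b₁ <;> by_cases h2 : i = c₁ <;> by_cases h4 : i = b₂ <;>
    by_cases h5 : i = c₂ <;> by_cases h3 : i ∈ B <;> simp_all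

lemma mem_xch_of {B : Finset (Fin n)} {b c x : Fin n} (hx : x ∈ B) (hne : x ≠ b) :
    x ∈ xch B b c := mem_xch.2 (Or.inr ⟨hne, hx⟩)

lemma not_mem_xch_of {B : Finset (Fin n)} {b c x : Fin n} (hx : x ∉ B) (hne : x ≠ c) :
    x ∉ xch B b c := by
  rw [mem_xch]
  push_neg
  exact ⟨hne, fun _ => hx⟩

lemma not_mem_xch_self {B : Finset (Fin n)} {b c : Fin n} (hb : b ∈ B) (hc : c ∉ B) :
    b ∉ xch B b c := by
  rw [mem_xch]
  push_neg
  exact ⟨fun h => hc (h ▸ hb), fun h => absurd rfl h⟩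

/-- the key combinatorial theorem: a good neighbor has at least `n` neighbors. -/
theorem target_card (hM : IsMatroid k M) {B : Finset (Fin n)} (hB : B ∈ M)
    (hrk : finrank ℝ (nbSpan M B) = n - 1) (hcard : (nb M B).card = n - 1)
    {b c : Fin n} (hp : (b, c) ∈ pairs M B) (hdb : 2 ≤ degL M B b) (hdc : 2 ≤ degR M B c) :
    n ≤ (pairs M (xch B b c)).card := by
  classical
  obtain ⟨hb, hc, hAM⟩ := mem_pairs.1 hp
  dsimp only at hb hc hAM
  set A := xch B b c with hA
  have hbc : b ≠ c := fun h => hc (h ▸ hb)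
  -- second left endpoint for c
  obtain ⟨q1, hq1, hq1ne⟩ := Finset.exists_mem_ne (by
    rw [degR] at hdc; exact hdc) (b, c)
  obtain ⟨hq1p, hq1c⟩ := Finset.mem_filter.1 hq1
  set b' := q1.1 with hb'def
  have hq1eq : q1 = (b', c) := Prod.ext rfl hq1c
  have hb'pair : (b', c) ∈ pairs M B := hq1eq ▸ hq1p
  have hb'ne : b' ≠ b := by
    intro h
    exact hq1ne (by rw [hq1eq, h])
  obtain ⟨hb'B, -, hXM⟩ := mem_pairs.1 hb'pair
  dsimp only at hb'B hXM
  -- second right endpoint for b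
  obtain ⟨q2, hq2, hq2ne⟩ := Finset.exists_mem_ne (by
    rw [degL] at hdb; exact hdb) (b, c)
  obtain ⟨hq2p, hq2b⟩ := Finset.mem_filter.1 hq2
  set c' := q2.2 with hc'def
  have hq2eq : q2 = (b, c') := Prod.ext hq2b rfl
  have hc'pair : (b, c') ∈ pairs M B := hq2eq ▸ hq2p
  have hc'ne : c' ≠ c := by
    intro h
    exact hq2ne (by rw [hq2eq, h])
  obtain ⟨-, hc'B, hYM⟩ := mem_pairs.1 hc'pair
  dsimp only at hc'B hYM
  -- the map on pairs
  set Ψ : Fin n × Fin n → Fin n × Fin n := fun p =>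
    if p = (b, c) then (c, b) else if p.2 = c then (p.1, b)
    else if p.1 = b then (c, p.2) else p with hΨ
  -- images land in pairs M A
  have hmaps : ∀ p ∈ pairs M B, Ψ p ∈ pairs M A := by
    intro p hpp
    obtain ⟨hp1, hp2, hpM⟩ := mem_pairs.1 hpp
    by_cases h1 : p = (b, c)
    · rw [hΨ]
      simp only [h1, if_pos rfl]
      refine mem_pairs.2 ⟨mem_xch_self, not_mem_xch_self hb hc, ?_⟩
      show xch A c b ∈ M
      rw [hA, xch_inv hb hc]
      exact hB
    · by_cases h2 : p.2 = c
      · have hp1b : p.1 ≠ b := by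
          intro h
          exact h1 (Prod.ext h h2)
        rw [hΨ]
        simp only [if_neg h1, if_pos h2]
        refine mem_pairs.2 ⟨mem_xch_of hp1 hp1b, not_mem_xch_self hb hc, ?_⟩
        dsimp only
        rw [hA, xch_L2 hb hc hp1 hp1b]
        rw [← h2]
        exact h2 ▸ hpM
      · by_cases h3 : p.1 = b
        · rw [hΨ]
          simp only [if_neg h1, if_neg h2, if_pos h3]
          refine mem_pairs.2 ⟨mem_xch_self, not_mem_xch_of hp2 h2, ?_⟩
          dsimp only
          rw [hA, xch_L3 hb hc hp2 h2, ← h3]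
          exact h3 ▸ hpM
        · -- type 4 : the exchange dichotomy
          rw [hΨ]
          simp only [if_neg h1, if_neg h2, if_neg h3]
          refine mem_pairs.2 ⟨mem_xch_of hp1 h3, not_mem_xch_of hp2 h2, ?_⟩
          set D := xch B p.1 p.2 with hD
          have hDM : D ∈ M := hpM
          have hAD : A ≠ D := by
            intro h
            have : c ∈ D := h ▸ mem_xch_self
            rw [hD, mem_xch] at this
            rcases this with hh | hh
            · exact h2 (hh.symm)
            · exact hc hh.2
          have hb1A : p.1 ∈ A := mem_xch_of hp1 h3
          have hb1D : p.1 ∉ D := not_mem_xch_self hp1 hp2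
          obtain ⟨j, hj, hxm⟩ := exchange hM hAM hDM hAD (Finset.mem_sdiff.2 ⟨hb1A, hb1D⟩)
          have hDA : D \ A = {p.2, b} := by
            rw [hD, hA]
            exact sdiff_xch_xch hp1 hp2 hb hc h3 h2
          rw [hDA, Finset.mem_insert, Finset.mem_singleton] at hj
          rcases hj with rfl | hjb
          · exact hxm
          · rw [hjb] at hxm
            -- fallback 1 : (p.1, c) is an edge of B
            have hH1 : (p.1, c) ∈ pairs M B := by
              refine mem_pairs.2 ⟨hp1, hc, ?_⟩
              dsimp only
              rwa [hA, xch_L2 hb hc hp1 h3] at hxm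
            -- second exchange
            have hbD : b ∈ D := mem_xch_of hb (fun h => h3 h.symm)
            have hbA : b ∉ A := not_mem_xch_self hb hc
            obtain ⟨j', hj', hxm'⟩ := exchange hM hDM hAM (fun h => hAD h.symm)
              (Finset.mem_sdiff.2 ⟨hbD, hbA⟩)
            have hAD' : A \ D = {c, p.1} := by
              rw [hD, hA]
              exact sdiff_xch_xch hb hc hp1 hp2 (fun h => h3 h.symm) (fun h => h2 h.symm)
            rw [hAD', Finset.mem_insert, Finset.mem_singleton] at hj'
            rcases hj' with hj'c | hj'b
            · rw [hj'c] at hxm'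
              rwa [hD, xch_L4 hb hc hp1 hp2 h3 h2, ← hA] at hxm'
            · rw [hj'b] at hxm'
              -- fallback 2 : (b, p.2) is an edge of B , contradiction by no4cycle
              exfalso
              have hH2 : (b, p.2) ∈ pairs M B := by
                refine mem_pairs.2 ⟨hb, hp2, ?_⟩
                dsimp only
                rwa [hD, xch_L5 hp1 hb (fun h => h3 h.symm) hp2] at hxm'
              have hp4 : (p.1, p.2) ∈ pairs M B := by simpa using hpp
              exact no4cycle hM hB hrk hcard hp hH1 hH2 hp4
                (fun h => h3 h.symm) (fun h => h2 h.symm)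
  -- injectivity of the map on pairs
  have hinj : Set.InjOn Ψ ↑(pairs M B) := by
    intro p hpp q hqq heq
    obtain ⟨hp1, hp2, -⟩ := mem_pairs.1 (by exact_mod_cast hpp : p ∈ pairs M B)
    obtain ⟨hq1, hq2, -⟩ := mem_pairs.1 (by exact_mod_cast hqq : q ∈ pairs M B)
    rw [hΨ] at heq
    simp only at heq
    by_cases ha1 : p = (b, c) <;> by_cases hb1 : q = (b, c)
    · rw [ha1, hb1]
    · -- p is (b,c), q not
      exfalso
      rw [if_pos ha1, if_neg hb1] at heq
      by_cases hb2 : q.2 = c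
      · rw [if_pos hb2] at heq
        have : c = q.1 := congrArg Prod.fst heq
        exact hc (this ▸ hq1)
      · rw [if_neg hb2] at heq
        by_cases hb3 : q.1 = b
        · rw [if_pos hb3] at heq
          have : b = q.2 := congrArg Prod.snd heq
          exact hq2 (this ▸ hb)
        · rw [if_neg hb3] at heq
          have : c = q.1 := congrArg Prod.fst heq
          exact hc (this ▸ hq1)
    · exfalso
      rw [if_pos hb1, if_neg ha1] at heq
      by_cases ha2 : p.2 = c
      · rw [if_pos ha2] at heq
        have : p.1 = c := congrArg Prod.fst heq
        exact hc (this ▸ hp1)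
      · rw [if_neg ha2] at heq
        by_cases ha3 : p.1 = b
        · rw [if_pos ha3] at heq
          have : p.2 = b := congrArg Prod.snd heq
          exact hp2 (this ▸ hb)
        · rw [if_neg ha3] at heq
          have : p.1 = c := congrArg Prod.fst heq
          exact hc (this ▸ hp1)
    · rw [if_neg ha1, if_neg hb1] at heq
      by_cases ha2 : p.2 = c <;> by_cases hb2 : q.2 = c
      · rw [if_pos ha2, if_pos hb2] at heq
        injection heq with hf hs
        exact Prod.ext hf (ha2.trans hb2.symm)
      · exfalso
        rw [if_pos ha2, if_neg hb2] at heq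
        by_cases hb3 : q.1 = b
        · rw [if_pos hb3] at heq
          have : p.1 = c := congrArg Prod.fst heq
          exact hc (this ▸ hp1)
        · rw [if_neg hb3] at heq
          have : b = q.2 := congrArg Prod.snd heq
          exact hq2 (this ▸ hb)
      · exfalso
        rw [if_neg ha2, if_pos hb2] at heq
        by_cases ha3 : p.1 = b
        · rw [if_pos ha3] at heq
          have : c = q.1 := congrArg Prod.fst heq
          exact hc (this ▸ hq1)
        · rw [if_neg ha3] at heq
          have : p.2 = b := congrArg Prod.snd heq
          exact hp2 (this ▸ hb)
      · rw [if_neg ha2, if_neg hb2] at heq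
        by_cases ha3 : p.1 = b <;> by_cases hb3 : q.1 = b
        · rw [if_pos ha3, if_pos hb3] at heq
          injection heq with hf hs
          exact Prod.ext (ha3.trans hb3.symm) hs
        · exfalso
          rw [if_pos ha3, if_neg hb3] at heq
          have : c = q.1 := congrArg Prod.fst heq
          exact hc (this ▸ hq1)
        · exfalso
          rw [if_neg ha3, if_pos hb3] at heq
          have : p.1 = c := congrArg Prod.fst heq
          exact hc (this ▸ hp1)
        · rw [if_neg ha3, if_neg hb3] at heq
          exact heq
  -- the extra pair (b', c')
  have hq4F : (b', c') ∉ pairs M B := by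
    intro hq4
    exact no4cycle hM hB hrk hcard hp hb'pair hc'pair hq4 (fun h => hb'ne h.symm)
      (fun h => hc'ne h.symm)
  have hextra : (b', c') ∈ pairs M A := by
    refine mem_pairs.2 ⟨mem_xch_of hb'B hb'ne, not_mem_xch_of hc'B hc'ne, ?_⟩
    dsimp only
    -- exchange between Y = xch B b c' and X = xch B b' c
    set X := xch B b' c with hX
    set Y := xch B b c' with hY
    have hYXne : Y ≠ X := by
      intro h
      have : c' ∈ X := h ▸ mem_xch_self
      rw [hX, mem_xch] at this
      rcases this with hh | hh
      · exact hc'ne hh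
      · exact hc'B hh.2
    have hb'Y : b' ∈ Y := mem_xch_of hb'B hb'ne
    have hb'X : b' ∉ X := not_mem_xch_self hb'B hc
    obtain ⟨j, hj, hxm⟩ := exchange hM hYM hXM hYXne (Finset.mem_sdiff.2 ⟨hb'Y, hb'X⟩)
    have hXY : X \ Y = {c, b} := by
      rw [hX, hY]
      exact sdiff_xch_xch hb'B hc hb hc'B hb'ne (fun h => hc'ne h.symm)
    rw [hXY, Finset.mem_insert, Finset.mem_singleton] at hj
    rcases hj with rfl | rfl
    · rwa [hY, xch_L6 hb hc hb'B hc'B hb'ne hc'ne, ← hA] at hxm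
    · exfalso
      apply hq4F
      refine mem_pairs.2 ⟨hb'B, hc'B, ?_⟩
      dsimp only
      rwa [hY, xch_L5 hb hb'B hb'ne hc'B] at hxm
  have hnotim : (b', c') ∉ (pairs M B).image Ψ := by
    intro h
    obtain ⟨p, hpp, hpeq⟩ := Finset.mem_image.1 h
    obtain ⟨hp1, hp2, -⟩ := mem_pairs.1 hpp
    rw [hΨ] at hpeq
    simp only at hpeq
    by_cases h1 : p = (b, c)
    · rw [if_pos h1] at hpeq
      have : c = b' := congrArg Prod.fst hpeq
      exact hc (this ▸ hb'B)
    · rw [if_neg h1] at hpeq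
      by_cases h2 : p.2 = c
      · rw [if_pos h2] at hpeq
        have : b = c' := congrArg Prod.snd hpeq
        exact hc'B (this ▸ hb)
      · rw [if_neg h2] at hpeq
        by_cases h3 : p.1 = b
        · rw [if_pos h3] at hpeq
          have : c = b' := congrArg Prod.fst hpeq
          exact hc (this ▸ hb'B)
        · rw [if_neg h3] at hpeq
          exact hq4F (hpeq ▸ hpp)
  -- final count
  have hsub : insert (b', c') ((pairs M B).image Ψ) ⊆ pairs M A := by
    apply Finset.insert_subset hextra
    intro x hx
    obtain ⟨p, hpp, rfl⟩ := Finset.mem_image.1 hx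
    exact hmaps p hpp
  have hcount := Finset.card_le_card hsub
  rw [Finset.card_insert_of_notMem hnotim] at hcount
  rw [Finset.card_image_of_injOn hinj] at hcount
  have hn1 : 1 ≤ n := b.pos
  rw [pairs_card hM hB, hcard] at hcount
  omega
end Target


/-- **Theorem 1.4.** Let `k ≥ 2` and `n − k ≥ 2`, and let `Δ` be the matroid polytope of a
matroid of rank `k` on `[n]` with `dim Δ = n − 1`. If `v` is a simple vertex of `Δ`, then there
is a vertex of `Δ` joined to `v` by an edge of `Δ` which is not a simple vertex of `Δ`. -/
theorem simple_vertex_has_nonsimple_neighbor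
    (n k : ℕ) (hk : 2 ≤ k) (hnk : 2 ≤ n - k)
    (M : Finset (Finset (Fin n))) (hM : IsMatroid k M)
    (hdim : polyDim (matroidPolytope M) = n - 1)
    (v : Fin n → ℝ) (hv : v ∈ Set.extremePoints ℝ (matroidPolytope M))
    (hvs : IsSimpleAt (matroidPolytope M) v) :
    ∃ w ∈ Set.extremePoints ℝ (matroidPolytope M),
      IsEdgeOf (matroidPolytope M) (segment ℝ v w) ∧
      ¬ IsSimpleAt (matroidPolytope M) w := by
  classical
  have hk4 : k + 2 ≤ n := by omega
  have hn2 : 2 ≤ n := by omega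
  have hvm : v ∈ delta '' (M : Set (Finset (Fin n))) := by
    rw [matroidPolytope] at hv
    exact extremePoints_convexHull_subset hv
  obtain ⟨B, hBm, rfl⟩ := hvm
  have hB : B ∈ M := by exact_mod_cast hBm
  have hnb : (nb M B).card = n - 1 := by
    have h1 := edge_count hM hB
    unfold IsSimpleAt at hvs
    rw [h1, hdim] at hvs
    exact hvs
  have hrk : finrank ℝ (nbSpan M B) = n - 1 := by
    rw [nbSpan_eq hM hB]
    have h2 : polyDim (matroidPolytope M)
        = finrank ℝ (vectorSpan ℝ (delta '' (M : Set (Finset (Fin n))))) := by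
      rw [polyDim, matroidPolytope, affineSpan_convexHull, direction_affineSpan]
    rw [← h2, hdim]
  have hpairs : (pairs M B).card = n - 1 := (pairs_card hM hB).trans hnb
  obtain ⟨p, hp, hdb, hdc⟩ := good_edge hM hB hpairs
    (fun C h1 h2 => crossing hM hB hrk hn2 C h1 h2) hk hk4
  obtain ⟨b, c⟩ := p
  dsimp only at hdb hdc
  obtain ⟨hb, hc, hAM⟩ := mem_pairs.1 hp
  dsimp only at hb hc hAM
  have hAnb : xch B b c ∈ nb M B := xch_mem_nb hM hB hb hc hAM
  refine ⟨delta (xch B b c), delta_extreme hM hAM, isEdge_nb hM hB hAnb, ?_⟩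
  intro hsimp
  unfold IsSimpleAt at hsimp
  rw [edge_count hM hAM, hdim] at hsimp
  have hbig := target_card hM hB hrk hnb hp hdb hdc
  rw [pairs_card hM hAM] at hbig
  omega
end
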